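/- arXiv:1508.02580 — 4 statements merged into one kernel-verified Lean document; each statement's English description precedes it below -/
import Mathlib

section
/- Let Φ(z) = Σ_{n≥0} z^{3^n}. Then, as an identity of formal power series over ℤ/27ℤ, Σ_{n≥1} N_n z^n = 18z³ + z² + z + (18z³ + 12z²)·Φ(z) + (3z² + 15z)·Φ²(z) + (9z² + 5z + 13)·Φ³(z) + (9z² + 6z + 24)·Φ⁴(z) + (15z + 6)·Φ⁵(z) + (18z + 4)·Φ⁶(z) + (18z + 21)·Φ⁷(z) + 12·Φ⁸(z). -/
open PowerSeries
open scoped Classical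

/-- `Φ(z) = Σ_{n≥0} z^{3^n}` as a formal power series over `ℤ`. -/
noncomputable def Phi3 : PowerSeries ℤ :=
  PowerSeries.mk fun m => if ∃ n : ℕ, m = 3 ^ n then 1 else 0

namespace Stmt10Aux

lemma coeff_phi_map {R : Type*} [CommRing R] (k : ℕ) :
    PowerSeries.coeff k (PowerSeries.map (Int.castRingHom R) Phi3)
      = if ∃ n : ℕ, k = 3 ^ n then 1 else 0 := by
  rw [coeff_map]
  simp only [Phi3, coeff_mk]
  split <;> simp

set_option maxHeartbeats 10000000 in
/-- The key polynomial identity: if `w³ - w + x - 3d = 0` and `27 = 0`, then the candidate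
series `b` built from `w` satisfies the cubic equation. -/
lemma key_poly {R : Type*} [CommRing R] (x w d b : R)
    (hb : b = 18*x^3 + x^2 + x + (18*x^3+12*x^2)*w + (3*x^2+15*x)*w^2
      + (9*x^2+5*x+13)*w^3 + (9*x^2+6*x+24)*w^4 + (15*x+6)*w^5
      + (18*x+4)*w^6 + (18*x+21)*w^7 + 12*w^8)
    (hrel : w ^ 3 - w + x - 3 * d = 0) (h27 : (27 : R) = 0) :
    b ^ 3 + b ^ 2 - 3 * x * b + 2 * x ^ 2 = 0 := by
  subst hb
  linear_combination
    (259200 + 4717440*d + 32577552*d^2 + 109505520*d^3 + 190628640*d^4 + 165483972*d^5 + 59344245*d^6 + 3779136*d^7 + 259200*w + 4328640*w*d + 26959392*w*d^2 + 80176392*w*d^3 + 120124296*w*d^4 + 85170528*w*d^5 + 21651300*w*d^6 + 259200*w^2 + 3939840*w^2*d + 21924432*w^2*d^2 + 57092067*w^2*d^3 + 72485928*w^2*d^4 + 40634460*w^2*d^5 + 6613488*w^2*d^6 + 259200*w^3 + 3551040*w^3*d + 17471151*w^3*d^2 + 39380904*w^3*d^3 + 41616504*w^3*d^4 + 17576919*w^3*d^5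 + 1259712*w^3*d^6 + 259200*w^4 + 3162747*w^4*d + 13598496*w^4*d^2 + 26169264*w^4*d^3 + 22531203*w^4*d^4 + 6797196*w^4*d^5 + 259031*w^5 + 2775312*w^5*d + 10307601*w^5*d^2 + 16651575*w^5*d^3 + 11279088*w^5*d^4 + 2204496*w^5*d^5 + 258576*w^6 + 2387850*w^6*d + 7576443*w^6*d^2 + 10112472*w^6*d^3 + 5124141*w^6*d^4 + 419904*w^6*d^5 + 258299*w^7 + 2007351*w^7*d + 5352264*w^7*d^2 + 5802354*w^7*d^3 + 2125764*w^7*d^4 + 255987*w^8 + 1651779*w^8*d + 3616407*w^8*d^2 + 3051108*w^8*d^3 + 734832*w^8*d^4 + 245357*w^9 + 1320012*w^9*d + 2353788*w^9*d^2 + 1463103*w^9*d^3 + 139968*w^9*d^4 + 229113*w^10 + 999492*w^10*d + 1446417*w^10*d^2 + 661932*w^10*d^3 + 217429*w^11 + 723330*w^11*d + 796392*w^11*d^2 + 244944*w^11*d^3 + 198894*w^12 + 519132*w^12*d + 406053*w^12*d^2 + 46656*w^12*d^3 + 160120*w^13 + 346788*w^13*d + 205092*w^13*d^2 + 125514*w^14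 + 197100*w^14*d + 81648*w^14*d^2 + 107344*w^15 + 108135*w^15*d + 15552*w^15*d^2 + 79551*w^16 + 63180*w^16*d + 44640*w^17 + 27216*w^17*d + 26973*w^18 + 5184*w^18*d + 19332*w^19 + 9072*w^20 + 1728*w^21 - 817560*x - 8579196*x*d - 23377698*x*d^2 + 16952490*x*d^3 + 153875214*x*d^4 + 201763872*x*d^5 + 76566870*x*d^6 - 687960*x*w - 5966175*x*w*d - 9510804*x*w*d^2 + 35301204*x*w*d^3 + 121011813*x*w*d^4 + 111556683*x*w*d^5 + 25509168*x*w*d^6 - 558347*x*w^2 - 3741948*x*w^2*d - 193563*x*w^2*d^2 + 40001445*x*w^2*d^3 + 85501494*x*w^2*d^4 + 55073034*x*w^2*d^5 + 5668704*x*w^2*d^6 - 428736*x*w^3 - 1904328*x*w^3*d + 5443983*x*w^3*d^2 + 36663408*x*w^3*d^3 + 54755919*x*w^3*d^4 + 24052626*x*w^3*d^5 - 299700*x*w^4 - 452097*x*w^4*d + 8269020*x*w^4*d^2 + 29595699*x*w^4*d^3 + 31433751*x*w^4*d^4 + 8503056*x*w^4*d^5 - 171513*x*w^5 + 615006*x*w^5*d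 + 9019107*x*w^5*d^2 + 21782277*x*w^5*d^3 + 16258158*x*w^5*d^4 + 1889568*x*w^5*d^5 - 43828*x*w^6 + 1333773*x*w^6*d + 8331201*x*w^6*d^2 + 14540634*x*w^6*d^3 + 7527654*x*w^6*d^4 + 73827*x*w^7 + 1763361*x*w^7*d + 6952473*x*w^7*d^2 + 8677287*x*w^7*d^3 + 2834352*x*w^7*d^4 + 167808*x*w^8 + 1894347*x*w^8*d + 5385366*x*w^8*d^2 + 4719546*x*w^8*d^3 + 629856*x*w^8*d^4 + 253146*x*w^9 + 1766541*x*w^9*d + 3761397*x*w^9*d^2 + 2345922*x*w^9*d^3 + 332104*x*w^10 + 1545831*x*w^10*d + 2331099*x*w^10*d^2 + 944784*x*w^10*d^3 + 357282*x*w^11 + 1283553*x*w^11*d + 1339902*x*w^11*d^2 + 209952*x*w^11*d^3 + 334040*x*w^12 + 942516*x*w^12*d + 727542*x*w^12*d^2 + 316701*x*w^13 + 602883*x*w^13*d + 314928*x*w^13*d^2 + 292590*x*w^14 + 368874*x*w^14*d + 69984*x*w^14*d^2 + 227259*x*w^15 + 224370*x*w^15*d + 147231*x*w^16 + 104976*x*w^16*d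 + 97038*x*w^17 + 23328*x*w^17*d + 68742*x*w^18 + 34992*x*w^19 + 7776*x*w^20 + 302130*x^2 - 4232454*x^2*d - 46880181*x^2*d^2 - 121981356*x^2*d^3 - 77041449*x^2*d^4 + 48951621*x^2*d^5 + 31886460*x^2*d^6 + 55378*x^2*w - 5293557*x^2*w*d - 37276173*x^2*w*d^2 - 69458148*x^2*w*d^3 - 13557213*x^2*w*d^4 + 40153320*x^2*w*d^5 + 8503056*x^2*w*d^6 - 126666*x^2*w^2 - 5401863*x^2*w^2*d - 26900748*x^2*w^2*d^2 - 33478353*x^2*w^2*d^3 + 11232432*x^2*w^2*d^4 + 25036776*x^2*w^2*d^5 - 244973*x^2*w^3 - 4845150*x^2*w^3*d - 17279865*x^2*w^3*d^2 - 11172654*x^2*w^3*d^3 + 15989157*x^2*w^3*d^4 + 10628820*x^2*w^3*d^5 - 300168*x^2*w^4 - 3909096*x^2*w^4*d - 9563265*x^2*w^4*d^2 + 629127*x^2*w^4*d^3 + 12675852*x^2*w^4*d^4 + 2834352*x^2*w^4*d^5 - 292587*x^2*w^5 - 2772792*x^2*w^5*d - 4108401*x^2*w^5*d^2 + 4938246*x^2*w^5*d^3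 + 8030664*x^2*w^5*d^4 - 246195*x^2*w^6 - 1613421*x^2*w^6*d - 523422*x^2*w^6*d^2 + 5162049*x^2*w^6*d^3 + 3542940*x^2*w^6*d^4 - 177438*x^2*w^7 - 695790*x^2*w^7*d + 1381455*x^2*w^7*d^2 + 3989088*x^2*w^7*d^3 + 944784*x^2*w^7*d^4 - 60885*x^2*w^8 - 34830*x^2*w^8*d + 1889568*x^2*w^8*d^2 + 2571912*x^2*w^8*d^3 + 62650*x^2*w^9 + 449469*x^2*w^9*d + 1645353*x^2*w^9*d^2 + 1180980*x^2*w^9*d^3 + 133524*x^2*w^10 + 689067*x^2*w^10*d + 1250964*x^2*w^10*d^2 + 314928*x^2*w^10*d^3 + 186552*x^2*w^11 + 659502*x^2*w^11*d + 822312*x^2*w^11*d^2 + 244161*x^2*w^12 + 516861*x^2*w^12*d + 393660*x^2*w^12*d^2 + 258363*x^2*w^13 + 390744*x^2*w^13*d + 104976*x^2*w^13*d^2 + 212544*x^2*w^14 + 262440*x^2*w^14*d + 159597*x^2*w^15 + 131220*x^2*w^15*d + 121500*x^2*w^16 + 34992*x^2*w^16*d + 83592*x^2*w^17 + 43740*x^2*w^18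 + 11664*x^2*w^19 + 1177429*x^3 + 13155813*x^3*d + 30024117*x^3*d^2 - 18533367*x^3*d^3 - 75818916*x^3*d^4 - 17714700*x^3*d^5 + 4251528*x^3*d^6 + 1076544*x^3*w + 9246885*x^3*w*d + 12368052*x^3*w*d^2 - 26529039*x^3*w*d^3 - 39523464*x^3*w*d^4 + 2125764*x^3*w*d^5 + 931534*x^3*w^2 + 5991489*x^3*w^2*d + 2434455*x^3*w^2*d^2 - 22499856*x^3*w^2*d^3 - 16573086*x^3*w^2*d^4 + 4251528*x^3*w^2*d^5 + 773058*x^3*w^3 + 3436599*x^3*w^3*d - 2402055*x^3*w^3*d^2 - 14418891*x^3*w^3*d^3 - 3779136*x^3*w^3*d^4 + 1417176*x^3*w^3*d^5 + 633730*x^3*w^4 + 1735614*x^3*w^4*d - 3827007*x^3*w^4*d^2 - 7689492*x^3*w^4*d^3 + 1180980*x^3*w^4*d^4 + 494361*x^3*w^5 + 717687*x^3*w^5*d - 3290706*x^3*w^5*d^2 - 3241134*x^3*w^5*d^3 + 1417176*x^3*w^5*d^4 + 368497*x^3*w^6 + 121743*x^3*w^6*d - 2005236*x^3*w^6*d^2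 - 551124*x^3*w^6*d^3 + 472392*x^3*w^6*d^4 + 306027*x^3*w^7 - 146772*x^3*w^7*d - 1049760*x^3*w^7*d^2 + 551124*x^3*w^7*d^3 + 276543*x^3*w^8 - 117126*x^3*w^8*d - 406782*x^3*w^8*d^2 + 472392*x^3*w^8*d^3 + 229446*x^3*w^9 + 15633*x^3*w^9*d + 52488*x^3*w^9*d^2 + 157464*x^3*w^9*d^3 + 175554*x^3*w^10 + 49572*x^3*w^10*d + 236196*x^3*w^10*d^2 + 164268*x^3*w^11 + 59778*x^3*w^11*d + 157464*x^3*w^11*d^2 + 157572*x^3*w^12 + 96228*x^3*w^12*d + 52488*x^3*w^12*d^2 + 114696*x^3*w^13 + 96228*x^3*w^13*d + 75330*x^3*w^14 + 52488*x^3*w^14*d + 58320*x^3*w^15 + 17496*x^3*w^15*d + 37908*x^3*w^16 + 17496*x^3*w^17 + 5832*x^3*w^18 - 1031442*x^4 - 493692*x^4*d + 25006644*x^4*d^2 + 42521841*x^4*d^3 - 59049*x^4*d^4 - 6377292*x^4*d^5 - 605501*x^4*w + 1906362*x^4*w*d + 19371474*x^4*w*d^2 + 19774854*x^4*w*d^3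 - 8503056*x^4*w*d^4 - 261774*x^4*w^2 + 2879253*x^4*w^2*d + 13385898*x^4*w^2*d^2 + 5872095*x^4*w^2*d^3 - 4960116*x^4*w^2*d^4 + 21218*x^4*w^3 + 3072897*x^4*w^3*d + 7410285*x^4*w^3*d^2 + 373977*x^4*w^3*d^3 - 1653372*x^4*w^3*d^4 + 189693*x^4*w^4 + 2711394*x^4*w^4*d + 3903795*x^4*w^4*d^2 - 1889568*x^4*w^4*d^3 + 295182*x^4*w^5 + 2063799*x^4*w^5*d + 1506843*x^4*w^5*d^2 - 1180980*x^4*w^5*d^3 + 376947*x^4*w^6 + 1299402*x^4*w^6*d + 334611*x^4*w^6*d^2 - 393660*x^4*w^6*d^3 + 421740*x^4*w^7 + 839808*x^4*w^7*d - 314928*x^4*w^7*d^2 + 368955*x^4*w^8 + 471663*x^4*w^8*d - 236196*x^4*w^8*d^2 + 281124*x^4*w^9 + 207765*x^4*w^9*d - 78732*x^4*w^9*d^2 + 227205*x^4*w^10 + 177147*x^4*w^11 - 26244*x^4*w^11*d + 110079*x^4*w^12 - 8748*x^4*w^12*d + 34992*x^4*w^13 + 8748*x^4*w^14 + 2916*x^4*w^15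 - 476333*x^5 - 6925338*x^5*d - 9931167*x^5*d^2 + 7597638*x^5*d^3 + 5314410*x^5*d^4 - 525411*x^5*w - 4517937*x^5*w*d - 3479517*x^5*w*d^2 + 8089713*x^5*w*d^3 - 460476*x^5*w^2 - 2717226*x^5*w^2*d + 638604*x^5*w^2*d^2 + 3661038*x^5*w^2*d^3 - 378405*x^5*w^3 - 1053162*x^5*w^3*d + 1436859*x^5*w^3*d^2 + 1220346*x^5*w^3*d^3 - 251127*x^5*w^4 - 337527*x^5*w^4*d + 1659933*x^5*w^4*d^2 - 105300*x^5*w^5 + 161838*x^5*w^5*d + 826686*x^5*w^5*d^2 + 28134*x^5*w^6 + 314928*x^5*w^6*d + 275562*x^5*w^6*d^2 + 62451*x^5*w^7 + 356481*x^5*w^7*d + 92340*x^5*w^8 + 196830*x^5*w^8*d + 108621*x^5*w^9 + 65610*x^5*w^9*d + 96957*x^5*w^10 + 56862*x^5*w^11 + 18954*x^5*w^12 + 716175*x^6 + 1000188*x^6*d - 4199040*x^6*d^2 - 2657205*x^6*d^3 + 472284*x^6*w + 154548*x^6*w*d - 3503574*x^6*w*d^2 + 300267*x^6*w^2 - 462915*x^6*w^2*d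 - 1436859*x^6*w^2*d^2 + 136647*x^6*w^3 - 441774*x^6*w^3*d - 478953*x^6*w^3*d^2 + 86265*x^6*w^4 - 454896*x^6*w^4*d + 51273*x^6*w^5 - 203391*x^6*w^5*d + 25515*x^6*w^6 - 67797*x^6*w^6*d - 10206*x^6*w^7 - 2187*x^6*w^8 - 729*x^6*w^9 + 33777*x^7 + 1198476*x^7*d + 885735*x^7*d^2 + 78489*x^7*w + 938223*x^7*w*d + 123444*x^7*w^2 + 406782*x^7*w^2*d + 116640*x^7*w^3 + 135594*x^7*w^3*d + 115911*x^7*w^4 + 67797*x^7*w^5 + 22599*x^7*w^6 - 131949*x^8 - 177147*x^8*d - 100602*x^8*w - 41553*x^8*w^2 - 13851*x^8*w^3 + 19683*x^9) * hrel +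
    (28800*d + 524160*d^2 + 3619728*d^3 + 12167280*d^4 + 21180960*d^5 + 18387108*d^6 + 6593805*d^7 + 419904*d^8 + 9600*w + 203520*w*d + 1687536*w*d^2 + 7051248*w*d^3 + 15968808*w*d^4 + 19476180*w*d^5 + 11661327*w*d^6 + 2545668*w*d^7 + 9600*w^2 + 189120*w^2*d + 1436256*w^2*d^2 + 5405544*w^2*d^3 + 10792611*w^2*d^4 + 11208456*w^2*d^5 + 5316840*w^2*d^6 + 734832*w^2*d^7 - 9600*x - 265560*x*d - 2159820*x*d^2 - 6653282*x*d^3 - 5176710*x*d^4 + 10968210*x*d^5 + 20220273*x*d^6 + 8367462*x*d^7 - 39880*x*w - 554508*x*w*d - 2527245*x*w*d^2 - 3398382*x*w*d^3 + 5172390*x*w*d^4 + 17764029*x*w*d^5 + 14429097*x*w*d^6 + 2834352*x*w*d^7 - 35080*x*w^2 - 428928*x*w^2*d - 1580040*x*w^2*d^2 - 828576*x*w^2*d^3 + 6241860*x*w^2*d^4 + 12126915*x*w^2*d^5 + 6819066*x*w^2*d^6 + 629856*x*w^2*d^7 + 30280*x^2 + 351318*x^2*d + 395568*x^2*d^2 -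 5836779*x^2*d^3 - 19252566*x^2*d^4 - 16032897*x^2*d^5 + 2603259*x^2*d^6 + 3542940*x^2*d^7 + 36670*x^2*w + 70365*x^2*w*d - 1972224*x^2*w*d^2 - 9967077*x^2*w*d^3 - 15052878*x^2*w*d^4 - 3825063*x^2*w*d^5 + 4697676*x^2*w*d^6 + 944784*x^2*w*d^7 + 22730*x^2*w^2 - 71541*x^2*w^2*d - 1973637*x^2*w^2*d^2 - 7043031*x^2*w^2*d^3 - 7388658*x^2*w^2*d^4 + 695466*x^2*w^2*d^5 + 2886840*x^2*w^2*d^6 - 11190*x^3 + 287583*x^3*d + 3198060*x^3*d^2 + 7853841*x^3*d^3 + 794124*x^3*d^4 - 10237347*x^3*d^5 - 3149280*x^3*d^6 + 472392*x^3*d^7 + 41557*x^3*w + 802926*x^3*w*d + 3520035*x^3*w*d^2 + 3260331*x^3*w*d^3 - 5253660*x^3*w*d^4 - 6534756*x^3*w*d^5 + 78732*x^3*w*d^6 + 44566*x^3*w^2 + 646050*x^3*w^2*d + 2120121*x^3*w^2*d^2 + 527877*x^3*w^2*d^3 - 4379832*x^3*w^2*d^4 - 2690010*x^3*w^2*d^5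 + 472392*x^3*w^2*d^6 - 43609*x^4 - 601857*x^4*d - 1166859*x^4*d^2 + 3464937*x^4*d^3 + 7532757*x^4*d^4 + 649539*x^4*d^5 - 866052*x^4*d^6 - 78072*x^4*w - 428040*x^4*w*d + 679914*x^4*w*d^2 + 4709826*x^4*w*d^3 + 3658851*x^4*w*d^4 - 1259712*x^4*w*d^5 - 56898*x^4*w^2 - 180387*x^4*w^2*d + 947214*x^4*w^2*d^2 + 3053052*x^4*w^2*d^3 + 951345*x^4*w^2*d^4 - 708588*x^4*w^2*d^5 + 38205*x^5 - 34641*x^5*d - 1695654*x^5*d^2 - 2678346*x^5*d^3 + 846369*x^5*d^4 + 826686*x^5*d^5 + 4806*x^5*w - 385479*x^5*w*d - 1587276*x^5*w*d^2 - 837621*x^5*w*d^3 + 1410615*x^5*w*d^4 - 9666*x^5*w^2 - 325134*x^5*w^2*d - 926559*x^5*w^2*d^2 + 153090*x^5*w^2*d^3 + 590490*x^5*w^2*d^4 + 17658*x^6 + 336069*x^6*d + 478953*x^6*d^2 - 747954*x^6*d^3 - 492075*x^6*d^4 + 46062*x^6*w + 256851*x^6*w*d - 9477*x^6*w*d^2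 - 787320*x^6*w*d^3 + 34695*x^6*w^2 + 139725*x^6*w^2*d - 204849*x^6*w^2*d^2 - 295245*x^6*w^2*d^3 - 26487*x^7 - 33291*x^7*d + 288684*x^7*d^2 + 196830*x^7*d^3 - 16119*x^7*w + 47385*x^7*w*d + 266814*x^7*w*d^2 - 7290*x^7*w^2 + 65610*x^7*w^2*d + 98415*x^7*w^2*d^2 - 1215*x^8 - 59049*x^8*d - 52488*x^8*d^2 - 7290*x^8*w - 52488*x^8*w*d - 7290*x^8*w^2 - 19683*x^8*w^2*d + 5103*x^9 + 8748*x^9*d + 5103*x^9*w + 2187*x^9*w^2 - 729*x^10) * h27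

noncomputable def Phi3' : PowerSeries (ZMod 3) :=
  PowerSeries.map (Int.castRingHom (ZMod 3)) Phi3

lemma cube3 : Phi3' ^ 3 = Phi3' - X := by
  haveI : CharP (PowerSeries (ZMod 3)) 3 :=
    charP_of_injective_ringHom PowerSeries.C_injective 3
  haveI : Fact (Nat.Prime 3) := ⟨by norm_num⟩
  have hdvd : ∀ m : ℕ, (X : PowerSeries (ZMod 3)) ^ (m+1) ∣ (Phi3' ^ 3 - (Phi3' - X)) := by
    intro m
    set p : PowerSeries (ZMod 3) := ∑ n ∈ Finset.range (m+1), X ^ (3 ^ n) with hp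
    set q : PowerSeries (ZMod 3) := ∑ n ∈ Finset.range (m+1), X ^ (3 ^ (n+1)) with hq
    have h1 : (X : PowerSeries (ZMod 3)) ^ (m+1) ∣ Phi3' - p := by
      rw [X_pow_dvd_iff]
      intro k hk
      rw [map_sub]
      have hpk : PowerSeries.coeff k p = if ∃ n : ℕ, k = 3 ^ n then 1 else 0 := by
        rw [hp, map_sum]
        simp only [coeff_X_pow]
        by_cases h : ∃ n : ℕ, k = 3 ^ n
        · obtain ⟨n₀, rfl⟩ := h
          rw [if_pos ⟨n₀, rfl⟩, Finset.sum_eq_single n₀]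
          · simp
          · intro b _ hb
            rw [if_neg]
            intro hEq
            exact hb (Nat.pow_right_injective (by norm_num) hEq.symm)
          · intro hn₀
            exfalso
            apply hn₀
            rw [Finset.mem_range]
            have := Nat.lt_pow_self (n := n₀) (by norm_num : 1 < 3)
            omega
        · rw [if_neg h]
          refine Finset.sum_eq_zero fun b _ => ?_
          rw [if_neg fun hEq => h ⟨b, hEq⟩]
      rw [show Phi3' = PowerSeries.map (Int.castRingHom (ZMod 3)) Phi3 from rfl, coeff_phi_map, hpk, sub_self]
    have h2 : (X : PowerSeries (ZMod 3)) ^ (m+1) ∣ (Phi3' - X) - q := by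
      rw [X_pow_dvd_iff]
      intro k hk
      rw [map_sub, map_sub]
      have hqk : PowerSeries.coeff k q = if ∃ n : ℕ, k = 3 ^ (n+1) then 1 else 0 := by
        rw [hq, map_sum]
        simp only [coeff_X_pow]
        by_cases h : ∃ n : ℕ, k = 3 ^ (n+1)
        · obtain ⟨n₀, rfl⟩ := h
          rw [if_pos ⟨n₀, rfl⟩, Finset.sum_eq_single n₀]
          · simp
          · intro b _ hb
            rw [if_neg]
            intro hEq
            have := Nat.pow_right_injective (by norm_num : 2 ≤ 3) hEq.symm
            omega
          · intro hn₀
            exfalso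
            apply hn₀
            rw [Finset.mem_range]
            have := Nat.lt_pow_self (n := n₀+1) (by norm_num : 1 < 3)
            omega
        · rw [if_neg h]
          refine Finset.sum_eq_zero fun b _ => ?_
          rw [if_neg fun hEq => h ⟨b, hEq⟩]
      rw [show Phi3' = PowerSeries.map (Int.castRingHom (ZMod 3)) Phi3 from rfl, coeff_phi_map, hqk, PowerSeries.coeff_X]
      by_cases h : ∃ n : ℕ, k = 3 ^ (n+1)
      · obtain ⟨n₀, rfl⟩ := h
        have h3 : 1 < 3 ^ (n₀+1) := Nat.one_lt_pow (by omega) (by norm_num)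
        rw [if_pos (show ∃ n : ℕ, 3^(n₀+1) = 3 ^ n from ⟨n₀+1, rfl⟩),
          if_pos (show ∃ n : ℕ, 3^(n₀+1) = 3 ^ (n+1) from ⟨n₀, rfl⟩),
          if_neg (show ¬ (3:ℕ)^(n₀+1) = 1 by omega)]
        ring
      · rw [if_neg h]
        by_cases hk1 : k = 1
        · subst hk1
          rw [if_pos ⟨0, rfl⟩, if_pos rfl]
          ring
        · rw [if_neg hk1, if_neg]
          · ring
          · rintro ⟨n, rfl⟩
            cases n with
            | zero => exact hk1 rfl
            | succ j => exact h ⟨j, rfl⟩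
    have h4 : p ^ 3 = q := by
      rw [hp, hq, sum_pow_char]
      refine Finset.sum_congr rfl fun n _ => ?_
      rw [← pow_mul, pow_succ]
    have h5 : Phi3' ^ 3 - (Phi3' - X)
        = (Phi3' - p) * (Phi3' ^ 2 + Phi3' * p + p ^ 2) - ((Phi3' - X) - p ^ 3) := by
      ring
    rw [h5, h4]
    exact dvd_sub (h1.mul_right _) h2
  have hz : Phi3' ^ 3 - (Phi3' - X) = 0 := by
    ext k
    rw [map_zero]
    exact X_pow_dvd_iff.mp (hdvd k) k (Nat.lt_succ_self k)
  linear_combination hz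

lemma div3 (k : ℕ) : (3 : ℤ) ∣ PowerSeries.coeff k (Phi3 ^ 3 - Phi3 + X) := by
  have hmap : PowerSeries.map (Int.castRingHom (ZMod 3)) (Phi3 ^ 3 - Phi3 + X) = 0 := by
    rw [map_add, map_sub, map_pow, PowerSeries.map_X]
    have := cube3
    rw [show Phi3' = PowerSeries.map (Int.castRingHom (ZMod 3)) Phi3 from rfl] at this
    linear_combination this
  have := congrArg (PowerSeries.coeff k) hmap
  rw [PowerSeries.coeff_map, map_zero] at this
  exact_mod_cast (ZMod.intCast_zmod_eq_zero_iff_dvd _ 3).mp this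

noncomputable def Dz : PowerSeries ℤ :=
  PowerSeries.mk fun k => PowerSeries.coeff k (Phi3 ^ 3 - Phi3 + X) / 3

lemma hDz : Phi3 ^ 3 - Phi3 + X = 3 * Dz := by
  ext k
  rw [show (3 : PowerSeries ℤ) = PowerSeries.C 3 from (map_ofNat (PowerSeries.C) 3).symm,
    PowerSeries.coeff_C_mul, Dz, PowerSeries.coeff_mk]
  exact (Int.mul_ediv_cancel' (div3 k)).symm

end Stmt10Aux

open Stmt10Aux in
/-- Modulo `27`, the generating function `N(z)` of the numbers of non-crossing
connected graphs (the unique power series with `N_0 = 0`, `N_1 = 1` and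
`N³ + N² − 3zN + 2z² = 0`) equals
`18z³ + z² + z + (18z³+12z²)Φ + (3z²+15z)Φ² + (9z²+5z+13)Φ³ + (9z²+6z+24)Φ⁴ +
(15z+6)Φ⁵ + (18z+4)Φ⁶ + (18z+21)Φ⁷ + 12Φ⁸`. -/
theorem stmt_10 (N : PowerSeries ℤ)
    (h0 : PowerSeries.coeff 0 N = 0)
    (h1 : PowerSeries.coeff 1 N = 1)
    (heq : N ^ 3 + N ^ 2 - 3 * PowerSeries.X * N + 2 * PowerSeries.X ^ 2 = 0) :
    ∀ m : ℕ, (27 : ℤ) ∣ PowerSeries.coeff m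
      (N - (18 * PowerSeries.X ^ 3 + PowerSeries.X ^ 2 + PowerSeries.X
        + (18 * PowerSeries.X ^ 3 + 12 * PowerSeries.X ^ 2) * Phi3
        + (3 * PowerSeries.X ^ 2 + 15 * PowerSeries.X) * Phi3 ^ 2
        + (9 * PowerSeries.X ^ 2 + 5 * PowerSeries.X + 13) * Phi3 ^ 3
        + (9 * PowerSeries.X ^ 2 + 6 * PowerSeries.X + 24) * Phi3 ^ 4
        + (15 * PowerSeries.X + 6) * Phi3 ^ 5
        + (18 * PowerSeries.X + 4) * Phi3 ^ 6
        + (18 * PowerSeries.X + 21) * Phi3 ^ 7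
        + 12 * Phi3 ^ 8)) := by
  intro m
  set π : PowerSeries ℤ →+* PowerSeries (ZMod 27) :=
    PowerSeries.map (Int.castRingHom (ZMod 27)) with hπ
  set Φ : PowerSeries (ZMod 27) := π Phi3 with hΦ
  set Dv : PowerSeries (ZMod 27) := π Dz with hDv
  set A : PowerSeries (ZMod 27) := π N with hA
  have h27 : (27 : PowerSeries (ZMod 27)) = 0 := by
    rw [show (27 : PowerSeries (ZMod 27)) = PowerSeries.C 27 from
      (map_ofNat (PowerSeries.C) 27).symm, show (27 : ZMod 27) = 0 from rfl, map_zero]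
  have hrel : Φ ^ 3 - Φ + X - 3 * Dv = 0 := by
    have := congrArg π hDz
    simp only [map_add, map_sub, map_pow, map_mul, PowerSeries.map_X, map_ofNat, hπ] at this
    rw [hΦ, hDv, hπ]
    linear_combination this
  set B : PowerSeries (ZMod 27) := 18*X^3 + X^2 + X + (18*X^3+12*X^2)*Φ + (3*X^2+15*X)*Φ^2
      + (9*X^2+5*X+13)*Φ^3 + (9*X^2+6*X+24)*Φ^4 + (15*X+6)*Φ^5
      + (18*X+4)*Φ^6 + (18*X+21)*Φ^7 + 12*Φ^8 with hB
  have hPB : B ^ 3 + B ^ 2 - 3 * X * B + 2 * X ^ 2 = 0 := key_poly X Φ Dv B hB hrel h27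
  have hPA : A ^ 3 + A ^ 2 - 3 * X * A + 2 * X ^ 2 = 0 := by
    have := congrArg π heq
    simp only [map_add, map_sub, map_pow, map_mul, PowerSeries.map_X, map_ofNat, map_zero,
      hπ] at this
    rw [hA, hπ]
    linear_combination this
  have hA0 : PowerSeries.constantCoeff A = 0 := by
    rw [← PowerSeries.coeff_zero_eq_constantCoeff_apply, hA, hπ, PowerSeries.coeff_map, h0,
      map_zero]
  have hA1 : PowerSeries.coeff 1 A = 1 := by
    rw [hA, hπ, PowerSeries.coeff_map, h1, map_one]
  have hΦ0 : PowerSeries.constantCoeff Φ = 0 := by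
    rw [← PowerSeries.coeff_zero_eq_constantCoeff_apply, hΦ, hπ, coeff_phi_map, if_neg]
    rintro ⟨n, hn⟩
    have : 0 < 3 ^ n := by positivity
    omega
  obtain ⟨Ψ, hΨ⟩ := PowerSeries.X_dvd_iff.mpr hΦ0
  have hBX : B = X + X^2 * (1 + 18*X + (18*X^2+12*X)*Ψ + (3*X^2+15*X)*Ψ^2
      + (9*X^2+5*X+13)*X*Ψ^3 + (9*X^2+6*X+24)*X^2*Ψ^4 + (15*X+6)*X^3*Ψ^5
      + (18*X+4)*X^4*Ψ^6 + (18*X+21)*X^5*Ψ^7 + 12*X^6*Ψ^8) := by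
    rw [hB, hΨ]; ring
  have hB0 : PowerSeries.constantCoeff B = 0 := by
    rw [hBX]
    simp [map_add, map_mul, map_pow, constantCoeff_X]
  have hB1 : PowerSeries.coeff 1 B = 1 := by
    rw [hBX, map_add, show (X:PowerSeries (ZMod 27))^2 = X * X from sq X, mul_assoc,
      PowerSeries.coeff_succ_X_mul 0, PowerSeries.coeff_one_X,
      PowerSeries.coeff_zero_eq_constantCoeff_apply]
    simp [map_mul, constantCoeff_X]
  obtain ⟨A', hA'⟩ := PowerSeries.X_dvd_iff.mpr hA0
  obtain ⟨B', hB'⟩ := PowerSeries.X_dvd_iff.mpr hB0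
  have key : (A - B) * (A^2 + A*B + B^2 + A + B - 3*X) = 0 := by linear_combination hPA - hPB
  have hU : A^2 + A*B + B^2 + A + B - 3*X
      = X * (X*(A'^2 + A'*B' + B'^2) + A' + B' - 3) := by rw [hA', hB']; ring
  have hA'0 : PowerSeries.constantCoeff A' = 1 := by
    have := PowerSeries.coeff_succ_X_mul 0 A'
    rw [← hA', hA1] at this
    rw [← PowerSeries.coeff_zero_eq_constantCoeff_apply, ← this]
  have hB'0 : PowerSeries.constantCoeff B' = 1 := by
    have := PowerSeries.coeff_succ_X_mul 0 B'
    rw [← hB', hB1] at this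
    rw [← PowerSeries.coeff_zero_eq_constantCoeff_apply, ← this]
  set V : PowerSeries (ZMod 27) := X*(A'^2 + A'*B' + B'^2) + A' + B' - 3 with hV
  have hVu : IsUnit V := by
    rw [PowerSeries.isUnit_iff_constantCoeff]
    have : PowerSeries.constantCoeff V = -1 := by
      rw [hV]
      simp only [map_add, map_sub, map_mul, map_pow, constantCoeff_X, hA'0, hB'0]
      rw [show PowerSeries.constantCoeff (3 : PowerSeries (ZMod 27)) = 3 from map_ofNat _ 3]
      ring
    rw [this]
    exact isUnit_one.neg
  have hXcancel : ∀ f : PowerSeries (ZMod 27), X * f = 0 → f = 0 := by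
    intro f hf
    ext n
    have := congrArg (PowerSeries.coeff (n+1)) hf
    rwa [PowerSeries.coeff_succ_X_mul, map_zero] at this
  have hABV : (A - B) * V = 0 := by
    have := key
    rw [hU, show (A - B) * (X * V) = X * ((A - B) * V) from by ring] at this
    exact hXcancel _ this
  have hAB : A = B := by
    obtain ⟨u, hu⟩ := hVu
    have := congrArg (· * (↑u⁻¹ : PowerSeries (ZMod 27))) hABV
    simp only [zero_mul] at this
    rw [mul_assoc, ← hu, Units.mul_inv, mul_one] at this
    linear_combination this
  rw [show ((27:ℤ)) = ((27:ℕ):ℤ) from rfl, ← ZMod.intCast_zmod_eq_zero_iff_dvd,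
    show ((PowerSeries.coeff m _ : ℤ) : ZMod 27) = Int.castRingHom (ZMod 27)
      (PowerSeries.coeff m _) from rfl, ← PowerSeries.coeff_map]
  rw [map_sub]
  have hmapC : π (18 * PowerSeries.X ^ 3 + PowerSeries.X ^ 2 + PowerSeries.X
        + (18 * PowerSeries.X ^ 3 + 12 * PowerSeries.X ^ 2) * Phi3
        + (3 * PowerSeries.X ^ 2 + 15 * PowerSeries.X) * Phi3 ^ 2
        + (9 * PowerSeries.X ^ 2 + 5 * PowerSeries.X + 13) * Phi3 ^ 3
        + (9 * PowerSeries.X ^ 2 + 6 * PowerSeries.X + 24) * Phi3 ^ 4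
        + (15 * PowerSeries.X + 6) * Phi3 ^ 5
        + (18 * PowerSeries.X + 4) * Phi3 ^ 6
        + (18 * PowerSeries.X + 21) * Phi3 ^ 7
        + 12 * Phi3 ^ 8) = B := by
    rw [hB, hΦ, hπ]
    simp only [map_add, map_mul, map_pow, PowerSeries.map_X, map_ofNat, map_one]
  rw [hmapC, ← hA, hAB, sub_self, map_zero]
end

section
/- For every integer n ≥ 1, the number K_n of Kreweras walks of length 3n satisfies: K_n ≡ 1 (mod 3) if and only if n = 3^i − 1 for some integer i ≥ 1; K_n ≡ 2 (mod 3) if and only if n = (3^{i_1} + 3^{i_2} − 2)/2 for some integers i_1 > i_2 ≥ 0; and K_n is divisible by 3 in all other cases. -/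
/-- The number of Kreweras walks of length `3n`:
`K_n = 4^n/((n+1)(2n+1)) · C(3n,n)`. -/
def Kreweras (n : ℕ) : ℕ := 4 ^ n * Nat.choose (3 * n) n / ((n + 1) * (2 * n + 1))

/-- base-3 digit sum -/
def s3 (n : ℕ) : ℕ := (Nat.digits 3 n).sum
/-- number of 2-digits base 3 -/
def t3 (n : ℕ) : ℕ := (Nat.digits 3 n).count 2
/-- 3-adic valuation -/
def v3 (n : ℕ) : ℕ := n.factorization 3

lemma s3_zero : s3 0 = 0 := by simp [s3]
lemma t3_zero : t3 0 = 0 := by simp [t3]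

lemma digits3_step (k r : ℕ) (hr : r < 3) (h : 0 < 3 * k + r) :
    Nat.digits 3 (3 * k + r) = r :: Nat.digits 3 k := by
  rw [Nat.digits_def' (by norm_num) h]
  congr 1
  · omega
  · congr 1; omega

lemma s3_step (k r : ℕ) (hr : r < 3) (h : 0 < 3 * k + r) :
    s3 (3 * k + r) = r + s3 k := by
  unfold s3; rw [digits3_step k r hr h]; simp

lemma t3_step (k r : ℕ) (hr : r < 3) (h : 0 < 3 * k + r) :
    t3 (3 * k + r) = (if r = 2 then 1 else 0) + t3 k := by
  unfold t3; rw [digits3_step k r hr h, List.count_cons]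
  by_cases h2 : r = 2 <;> simp [h2, add_comm] <;> omega

lemma v3_of_not_dvd {m : ℕ} (h : ¬ 3 ∣ m) : v3 m = 0 :=
  Nat.factorization_eq_zero_of_not_dvd h

lemma v3_3mul {k : ℕ} (hk : k ≠ 0) : v3 (3 * k) = v3 k + 1 := by
  unfold v3
  rw [Nat.factorization_mul (by norm_num) hk]
  simp [Nat.Prime.factorization (by norm_num : Nat.Prime 3)]
  omega

lemma v3_2mul (k : ℕ) : v3 (2 * k) = v3 k := by
  rcases Nat.eq_zero_or_pos k with h | h
  · simp [h]
  · unfold v3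
    rw [Nat.factorization_mul (by norm_num) (by omega)]
    simp [Nat.factorization_eq_zero_of_not_dvd (by norm_num : ¬ (3:ℕ) ∣ 2)]

lemma ordc_of_not_dvd {m : ℕ} (h : ¬ 3 ∣ m) : ordCompl[3] m = m := by
  have : m.factorization 3 = 0 := Nat.factorization_eq_zero_of_not_dvd h
  rw [this, pow_zero, Nat.div_one]

lemma ordc_3 : ordCompl[3] 3 = 1 := by
  have : (3:ℕ).factorization 3 = 1 := Nat.Prime.factorization_self (by norm_num)
  rw [this]; norm_num

lemma ordc_3mul (k : ℕ) : ordCompl[3] (3 * k) = ordCompl[3] k := by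
  rw [Nat.ordCompl_mul, ordc_3, one_mul]

lemma ordc_2 : ordCompl[3] 2 = 2 := ordc_of_not_dvd (by norm_num)

lemma ordc_2mul (k : ℕ) : ordCompl[3] (2 * k) = 2 * ordCompl[3] k := by
  rw [Nat.ordCompl_mul, ordc_2]

lemma neg_one_pow_congr3 {a b : ℕ} (h : a % 2 = b % 2) : (-1 : ZMod 3) ^ a = (-1) ^ b := by
  have key : ∀ c : ℕ, (-1 : ZMod 3) ^ c = (-1) ^ (c % 2) := by
    intro c
    conv_lhs => rw [← Nat.div_add_mod c 2]
    rw [pow_add, pow_mul]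
    norm_num
  rw [key a, key b, h]

lemma cast3 (k r : ℕ) : ((3 * k + r : ℕ) : ZMod 3) = (r : ZMod 3) := by
  push_cast
  rw [show ((3:ZMod 3)) = 0 by rfl]
  ring

lemma s3_succ : ∀ m : ℕ, s3 m + 1 = s3 (m + 1) + 2 * v3 (m + 1) := by
  intro m
  induction m using Nat.strong_induction_on with
  | _ m ih =>
    rcases (by omega : (m+1) % 3 = 0 ∨ (m+1) % 3 = 1 ∨ (m+1) % 3 = 2) with hr | hr | hr
    · -- m + 1 = 3 k, k ≥ 1
      obtain ⟨k, hk⟩ : ∃ k, m + 1 = 3 * k := ⟨(m+1)/3, by omega⟩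
      have hk1 : 1 ≤ k := by omega
      have hm : m = 3 * (k-1) + 2 := by omega
      have h1 : s3 m = 2 + s3 (k-1) := by rw [hm]; exact s3_step _ _ (by norm_num) (by omega)
      have h2 : s3 (m+1) = 0 + s3 k := by
        rw [hk, show (3*k : ℕ) = 3 * k + 0 by ring]
        exact s3_step _ _ (by norm_num) (by omega)
      have h3 : v3 (m+1) = v3 k + 1 := by rw [hk]; exact v3_3mul (by omega)
      have h4 := ih (k-1) (by omega)
      rw [show k - 1 + 1 = k by omega] at h4
      omega
    · -- m + 1 = 3 k + 1, m = 3 k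
      obtain ⟨k, hk⟩ : ∃ k, m = 3 * k := ⟨m/3, by omega⟩
      have h1 : s3 m = 0 + s3 k := by
        rcases Nat.eq_zero_or_pos k with h | h
        · simp [hk, h, s3_zero]
        · rw [hk, show (3*k : ℕ) = 3 * k + 0 by ring]
          exact s3_step _ _ (by norm_num) (by omega)
      have h2 : s3 (m+1) = 1 + s3 k := by
        rw [hk]; exact s3_step _ _ (by norm_num) (by omega)
      have h3 : v3 (m+1) = 0 := v3_of_not_dvd (by omega)
      omega
    · -- m = 3 k + 1
      obtain ⟨k, hk⟩ : ∃ k, m = 3 * k + 1 := ⟨m/3, by omega⟩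
      have h1 : s3 m = 1 + s3 k := by rw [hk]; exact s3_step _ _ (by norm_num) (by omega)
      have h2 : s3 (m+1) = 2 + s3 k := by
        rw [hk, show 3*k+1+1 = 3*k+2 by ring]
        exact s3_step _ _ (by norm_num) (by omega)
      have h3 : v3 (m+1) = 0 := v3_of_not_dvd (by omega)
      omega

lemma uc_succ : ∀ m : ℕ, ((ordCompl[3] (m+1) : ℕ) : ZMod 3)
    = (-1) ^ (t3 (m+1) + t3 m + v3 (m+1)) := by
  intro m
  induction m using Nat.strong_induction_on with
  | _ m ih =>
    rcases (by omega : (m+1) % 3 = 0 ∨ (m+1) % 3 = 1 ∨ (m+1) % 3 = 2) with hr | hr | hr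
    · obtain ⟨k, hk⟩ : ∃ k, m + 1 = 3 * k := ⟨(m+1)/3, by omega⟩
      have hk1 : 1 ≤ k := by omega
      have hm : m = 3 * (k-1) + 2 := by omega
      have h1 : t3 m = 1 + t3 (k-1) := by
        rw [hm, t3_step _ _ (by norm_num) (by omega)]
        norm_num
      have h2 : t3 (m+1) = t3 k := by
        rw [hk, show (3*k : ℕ) = 3 * k + 0 by ring, t3_step _ _ (by norm_num) (by omega)]
        simp
      have h3 : v3 (m+1) = v3 k + 1 := by rw [hk]; exact v3_3mul (by omega)
      have h4 : ordCompl[3] (m+1) = ordCompl[3] k := by rw [hk]; exact ordc_3mul k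
      have h5 := ih (k-1) (by omega)
      rw [show k - 1 + 1 = k by omega] at h5
      rw [h4, h5, h1, h2, h3]
      exact neg_one_pow_congr3 (by omega)
    · obtain ⟨k, hk⟩ : ∃ k, m = 3 * k := ⟨m/3, by omega⟩
      have h1 : t3 m = t3 k := by
        rcases Nat.eq_zero_or_pos k with h | h
        · simp [hk, h]
        · rw [hk, show (3*k:ℕ) = 3*k+0 by ring, t3_step _ _ (by norm_num) (by omega)]
          norm_num
      have h2 : t3 (m+1) = t3 k := by
        rw [hk, t3_step _ _ (by norm_num) (by omega)]
        norm_num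
      have h3 : v3 (m+1) = 0 := v3_of_not_dvd (by omega)
      have h4 : ordCompl[3] (m+1) = m+1 := ordc_of_not_dvd (by omega)
      rw [h4, h1, h2, h3, hk, cast3 k 1]
      rw [neg_one_pow_congr3 (show (t3 k + t3 k + 0) % 2 = 0 % 2 by omega)]
      norm_num
    · obtain ⟨k, hk⟩ : ∃ k, m = 3 * k + 1 := ⟨m/3, by omega⟩
      have h1 : t3 m = t3 k := by
        rw [hk, t3_step _ _ (by norm_num) (by omega)]
        norm_num
      have h2 : t3 (m+1) = 1 + t3 k := by
        rw [hk, show 3*k+1+1 = 3*k+2 by ring, t3_step _ _ (by norm_num) (by omega)]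
        norm_num
      have h3 : v3 (m+1) = 0 := v3_of_not_dvd (by omega)
      have h4 : ordCompl[3] (m+1) = m+1 := ordc_of_not_dvd (by omega)
      rw [h4, h1, h2, h3, hk, show 3*k+1+1 = 3*k+2 by ring, cast3 k 2]
      rw [neg_one_pow_congr3 (show (1 + t3 k + t3 k + 0) % 2 = 1 % 2 by omega)]
      norm_num
      decide

lemma choose_id (n : ℕ) :
    (n+1) * ((2*n+2) * ((2*n+1) * Nat.choose (3*n+3) (n+1)))
      = (3*n+3) * ((3*n+2) * ((3*n+1) * Nat.choose (3*n) n)) := by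
  have h1 : Nat.choose (3*n) n * n.factorial * (2*n).factorial = (3*n).factorial := by
    have := Nat.choose_mul_factorial_mul_factorial (show n ≤ 3*n by omega)
    rwa [show 3*n - n = 2*n by omega] at this
  have h2 : Nat.choose (3*n+3) (n+1) * (n+1).factorial * (2*n+2).factorial
      = (3*n+3).factorial := by
    have := Nat.choose_mul_factorial_mul_factorial (show n+1 ≤ 3*n+3 by omega)
    rwa [show 3*n+3 - (n+1) = 2*n+2 by omega] at this
  have e1 : (n+1).factorial = (n+1) * n.factorial := Nat.factorial_succ n
  have e2 : (2*n+2).factorial = (2*n+2) * ((2*n+1) * (2*n).factorial) := by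
    rw [show 2*n+2 = (2*n+1)+1 by ring, Nat.factorial_succ, Nat.factorial_succ]
  have e3 : (3*n+3).factorial = (3*n+3) * ((3*n+2) * ((3*n+1) * (3*n).factorial)) := by
    rw [show 3*n+3 = (3*n+2)+1 by ring, Nat.factorial_succ,
      show 3*n+2 = (3*n+1)+1 by ring, Nat.factorial_succ,
      show 3*n+1 = (3*n)+1 by ring, Nat.factorial_succ]
  have hpos : 0 < n.factorial * (2*n).factorial :=
    Nat.mul_pos (Nat.factorial_pos _) (Nat.factorial_pos _)
  apply Nat.eq_of_mul_eq_mul_right hpos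
  calc (n+1) * ((2*n+2) * ((2*n+1) * Nat.choose (3*n+3) (n+1))) * (n.factorial * (2*n).factorial)
      = Nat.choose (3*n+3) (n+1) * ((n+1) * n.factorial) *
          ((2*n+2) * ((2*n+1) * (2*n).factorial)) := by ring
    _ = Nat.choose (3*n+3) (n+1) * (n+1).factorial * (2*n+2).factorial := by rw [e1, e2]
    _ = (3*n+3).factorial := h2
    _ = (3*n+3) * ((3*n+2) * ((3*n+1) * (3*n).factorial)) := e3
    _ = (3*n+3) * ((3*n+2) * ((3*n+1) *
          (Nat.choose (3*n) n * n.factorial * (2*n).factorial))) := by rw [h1]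
    _ = (3*n+3) * ((3*n+2) * ((3*n+1) * Nat.choose (3*n) n)) *
          (n.factorial * (2*n).factorial) := by ring

lemma dvd_two_choose (n : ℕ) : ((n+1) * (2*n+1)) ∣ 2 * Nat.choose (3*n) n := by
  have cop1 : Nat.Coprime (2*n+1) n := by
    have := (Nat.coprime_add_mul_left_left 1 n 2).mpr (Nat.coprime_one_left n)
    simpa [add_comm, mul_comm] using this
  have cop2 : Nat.Coprime (n+1) n := by
    have := (Nat.coprime_add_mul_left_left 1 n 1).mpr (Nat.coprime_one_left n)
    simpa using this
  have cop3 : Nat.Coprime (n+1) (2*n+1) := by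
    have := (Nat.coprime_add_mul_right_right (n+1) n 1).mpr cop2
    rwa [show n + 1*(n+1) = 2*n+1 by ring] at this
  have c1 : (2*n+1) ∣ Nat.choose (3*n) n := by
    rcases Nat.eq_zero_or_pos n with h | h
    · simp [h]
    · have key := Nat.choose_succ_right_eq (3*n) (n-1)
      rw [show n - 1 + 1 = n by omega, show 3*n - (n-1) = 2*n+1 by omega] at key
      have : (2*n+1) ∣ Nat.choose (3*n) n * n := ⟨Nat.choose (3*n) (n-1), by rw [key]; ring⟩
      exact (Nat.Coprime.dvd_of_dvd_mul_right cop1 this)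
  have c2 : (n+1) ∣ 2 * Nat.choose (3*n) n := by
    have key := Nat.choose_succ_right_eq (3*n) n
    rw [show 3*n - n = 2*n by omega] at key
    have : (n+1) ∣ (2 * Nat.choose (3*n) n) * n := ⟨Nat.choose (3*n) (n+1), by
      rw [show 2 * Nat.choose (3*n) n * n = Nat.choose (3*n) n * (2*n) by ring, ← key]; ring⟩
    exact Nat.Coprime.dvd_of_dvd_mul_right cop2 this
  exact Nat.Coprime.mul_dvd_of_dvd_of_dvd cop3 c2 (c1.trans (dvd_mul_left _ 2))

lemma kreweras_dvd (n : ℕ) : ((n+1) * (2*n+1)) ∣ 4^n * Nat.choose (3*n) n := by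
  rcases Nat.eq_zero_or_pos n with h | h
  · simp [h]
  · obtain ⟨m, hm⟩ : ∃ m, n = m + 1 := ⟨n-1, by omega⟩
    have h4 : 4^n = 2 * (2 * 4^m) := by rw [hm, pow_succ]; ring
    rw [h4, mul_assoc, mul_comm (2 * 4^m), ← mul_assoc]
    exact Dvd.dvd.mul_right (dvd_two_choose n) _

lemma kreweras_eq (n : ℕ) :
    Kreweras n * ((n+1) * (2*n+1)) = 4^n * Nat.choose (3*n) n :=
  Nat.div_mul_cancel (kreweras_dvd n)

lemma kreweras_zero : Kreweras 0 = 1 := by simp [Kreweras]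

lemma kreweras_rec (n : ℕ) :
    (n+2) * ((2*n+3) * Kreweras (n+1)) = 6 * ((3*n+2) * ((3*n+1) * Kreweras n)) := by
  have E1 := kreweras_eq n
  have E2 := kreweras_eq (n+1)
  have CI := choose_id n
  have hpos : 0 < (n+1) * ((2*n+2) * (2*n+1)) := by positivity
  apply Nat.eq_of_mul_eq_mul_right hpos
  calc (n+2) * ((2*n+3) * Kreweras (n+1)) * ((n+1) * ((2*n+2) * (2*n+1)))
      = (Kreweras (n+1) * ((n+1+1) * (2*(n+1)+1))) * ((n+1) * ((2*n+2) * (2*n+1))) := by ring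
    _ = (4^(n+1) * Nat.choose (3*(n+1)) (n+1)) * ((n+1) * ((2*n+2) * (2*n+1))) := by rw [E2]
    _ = 4^(n+1) * ((n+1) * ((2*n+2) * ((2*n+1) * Nat.choose (3*n+3) (n+1)))) := by
        rw [show 3*(n+1) = 3*n+3 by ring]; ring
    _ = 4^(n+1) * ((3*n+3) * ((3*n+2) * ((3*n+1) * Nat.choose (3*n) n))) := by rw [CI]
    _ = (3*n+2) * ((3*n+1) * (4^n * Nat.choose (3*n) n)) * (4 * (3*n+3)) := by
        rw [pow_succ]; ring
    _ = (3*n+2) * ((3*n+1) * (Kreweras n * ((n+1) * (2*n+1)))) * (4 * (3*n+3)) := by rw [E1]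
    _ = 6 * ((3*n+2) * ((3*n+1) * Kreweras n)) * ((n+1) * ((2*n+2) * (2*n+1))) := by ring

lemma kreweras_pos (n : ℕ) : 0 < Kreweras n := by
  induction n with
  | zero => rw [kreweras_zero]; norm_num
  | succ n ih =>
    rcases Nat.eq_zero_or_pos (Kreweras (n+1)) with h | h
    · exfalso
      have := kreweras_rec n
      rw [h] at this
      simp at this
      omega
    · exact h

/-- 3-adic valuation of the Kreweras number -/
def eK (n : ℕ) : ℕ := v3 (Kreweras n)

lemma v3_6 : v3 6 = 1 := by
  rw [show (6:ℕ) = 3*2 by norm_num, v3_3mul (by norm_num), v3_of_not_dvd (by norm_num)]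

lemma v3_rec (n : ℕ) : v3 (n+2) + v3 (2*n+3) + eK (n+1) = 1 + eK n := by
  have R := kreweras_rec n
  have h1 : Kreweras n ≠ 0 := (kreweras_pos n).ne'
  have h2 : Kreweras (n+1) ≠ 0 := (kreweras_pos (n+1)).ne'
  have L : v3 ((n+2) * ((2*n+3) * Kreweras (n+1)))
      = v3 (n+2) + (v3 (2*n+3) + eK (n+1)) := by
    unfold v3 eK
    rw [Nat.factorization_mul (by omega) (by positivity),
      Nat.factorization_mul (by omega) h2]
    simp [v3, eK]
  have Rr : v3 (6 * ((3*n+2) * ((3*n+1) * Kreweras n)))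
      = v3 6 + (v3 (3*n+2) + (v3 (3*n+1) + eK n)) := by
    unfold v3 eK
    rw [Nat.factorization_mul (by norm_num) (by positivity),
      Nat.factorization_mul (by omega) (by positivity),
      Nat.factorization_mul (by omega) h1]
    simp [v3, eK]
  have := congrArg v3 R
  rw [L, Rr, v3_6, v3_of_not_dvd (show ¬ 3 ∣ 3*n+2 by omega),
    v3_of_not_dvd (show ¬ 3 ∣ 3*n+1 by omega)] at this
  omega

lemma eK_zero : eK 0 = 0 := by
  unfold eK
  rw [kreweras_zero]
  simp [v3]

lemma s3_two : s3 2 = 2 := by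
  rw [show (2:ℕ) = 3*0+2 by norm_num, s3_step _ _ (by norm_num) (by norm_num), s3_zero]

lemma t3_two : t3 2 = 1 := by
  rw [show (2:ℕ) = 3*0+2 by norm_num, t3_step _ _ (by norm_num) (by norm_num), t3_zero]
  norm_num

lemma inv1 : ∀ n, s3 (2*n+2) = 2 * eK n + 2 := by
  intro n
  induction n with
  | zero => simpa [eK_zero] using s3_two
  | succ n ih =>
    have r := v3_rec n
    have sl1 := s3_succ (2*n+2)
    have sl2 := s3_succ (2*n+3)
    rw [show 2*n+2+1 = 2*n+3 by ring] at sl1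
    rw [show 2*n+3+1 = 2*n+4 by ring] at sl2
    have hv : v3 (2*n+4) = v3 (n+2) := by
      rw [show 2*n+4 = 2*(n+2) by ring]; exact v3_2mul _
    rw [show 2*(n+1)+2 = 2*n+4 by ring]
    omega

lemma uc_sq {m : ℕ} (hm : m ≠ 0) :
    ((ordCompl[3] m : ℕ) : ZMod 3) * ((ordCompl[3] m : ℕ) : ZMod 3) = 1 := by
  have hnd : ¬ 3 ∣ ordCompl[3] m := Nat.not_dvd_ordCompl (by norm_num) hm
  have h3 : ordCompl[3] m % 3 = 1 ∨ ordCompl[3] m % 3 = 2 := by omega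
  have hc : ((ordCompl[3] m : ℕ) : ZMod 3) = ((ordCompl[3] m % 3 : ℕ) : ZMod 3) :=
    (ZMod.natCast_mod _ 3).symm
  rcases h3 with h | h <;> rw [hc, h] <;> decide

lemma ordc_6 : ordCompl[3] 6 = 2 := by
  rw [show (6:ℕ) = 3*2 by norm_num, ordc_3mul, ordc_2]

lemma inv2 : ∀ n, ((ordCompl[3] (Kreweras n) : ℕ) : ZMod 3)
    = (-1) ^ (t3 (2*n+2) + eK n + 1) := by
  intro n
  induction n with
  | zero =>
    rw [kreweras_zero, show 2*0+2 = 2 by norm_num, t3_two, eK_zero]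
    norm_num
  | succ n ih =>
    have R := kreweras_rec n
    have h1 : Kreweras n ≠ 0 := (kreweras_pos n).ne'
    have h2 : Kreweras (n+1) ≠ 0 := (kreweras_pos (n+1)).ne'
    have OC : ordCompl[3] (n+2) * (ordCompl[3] (2*n+3) * ordCompl[3] (Kreweras (n+1)))
        = ordCompl[3] 6 * (ordCompl[3] (3*n+2) * (ordCompl[3] (3*n+1) * ordCompl[3] (Kreweras n))) := by
      have := congrArg (fun m : ℕ => ordCompl[3] m) R
      simpa only [Nat.ordCompl_mul] using this
    set a : ZMod 3 := ((ordCompl[3] (n+2) : ℕ) : ZMod 3) with ha_def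
    set b : ZMod 3 := ((ordCompl[3] (2*n+3) : ℕ) : ZMod 3) with hb_def
    set c : ZMod 3 := ((ordCompl[3] (Kreweras n) : ℕ) : ZMod 3) with hc_def
    set c' : ZMod 3 := ((ordCompl[3] (Kreweras (n+1)) : ℕ) : ZMod 3) with hc'_def
    have key : a * (b * c') = c := by
      have := congrArg (fun m : ℕ => (m : ZMod 3)) OC
      simp only [Nat.cast_mul] at this
      rw [ordc_6, ordc_of_not_dvd (show ¬ 3 ∣ 3*n+2 by omega),
        ordc_of_not_dvd (show ¬ 3 ∣ 3*n+1 by omega)] at this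
      rw [ha_def, hb_def, hc_def, hc'_def] at *
      rw [this, cast3 n 2, cast3 n 1]
      calc (2:ZMod 3) * ((2:ZMod 3) * ((1:ZMod 3) * c)) = ((2:ZMod 3)*2) * c := by ring
        _ = c := by rw [show ((2:ZMod 3)*2) = 1 by decide]; ring
    have sqa : a * a = 1 := uc_sq (by omega)
    have sqb : b * b = 1 := uc_sq (by omega)
    have hc' : c' = a * (b * c) := by
      calc c' = (a*a) * ((b*b) * c') := by rw [sqa, sqb]; ring
        _ = a * (b * (a * (b * c'))) := by ring
        _ = a * (b * c) := by rw [key]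
    -- a = - uc (2n+4)
    have h2m : ((ordCompl[3] (2*(n+2)) : ℕ) : ZMod 3) = 2 * a := by
      rw [ordc_2mul]; push_cast; ring
    have ha : a = - ((ordCompl[3] (2*n+4) : ℕ) : ZMod 3) := by
      rw [show 2*n+4 = 2*(n+2) by ring, h2m]
      rw [show (2 : ZMod 3) = -1 by decide]
      ring
    have u1 := uc_succ (2*n+3)
    rw [show 2*n+3+1 = 2*n+4 by ring] at u1
    have u2 := uc_succ (2*n+2)
    rw [show 2*n+2+1 = 2*n+3 by ring] at u2
    have hv : v3 (2*n+4) = v3 (n+2) := by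
      rw [show 2*n+4 = 2*(n+2) by ring]; exact v3_2mul _
    have r := v3_rec n
    rw [show 2*(n+1)+2 = 2*n+4 by ring]
    rw [hc', ha, u1, hb_def, u2, ih]
    rw [show -((-1 : ZMod 3) ^ (t3 (2*n+4) + t3 (2*n+3) + v3 (2*n+4)))
        = (-1) ^ (t3 (2*n+4) + t3 (2*n+3) + v3 (2*n+4) + 1) by rw [pow_succ]; ring]
    rw [← pow_add, ← pow_add]
    exact neg_one_pow_congr3 (by omega)

lemma digit_split (m : ℕ) (hm : m ≠ 0) :
    ∃ k r, r < 3 ∧ m = 3 * k + r ∧ k < m ∧ s3 m = r + s3 k ∧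
      t3 m = (if r = 2 then 1 else 0) + t3 k := by
  have e : m = 3 * (m / 3) + m % 3 := by omega
  refine ⟨m / 3, m % 3, by omega, e, by omega, ?_, ?_⟩
  · conv_lhs => rw [e]
    exact s3_step _ _ (by omega) (by omega)
  · conv_lhs => rw [e]
    exact t3_step _ _ (by omega) (by omega)

lemma s3_eq_zero : ∀ m, s3 m = 0 → m = 0 := by
  intro m
  induction m using Nat.strong_induction_on with
  | _ m ih =>
    intro hs
    by_contra hm
    obtain ⟨k, r, hr, hmk, hlt, hs3, _⟩ := digit_split m hm
    have hk : k = 0 := ih k (by omega) (by omega)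
    omega

lemma s3_eq_one : ∀ m, s3 m = 1 → ∃ i, m = 3 ^ i := by
  intro m
  induction m using Nat.strong_induction_on with
  | _ m ih =>
    intro hs
    have hm : m ≠ 0 := by intro h; rw [h, s3_zero] at hs; omega
    obtain ⟨k, r, hr, hmk, hlt, hs3, _⟩ := digit_split m hm
    rcases (by omega : r = 0 ∨ r = 1 ∨ r = 2) with h | h | h
    · obtain ⟨i, hi⟩ := ih k (by omega) (by omega)
      exact ⟨i+1, by rw [pow_succ]; omega⟩
    · have : k = 0 := s3_eq_zero k (by omega)
      exact ⟨0, by omega⟩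
    · omega

lemma two_t3_le_s3 : ∀ m, 2 * t3 m ≤ s3 m := by
  intro m
  induction m using Nat.strong_induction_on with
  | _ m ih =>
    rcases Nat.eq_zero_or_pos m with h | h
    · simp [h, s3_zero, t3_zero]
    · obtain ⟨k, r, hr, hmk, hlt, hs3, ht3⟩ := digit_split m (by omega)
      have := ih k (by omega)
      rcases (by omega : r = 2 ∨ r ≠ 2) with h2 | h2 <;> simp [h2] at ht3 <;> omega

lemma lemA : ∀ m, s3 m = 2 → t3 m = 1 → ∃ i, m = 2 * 3 ^ i := by
  intro m
  induction m using Nat.strong_induction_on with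
  | _ m ih =>
    intro hs ht
    have hm : m ≠ 0 := by intro h; rw [h, s3_zero] at hs; omega
    obtain ⟨k, r, hr, hmk, hlt, hs3, ht3⟩ := digit_split m hm
    rcases (by omega : r = 0 ∨ r = 1 ∨ r = 2) with h | h | h
    · simp [h] at ht3
      obtain ⟨i, hi⟩ := ih k (by omega) (by omega) (by omega)
      exact ⟨i+1, by rw [pow_succ]; omega⟩
    · simp [h] at ht3
      have := two_t3_le_s3 k
      omega
    · have : k = 0 := s3_eq_zero k (by omega)
      exact ⟨0, by omega⟩

lemma lemB : ∀ m, s3 m = 2 → t3 m = 0 → ∃ i1 i2, i2 < i1 ∧ m = 3 ^ i1 + 3 ^ i2 := by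
  intro m
  induction m using Nat.strong_induction_on with
  | _ m ih =>
    intro hs ht
    have hm : m ≠ 0 := by intro h; rw [h, s3_zero] at hs; omega
    obtain ⟨k, r, hr, hmk, hlt, hs3, ht3⟩ := digit_split m hm
    rcases (by omega : r = 0 ∨ r = 1 ∨ r = 2) with h | h | h
    · simp [h] at ht3
      obtain ⟨i1, i2, hlt2, hi⟩ := ih k (by omega) (by omega) (by omega)
      exact ⟨i1+1, i2+1, by omega, by rw [pow_succ, pow_succ]; omega⟩
    · simp [h] at ht3
      obtain ⟨i, hi⟩ := s3_eq_one k (by omega)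
      exact ⟨i+1, 0, by omega, by rw [pow_succ]; omega⟩
    · simp [h] at ht3
      omega

lemma pow3_digits (i : ℕ) : s3 (3 ^ i) = 1 ∧ t3 (3 ^ i) = 0 := by
  induction i with
  | zero =>
    constructor
    · rw [show (3:ℕ)^0 = 3*0+1 by norm_num, s3_step _ _ (by norm_num) (by norm_num), s3_zero]
    · rw [show (3:ℕ)^0 = 3*0+1 by norm_num, t3_step _ _ (by norm_num) (by norm_num), t3_zero]
      norm_num
  | succ i ih =>
    have h1 : (3:ℕ)^(i+1) = 3 * 3^i + 0 := by rw [pow_succ]; ring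
    have hp : 0 < 3 * 3^i + 0 := by positivity
    constructor
    · rw [h1, s3_step _ _ (by norm_num) hp]; omega
    · rw [h1, t3_step _ _ (by norm_num) hp]; simp [ih.2]

lemma two_pow3_digits (i : ℕ) : s3 (2 * 3 ^ i) = 2 ∧ t3 (2 * 3 ^ i) = 1 := by
  induction i with
  | zero =>
    constructor
    · rw [show 2 * (3:ℕ)^0 = 2 by norm_num, s3_two]
    · rw [show 2 * (3:ℕ)^0 = 2 by norm_num, t3_two]
  | succ i ih =>
    have h1 : 2 * (3:ℕ)^(i+1) = 3 * (2 * 3^i) + 0 := by rw [pow_succ]; ring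
    have hp : 0 < 3 * (2 * 3^i) + 0 := by positivity
    constructor
    · rw [h1, s3_step _ _ (by norm_num) hp]; omega
    · rw [h1, t3_step _ _ (by norm_num) hp]; simp [ih.2]

lemma sum_pow3_digits : ∀ i2 i1, i2 < i1 →
    s3 (3 ^ i1 + 3 ^ i2) = 2 ∧ t3 (3 ^ i1 + 3 ^ i2) = 0 := by
  intro i2
  induction i2 with
  | zero =>
    intro i1 h
    obtain ⟨j, hj⟩ : ∃ j, i1 = j + 1 := ⟨i1 - 1, by omega⟩
    have h1 : (3:ℕ)^i1 + 3^0 = 3 * 3^j + 1 := by rw [hj, pow_succ]; ring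
    constructor
    · rw [h1, s3_step _ _ (by norm_num) (by positivity)]
      have := (pow3_digits j).1; omega
    · rw [h1, t3_step _ _ (by norm_num) (by positivity)]
      have := (pow3_digits j).2; simp; omega
  | succ i2 ih =>
    intro i1 h
    obtain ⟨j, hj⟩ : ∃ j, i1 = j + 1 := ⟨i1 - 1, by omega⟩
    have h1 : (3:ℕ)^i1 + 3^(i2+1) = 3 * (3^j + 3^i2) + 0 := by
      rw [hj, pow_succ, pow_succ]; ring
    have hij : i2 < j := by omega
    constructor
    · rw [h1, s3_step _ _ (by norm_num) (by positivity)]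
      have := (ih j hij).1; omega
    · rw [h1, t3_step _ _ (by norm_num) (by positivity)]
      have := (ih j hij).2; simp; omega

lemma K_cast_of_e0 (n : ℕ) (h : eK n = 0) :
    ((Kreweras n : ℕ) : ZMod 3) = (-1) ^ (t3 (2*n+2) + 1) := by
  have h0 : (Kreweras n).factorization 3 = 0 := by unfold eK v3 at h; exact h
  calc ((Kreweras n : ℕ) : ZMod 3)
      = ((ordCompl[3] (Kreweras n) : ℕ) : ZMod 3) := by rw [h0, pow_zero, Nat.div_one]
    _ = (-1) ^ (t3 (2*n+2) + eK n + 1) := inv2 n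
    _ = (-1) ^ (t3 (2*n+2) + 1) := by rw [h]

lemma neg_pow_eq_one {j : ℕ} (h : (-1 : ZMod 3) ^ j = 1) : j % 2 = 0 := by
  by_contra hb
  rw [neg_one_pow_congr3 (show j % 2 = 1 % 2 by omega), pow_one] at h
  exact absurd h (by decide)

/-- For `n ≥ 1`: `K_n ≡ 1 (mod 3)` iff `n = 3^i − 1` for some `i ≥ 1`;
`K_n ≡ 2 (mod 3)` iff `n = (3^{i₁} + 3^{i₂} − 2)/2` for some `i₁ > i₂ ≥ 0`
(equivalently `2n + 2 = 3^{i₁} + 3^{i₂}`); and `3 ∣ K_n` in all other cases. -/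
theorem stmt_14 (n : ℕ) (hn : 1 ≤ n) :
    (Kreweras n ≡ 1 [MOD 3] ↔ ∃ i : ℕ, 1 ≤ i ∧ n + 1 = 3 ^ i) ∧
    (Kreweras n ≡ 2 [MOD 3] ↔ ∃ i1 i2 : ℕ, i2 < i1 ∧ 2 * n + 2 = 3 ^ i1 + 3 ^ i2) ∧
    (¬ (∃ i : ℕ, 1 ≤ i ∧ n + 1 = 3 ^ i) →
      ¬ (∃ i1 i2 : ℕ, i2 < i1 ∧ 2 * n + 2 = 3 ^ i1 + 3 ^ i2) →
      3 ∣ Kreweras n) := by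
  have hM1 : s3 (2*n+2) = 2 * eK n + 2 := inv1 n
  have hdvd_of_pos : eK n ≠ 0 → (3:ℕ) ∣ Kreweras n := by
    intro he
    exact Nat.dvd_of_factorization_pos (by unfold eK v3 at he; exact he)
  refine ⟨⟨?_, ?_⟩, ⟨?_, ?_⟩, ?_⟩
  · -- K ≡ 1 → form 1
    intro h1
    have hcast : ((Kreweras n : ℕ) : ZMod 3) = 1 := by
      have := (ZMod.natCast_eq_natCast_iff _ _ _).mpr h1
      simpa using this
    have he : eK n = 0 := by
      by_contra he
      have h0 : ((Kreweras n : ℕ) : ZMod 3) = 0 :=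
        (ZMod.natCast_eq_zero_iff _ _).mpr (hdvd_of_pos he)
      rw [h0] at hcast
      exact absurd hcast (by decide)
    have hc2 := K_cast_of_e0 n he
    rw [hcast] at hc2
    have hodd : (t3 (2*n+2) + 1) % 2 = 0 := neg_pow_eq_one hc2.symm
    have ht : t3 (2*n+2) = 1 := by
      have := two_t3_le_s3 (2*n+2)
      omega
    obtain ⟨i, hi⟩ := lemA (2*n+2) (by omega) ht
    have hi0 : i ≠ 0 := by
      intro h0
      rw [h0] at hi
      simp at hi
      omega
    exact ⟨i, by omega, by omega⟩
  · -- form 1 → K ≡ 1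
    rintro ⟨i, hi1, hi⟩
    have hM : 2*n+2 = 2 * 3^i := by omega
    have hs : s3 (2*n+2) = 2 := by rw [hM]; exact (two_pow3_digits i).1
    have ht : t3 (2*n+2) = 1 := by rw [hM]; exact (two_pow3_digits i).2
    have he : eK n = 0 := by omega
    have hc := K_cast_of_e0 n he
    rw [ht] at hc
    apply (ZMod.natCast_eq_natCast_iff _ _ _).mp
    rw [hc]
    norm_num
  · -- K ≡ 2 → form 2
    intro h1
    have hcast : ((Kreweras n : ℕ) : ZMod 3) = 2 := by
      have := (ZMod.natCast_eq_natCast_iff _ _ _).mpr h1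
      simpa using this
    have he : eK n = 0 := by
      by_contra he
      have h0 : ((Kreweras n : ℕ) : ZMod 3) = 0 :=
        (ZMod.natCast_eq_zero_iff _ _).mpr (hdvd_of_pos he)
      rw [h0] at hcast
      exact absurd hcast (by decide)
    have hc2 := K_cast_of_e0 n he
    rw [hcast] at hc2
    have hodd : (t3 (2*n+2) + 1) % 2 = 1 := by
      by_contra hb
      rw [neg_one_pow_congr3 (show (t3 (2*n+2) + 1) % 2 = 0 % 2 by omega), pow_zero] at hc2
      exact absurd hc2.symm (by decide)
    have htle := two_t3_le_s3 (2*n+2)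
    have ht : t3 (2*n+2) = 0 := by omega
    obtain ⟨i1, i2, hlt, hi⟩ := lemB (2*n+2) (by omega) ht
    exact ⟨i1, i2, hlt, hi⟩
  · -- form 2 → K ≡ 2
    rintro ⟨i1, i2, hlt, hi⟩
    have hs : s3 (2*n+2) = 2 := by rw [hi]; exact (sum_pow3_digits i2 i1 hlt).1
    have ht : t3 (2*n+2) = 0 := by rw [hi]; exact (sum_pow3_digits i2 i1 hlt).2
    have he : eK n = 0 := by omega
    have hc := K_cast_of_e0 n he
    rw [ht] at hc
    apply (ZMod.natCast_eq_natCast_iff _ _ _).mp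
    rw [hc]
    decide
  · -- neither form → 3 ∣ K
    intro hA hB
    rcases Nat.eq_zero_or_pos (eK n) with he | he
    · exfalso
      have hs : s3 (2*n+2) = 2 := by omega
      have ht := two_t3_le_s3 (2*n+2)
      rcases (by omega : t3 (2*n+2) = 0 ∨ t3 (2*n+2) = 1) with h0 | h0
      · obtain ⟨i1, i2, hlt, hi⟩ := lemB (2*n+2) hs h0
        exact hB ⟨i1, i2, hlt, hi⟩
      · obtain ⟨i, hi⟩ := lemA (2*n+2) hs h0
        have hi0 : i ≠ 0 := by
          intro hz
          rw [hz] at hi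
          simp at hi
          omega
        exact hA ⟨i, by omega, by omega⟩
    · exact hdvd_of_pos (by omega)
end

section
/- Let p be a prime. The Fuß–Catalan numbers F(n;p) = (1/n)·C(pn, n−1) obey the following congruences modulo p², for n ≥ 1: (i) if n = (p^i − 1)/(p − 1) for some integer i ≥ 1, then F(n;p) ≡ 1 (mod p²); (ii) if n = (a_1 p^{i_1} + a_2 p^{i_2} + … + a_r p^{i_r} − 1)/(p − 1) where r ≥ 2, the a_j are positive integers relatively prime to p with a_1 + a_2 + … + a_r = p, and i_1 > i_2 > … > i_r ≥ 0, then F(n;p) ≡ p!/(a_1!·a_2!·…·a_r!) (mod p²); (iii) in all cases not covered by (i) and (ii), F(n;p) is divisible by p². -/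
/-- The Fuß–Catalan number `F(n;k) = (1/n)·C(kn, n−1)`. -/
def FussCatalan (n k : ℕ) : ℕ := Nat.choose (k * n) (n - 1) / n

open Finset

namespace FussAux

/-- Raney number `(x/(x+kp))·C(x+kp, k)` as an integer. -/
def w (p x k : ℕ) : ℤ :=
  ((x + k * p).choose k : ℤ) - p * (if k = 0 then 0 else (((x + k * p - 1).choose (k - 1) : ℕ) : ℤ))

@[simp] lemma w_zero_right (p x : ℕ) : w p x 0 = 1 := by simp [w]

lemma w_succ (p x k : ℕ) :
    w p x (k+1) = ((x + (k+1) * p).choose (k+1) : ℤ) - p * ((x + (k+1) * p - 1).choose k : ℕ) := by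
  simp [w]

lemma w_pascal (p : ℕ) (hp : 1 ≤ p) (x k : ℕ) :
    w p (x+1) (k+1) = w p x (k+1) + w p (x+p) k := by
  rcases k with _ | j
  · have h1 : x + 1 + 1 * p - 1 = x + p := by omega
    have h2 : x + 1 + 1 * p = x + p + 1 := by omega
    have h4 : x + 1 * p - 1 = x + p - 1 := by omega
    have h3 : x + 1 * p = x + p := by omega
    rw [w_succ, w_succ, h1, h2, h4, h3, w_zero_right]
    simp [Nat.choose_one_right]
    push_cast
    ring
  · have hmul : (j+1+1) * p = (j+1) * p + p := by ring
    have hp2 : 1 ≤ (j+1)*p := Nat.mul_le_mul (Nat.succ_le_succ (Nat.zero_le j)) hp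
    set N := x + (j+1+1) * p - 1 with hNdef
    have e2 : x + 1 + (j+1+1)*p - 1 = N+1 := by omega
    have e1 : x + 1 + (j+1+1)*p = N+2 := by omega
    have e4 : x + (j+1+1)*p - 1 = N := by omega
    have e3 : x + (j+1+1)*p = N+1 := by omega
    have e6 : x + p + (j+1)*p - 1 = N := by omega
    have e5 : x + p + (j+1)*p = N+1 := by omega
    rw [w_succ p (x+1) (j+1), w_succ p x (j+1), w_succ p (x+p) j, e2, e1, e4, e3, e6, e5]
    have p1 : (N+2).choose (j+2) = (N+1).choose (j+1) + (N+1).choose (j+2) :=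
      Nat.choose_succ_succ _ _
    have p2 : (N+1).choose (j+1) = N.choose j + N.choose (j+1) :=
      Nat.choose_succ_succ _ _
    have p1' : ((N+2).choose (j+1+1) : ℤ) = (N+1).choose (j+1) + (N+1).choose (j+1+1) := by
      exact_mod_cast congrArg (Nat.cast : ℕ → ℤ) p1
    have p2' : ((N+1).choose (j+1) : ℤ) = N.choose j + N.choose (j+1) := by
      exact_mod_cast congrArg (Nat.cast : ℕ → ℤ) p2
    rw [p1', p2']
    ring

lemma w_zero_left (p : ℕ) (hp : 1 ≤ p) (k : ℕ) : w p 0 (k+1) = 0 := by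
  have hp2 : 1 ≤ (k+1)*p := Nat.mul_le_mul (Nat.succ_le_succ (Nat.zero_le k)) hp
  have h : 0 + (k+1) * p = ((k+1) * p - 1) + 1 := by omega
  have h2 : ((k+1) * p - 1) + 1 = (k+1) * p := by omega
  have key := Nat.add_one_mul_choose_eq ((k+1) * p - 1) k
  have key2 : (k+1) * p * (((k+1)*p - 1).choose k) = (((k+1)*p).choose (k+1)) * (k+1) := by
    rw [← h2]; simpa [Nat.succ_eq_add_one] using key
  have key3 : (k+1) * (p * (((k+1)*p - 1).choose k)) = (k+1) * (((k+1)*p).choose (k+1)) := by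
    rw [show (k+1) * (p * (((k+1)*p - 1).choose k)) = (k+1) * p * (((k+1)*p - 1).choose k) by ring,
      key2]; ring
  have key4 : p * (((k+1)*p - 1).choose k) = ((k+1)*p).choose (k+1) :=
    Nat.eq_of_mul_eq_mul_left (Nat.succ_pos k) key3
  have key5 : ((p : ℤ)) * ((((k+1)*p - 1).choose k : ℕ) : ℤ) = ((((k+1)*p).choose (k+1) : ℕ) : ℤ) := by
    exact_mod_cast congrArg (Nat.cast : ℕ → ℤ) key4
  rw [w_succ, h, h2]
  linarith [key5]

/-- The convolution identity for Raney numbers. -/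
lemma w_conv (p : ℕ) (hp : 1 ≤ p) :
    ∀ n x y, (∑ k ∈ range (n+1), w p x k * w p y (n - k)) = w p (x+y) n := by
  intro n
  induction n using Nat.strong_induction_on with
  | _ n IHn =>
    rcases n with _ | n
    · intro x y; simp
    · intro x y
      induction x with
      | zero =>
        rw [Finset.sum_eq_single 0]
        · simp
        · intro k hk hkne
          rcases k with _ | k
          · exact absurd rfl hkne
          · rw [w_zero_left p hp k, zero_mul]
        · intro h; simp at h
      | succ x IHx =>
        have hterm : ∀ k ∈ range (n+1),
            w p (x+1) (k+1) * w p y (n + 1 - (k+1)) =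
            w p x (k+1) * w p y (n + 1 - (k+1)) + w p (x+p) k * w p y (n - k) := by
          intro k hk
          have hs : n + 1 - (k+1) = n - k := by omega
          rw [w_pascal p hp x k, hs]
          ring
        rw [Finset.sum_range_succ'] at IHx ⊢
        rw [Finset.sum_congr rfl hterm, Finset.sum_add_distrib]
        have hsecond : (∑ k ∈ range (n+1), w p (x+p) k * w p y (n - k)) = w p (x+p+y) n :=
          IHn n (Nat.lt_succ_self n) (x+p) y
        have hpas : w p (x+y+1) (n+1) = w p (x+y) (n+1) + w p (x+y+p) n :=
          w_pascal p hp (x+y) n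
        have c1 : x + 1 + y = x + y + 1 := by omega
        have c2 : x + p + y = x + y + p := by omega
        rw [hsecond, c1, c2, hpas]
        simp only [w_zero_right, one_mul] at IHx ⊢
        linarith [IHx]


/-- generating power series of Raney numbers -/
noncomputable def W (p s : ℕ) : PowerSeries ℤ := PowerSeries.mk (w p s)

lemma W_def (p s : ℕ) : W p s = PowerSeries.mk (w p s) := rfl

lemma W_mul (p : ℕ) (hp : 1 ≤ p) (x y : ℕ) : W p x * W p y = W p (x+y) := by
  ext n
  rw [PowerSeries.coeff_mul, Finset.Nat.sum_antidiagonal_eq_sum_range_succ_mk]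
  simp only [W, PowerSeries.coeff_mk]
  exact w_conv p hp n x y

lemma W_pow (p : ℕ) (hp : 1 ≤ p) (s : ℕ) : (W p 1)^s = W p s := by
  induction s with
  | zero =>
    ext n
    rw [pow_zero]
    rcases n with _ | n
    · simp [W, w_zero_right]
    · simp [W, PowerSeries.coeff_one, w_zero_left p hp]
  | succ s IH => rw [pow_succ, IH, W_mul p hp s 1]

/-- `w p p n = w p 1 (n+1)` -/
lemma w_shift (p : ℕ) (hp : 1 ≤ p) (n : ℕ) : w p p n = w p 1 (n+1) := by
  rcases n with _ | j
  · rw [w_zero_right, w_succ]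
    have h1 : 1 + 1 * p = p + 1 := by omega
    have h2 : 1 + 1 * p - 1 = p := by omega
    rw [h2, h1]
    simp [Nat.choose_one_right]
  · have hp2 : 1 ≤ (j+1)*p := Nat.mul_le_mul (Nat.succ_le_succ (Nat.zero_le j)) hp
    have hmul : (j+1+1) * p = (j+1) * p + p := by ring
    set N := p + (j+1) * p with hN
    have e1 : 1 + (j+1+1) * p = N + 1 := by omega
    have e2 : 1 + (j+1+1) * p - 1 = N := by omega
    have e3 : p + (j+1) * p - 1 = N - 1 := by omega
    have e4 : N = (N-1) + 1 := by omega
    have e5 : p + (j+1) * p = N := hN.symm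
    rw [w_succ, w_succ, e3, e5, e2, e1]
    -- goal: C(N, j+1) − p·C(N−1, j) = C(N+1, j+2) − p·C(N, j+1)
    have pas1 : (N+1).choose (j+2) = N.choose (j+1) + N.choose (j+2) := Nat.choose_succ_succ _ _
    have pas2 : N.choose (j+1) = (N-1).choose j + (N-1).choose (j+1) := by
      conv_lhs => rw [e4]
      exact Nat.choose_succ_succ _ _
    -- C(N, j+2) = p·C(N−1, j+1)  since N = (j+2)p
    have key := Nat.add_one_mul_choose_eq (N-1) (j+1)
    have hNval : N = (j+2) * p := by rw [hN]; ring
    have key2 : (j+2) * (p * ((N-1).choose (j+1))) = (j+2) * (N.choose (j+2)) := by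
      have h5 : N - 1 + 1 = N := by omega
      rw [h5] at key
      -- key : N * (N-1).choose (j+1) = N.choose (j+2) * (j+2)
      calc (j+2) * (p * ((N-1).choose (j+1))) = ((j+2) * p) * ((N-1).choose (j+1)) := by ring
        _ = N * ((N-1).choose (j+1)) := by rw [hNval]
        _ = N.choose (j+2) * (j+2) := key
        _ = (j+2) * (N.choose (j+2)) := by ring
    have key3 : p * ((N-1).choose (j+1)) = N.choose (j+2) :=
      Nat.eq_of_mul_eq_mul_left (by omega) key2
    have pas1' : ((N+1).choose (j+1+1) : ℤ) = N.choose (j+1) + N.choose (j+2) := by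
      exact_mod_cast congrArg (Nat.cast : ℕ → ℤ) pas1
    have pas2' : (N.choose (j+1) : ℤ) = (N-1).choose j + (N-1).choose (j+1) := by
      exact_mod_cast congrArg (Nat.cast : ℕ → ℤ) pas2
    have key3' : (p : ℤ) * ((N-1).choose (j+1) : ℕ) = (N.choose (j+2) : ℕ) := by
      exact_mod_cast congrArg (Nat.cast : ℕ → ℤ) key3
    have pas2'' : (p:ℤ) * (N.choose (j+1) : ℕ) = p * ((N-1).choose j : ℕ) + p * ((N-1).choose (j+1) : ℕ) := by
      rw [pas2']; ring
    rw [pas1']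
    push_cast
    push_cast at pas2' key3' pas2''
    linarith [pas2', key3', pas2'']

/-- FussCatalan is `w p 1 n`. -/
lemma fuss_eq_w (p : ℕ) (hp : 1 ≤ p) (n : ℕ) (hn : 1 ≤ n) :
    ((Nat.choose (p * n) (n - 1) / n : ℕ) : ℤ) = w p 1 n := by
  obtain ⟨m, rfl⟩ : ∃ m, n = m + 1 := ⟨n - 1, by omega⟩
  have hm1 : m + 1 - 1 = m := by omega
  set N := (m+1) * p with hN
  have key := Nat.add_one_mul_choose_eq N m
  -- (N+1) * C(N, m) = C(N+1, m+1) * (m+1)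
  have e1 : 1 + (m+1) * p = N + 1 := by omega
  have e2 : 1 + (m+1) * p - 1 = N := by omega
  have hkey : ((m:ℤ)+1) * w p 1 (m+1) = (N.choose m : ℕ) := by
    rw [w_succ, e2, e1]
    have key' : ((N:ℤ)+1) * (N.choose m : ℕ) = ((N+1).choose (m+1) : ℕ) * ((m:ℤ)+1) := by
      exact_mod_cast congrArg (Nat.cast : ℕ → ℤ) key
    have hNc : ((m:ℤ)+1) * p = (N:ℤ) := by push_cast [hN]; ring
    calc ((m:ℤ)+1) * (((N+1).choose (m+1) : ℕ) - (p:ℤ) * (N.choose m : ℕ))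
        = ((N+1).choose (m+1) : ℕ) * ((m:ℤ)+1) - (((m:ℤ)+1) * p) * (N.choose m : ℕ) := by ring
      _ = ((N:ℤ)+1) * (N.choose m : ℕ) - (N:ℤ) * (N.choose m : ℕ) := by rw [← key', hNc]
      _ = (N.choose m : ℕ) := by ring
  have hdvd : ((m:ℤ)+1) ∣ ((N.choose m : ℕ) : ℤ) := ⟨w p 1 (m+1), hkey.symm⟩
  have hdvdn : (m+1) ∣ N.choose m := by
    have := Int.natCast_dvd_natCast.mp (by exact_mod_cast hdvd)
    exact this
  have hpn : p * (m+1) = N := by rw [hN]; ring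
  rw [hpn, hm1]
  obtain ⟨q, hq⟩ := hdvdn
  rw [hq, Nat.mul_div_cancel_left q (Nat.succ_pos m)]
  have : ((m:ℤ)+1) * w p 1 (m+1) = ((m:ℤ)+1) * q := by
    rw [hkey, hq]; push_cast; ring
  have hq' := mul_left_cancel₀ (show ((m:ℤ)+1) ≠ 0 by positivity) this
  omega


/-- `c p i = (p^i - 1)/(p-1) = 1 + p + ... + p^(i-1)`. -/
def c (p : ℕ) : ℕ → ℕ
  | 0 => 0
  | i+1 => p * c p i + 1

lemma c_succ (p i : ℕ) : c p (i+1) = p * c p i + 1 := rfl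

lemma c_mul (p : ℕ) (hp : 1 ≤ p) (i : ℕ) : (p - 1) * c p i + 1 = p ^ i := by
  induction i with
  | zero => simp [c]
  | succ i IH =>
    have : (p - 1) * c p (i+1) + 1 = p * ((p-1) * c p i + 1) := by
      show (p-1) * (p * c p i + 1) + 1 = _
      have h1 : (p-1) * (p * c p i) = p * ((p-1) * c p i) := by ring
      have h2 : (p-1) + 1 = p := by omega
      calc (p-1) * (p * c p i + 1) + 1 = p * ((p-1) * c p i) + ((p-1) + 1) := by rw [← h1]; ring
        _ = p * ((p-1) * c p i) + p := by rw [h2]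
        _ = p * ((p-1) * c p i + 1) := by ring
    rw [this, IH, pow_succ]
    ring

lemma le_c (p : ℕ) (hp : 1 ≤ p) (i : ℕ) : i ≤ c p i := by
  induction i with
  | zero => simp
  | succ i IH =>
    show i + 1 ≤ p * c p i + 1
    have : c p i ≤ p * c p i := Nat.le_mul_of_pos_left _ hp
    omega

lemma c_strictMono (p : ℕ) (hp : 1 ≤ p) : StrictMono (c p) := by
  apply strictMono_nat_of_lt_succ
  intro i
  show c p i < p * c p i + 1
  have : c p i ≤ p * c p i := Nat.le_mul_of_pos_left _ hp
  omega

open scoped Classical in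
/-- indicator of the set `{c p i | i}`. -/
noncomputable def chi (p m : ℕ) : ℤ := if ∃ i, m = c p i then 1 else 0

lemma chi_zero (p : ℕ) : chi p 0 = 1 := by
  rw [chi, if_pos ⟨0, rfl⟩]

/-- coefficients of a power of a power series only depend on earlier coefficients -/
lemma coeff_pow_congr {R : Type*} [CommRing R] (f g : PowerSeries R) (N e : ℕ)
    (h : ∀ j, j ≤ N → PowerSeries.coeff j f = PowerSeries.coeff j g) :
    PowerSeries.coeff N (f^e) = PowerSeries.coeff N (g^e) := by
  obtain ⟨q, hq⟩ := sub_dvd_pow_sub_pow f g e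
  have : f^e = g^e + (f - g) * q := by rw [← hq]; ring
  rw [this, map_add, PowerSeries.coeff_mul]
  have : ∀ x ∈ antidiagonal N,
      PowerSeries.coeff x.1 (f - g) * PowerSeries.coeff x.2 q = 0 := by
    intro x hx
    rw [HasAntidiagonal.mem_antidiagonal] at hx
    rw [map_sub, h x.1 (by omega), sub_self, zero_mul]
  rw [Finset.sum_congr rfl this]
  simp

lemma cast_w_eq_chi (p : ℕ) (hp : p.Prime) : ∀ m, ((w p 1 m : ℤ) : ZMod p) = ((chi p m : ℤ) : ZMod p) := by
  haveI : Fact p.Prime := ⟨hp⟩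
  have hp1 : 1 ≤ p := hp.one_lt.le.trans' (by omega)
  intro m
  induction m using Nat.strong_induction_on with
  | _ m IH =>
    rcases m with _ | m
    · rw [w_zero_right, chi_zero]
    · -- w p 1 (m+1) = coeff m ((W p 1)^p)
      have h1 : w p 1 (m+1) = PowerSeries.coeff m ((W p 1)^p) := by
        rw [W_pow p hp1 p, W_def, PowerSeries.coeff_mk, w_shift p hp1]
      -- map to ZMod p
      set φ := Int.castRingHom (ZMod p) with hφ
      have h2 : ((w p 1 (m+1) : ℤ) : ZMod p)
          = PowerSeries.coeff m ((PowerSeries.map φ (W p 1))^p) := by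
        rw [← map_pow, PowerSeries.coeff_map, ← h1]; rfl
      -- truncation polynomial with chi coefficients
      classical
      set A : Polynomial (ZMod p) := ∑ k ∈ range (m+1), Polynomial.C ((chi p k : ℤ) : ZMod p) * Polynomial.X^k with hA
      have hAcoeff : ∀ j, j ≤ m → A.coeff j = ((chi p j : ℤ) : ZMod p) := by
        intro j hj
        rw [hA, Polynomial.finset_sum_coeff]
        rw [Finset.sum_eq_single j]
        · simp
        · intro k hk hkj
          rw [Polynomial.coeff_C_mul, Polynomial.coeff_X_pow, if_neg (Ne.symm hkj), mul_zero]
        · intro hj'; simp at hj'; omega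
      have h3 : PowerSeries.coeff m ((PowerSeries.map φ (W p 1))^p)
          = PowerSeries.coeff m ((A : PowerSeries (ZMod p))^p) := by
        apply coeff_pow_congr
        intro j hj
        rw [PowerSeries.coeff_map, Polynomial.coeff_coe, hAcoeff j hj, W_def, PowerSeries.coeff_mk]
        exact IH j (by omega)
      -- compute A^p via Frobenius
      have hApow : PowerSeries.coeff m ((A : PowerSeries (ZMod p))^p)
          = (A^p).coeff m := by rw [← Polynomial.coe_pow, Polynomial.coeff_coe]
      have hfrob : A^p = ∑ k ∈ range (m+1), Polynomial.C ((chi p k : ℤ) : ZMod p) * Polynomial.X^(k*p) := by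
        rw [hA, sum_pow_char]
        apply Finset.sum_congr rfl
        intro k hk
        rw [mul_pow, ← Polynomial.C_pow, ← pow_mul]
        have hchi01 : ((chi p k : ℤ) : ZMod p)^p = ((chi p k : ℤ) : ZMod p) := by
          rw [chi]; split <;> norm_num
        rw [hchi01]
      rw [h2, h3, hApow, hfrob]
      -- coefficient extraction
      rw [Polynomial.finset_sum_coeff]
      have hcoeff : ∀ k ∈ range (m+1),
          (Polynomial.C ((chi p k : ℤ) : ZMod p) * Polynomial.X^(k*p)).coeff m
          = if m = k * p then ((chi p k : ℤ) : ZMod p) else 0 := by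
        intro k hk
        rw [Polynomial.coeff_C_mul, Polynomial.coeff_X_pow]
        split <;> simp
      rw [Finset.sum_congr rfl hcoeff]
      -- now case on chi p (m+1)
      by_cases hex : ∃ i, m + 1 = c p i
      · obtain ⟨i, hi⟩ := hex
        rcases i with _ | i
        · simp [c] at hi
        · have hcomm : p * c p i = c p i * p := Nat.mul_comm _ _
          have him : m = c p i * p := by
            have : m + 1 = p * c p i + 1 := hi
            omega
          rw [Finset.sum_eq_single (c p i)]
          · rw [if_pos him, chi, if_pos ⟨i, rfl⟩, chi, if_pos ⟨i+1, hi⟩]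
          · intro k hk hkne
            rw [if_neg]
            intro hm
            exact hkne (Nat.eq_of_mul_eq_mul_right hp.pos (by omega : k * p = c p i * p))
          · intro hnotin
            exfalso
            apply hnotin
            rw [mem_range]
            have : c p i * p = m := him.symm
            nlinarith [hp.two_le]
      · -- chi (m+1) = 0; show each summand is 0
        have hchi0 : chi p (m+1) = 0 := by rw [chi, if_neg hex]
        rw [hchi0, Int.cast_zero]
        apply Finset.sum_eq_zero
        intro k hk
        split
        · rename_i hmk
          rw [chi]
          split
          · rename_i hkc
            exfalso
            obtain ⟨i, hic⟩ := hkc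
            subst hic
            refine hex ⟨i+1, ?_⟩
            show m + 1 = p * c p i + 1
            have hcomm : p * c p i = c p i * p := Nat.mul_comm _ _
            omega
          · norm_num
        · rfl


/-- uniqueness of base-p representations with digits < p -/
lemma digit_unique (p : ℕ) (hp : 2 ≤ p) :
    ∀ B (f g : ℕ → ℕ), (∀ u, f u < p) → (∀ u, g u < p) →
    (∑ u ∈ range B, f u * p^u = ∑ u ∈ range B, g u * p^u) → ∀ u, u < B → f u = g u := by
  intro B
  induction B with
  | zero => intro f g _ _ _ u hu; omega
  | succ B IH =>
    intro f g hf hg hsum u hu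
    have hsplit : ∀ h : ℕ → ℕ,
        ∑ u ∈ range (B+1), h u * p^u = p * (∑ u ∈ range B, h (u+1) * p^u) + h 0 := by
      intro h
      rw [Finset.sum_range_succ']
      simp only [pow_zero, mul_one, Finset.mul_sum]
      congr 1
      apply Finset.sum_congr rfl
      intro v _
      rw [pow_succ]
      ring
    rw [hsplit f, hsplit g] at hsum
    have h0 : f 0 = g 0 := by
      have hf0 : f 0 = (p * (∑ u ∈ range B, f (u+1) * p^u) + f 0) % p := by
        rw [Nat.mul_add_mod]
        exact (Nat.mod_eq_of_lt (hf 0)).symm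
      have hg0 : g 0 = (p * (∑ u ∈ range B, g (u+1) * p^u) + g 0) % p := by
        rw [Nat.mul_add_mod]
        exact (Nat.mod_eq_of_lt (hg 0)).symm
      rw [hf0, hg0, hsum]
    have hmul : p * (∑ u ∈ range B, f (u+1) * p^u) = p * (∑ u ∈ range B, g (u+1) * p^u) := by
      omega
    have hrest : (∑ u ∈ range B, f (u+1) * p^u) = ∑ u ∈ range B, g (u+1) * p^u :=
      Nat.eq_of_mul_eq_mul_left (by omega) hmul
    rcases u with _ | v
    · exact h0
    · exact IH (fun u => f (u+1)) (fun u => g (u+1)) (fun u => hf _) (fun u => hg _) hrest v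
        (by omega)

/-- cancellation: `(p-1)*a + p = n*(p-1) + 1 ↔ a = n-1` for `p ≥ 2, n ≥ 1`. -/
lemma aux_arith (p n a : ℕ) (hp : 2 ≤ p) (hn : 1 ≤ n) :
    ((p-1) * a + p = n * (p-1) + 1) ↔ a = n - 1 := by
  have h1 : 1 ≤ p := by omega
  constructor
  · intro h
    zify [h1, hn] at h
    have hfac : ((p:ℤ) - 1) * ((a:ℤ) - ((n:ℤ) - 1)) = 0 := by linear_combination h
    rcases mul_eq_zero.mp hfac with h2 | h2
    · exfalso
      have hp1 : (p:ℤ) = 1 := by linarith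
      have : p = 1 := by exact_mod_cast hp1
      omega
    · zify [hn]
      linarith
  · rintro rfl
    zify [h1, hn]
    ring


open scoped Classical

/-- index set: `i` with `c p i < n` -/
noncomputable def Idx (p n : ℕ) : Finset ℕ := (range n).filter (fun i => c p i < n)

/-- the solution set -/
noncomputable def Sset (p n : ℕ) : Finset (ℕ → ℕ) :=
  ((Idx p n).piAntidiag p).filter (fun k => ∑ i ∈ Idx p n, k i * c p i = n - 1)

/-- The master congruence: mod `p²`, `w p 1 n` is the sum of multinomials over `Sset`. -/
theorem master (p : ℕ) (hp : p.Prime) (n : ℕ) (hn : 1 ≤ n) :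
    ∃ T : ℤ, w p 1 n =
      (∑ k ∈ Sset p n, (Nat.multinomial (Idx p n) k : ℤ)) + (p:ℤ)^2 * T := by
  have hp1 : 1 ≤ p := hp.two_le.trans' (by omega)
  -- step 1
  have h1 : w p 1 n = PowerSeries.coeff (n-1) ((W p 1)^p) := by
    rw [W_pow p hp1 p, W_def, PowerSeries.coeff_mk, w_shift p hp1]
    congr 1; omega
  -- truncations
  set A : Polynomial ℤ := ∑ k ∈ range n, Polynomial.C (w p 1 k) * Polynomial.X^k with hA
  set Abar : Polynomial ℤ := ∑ k ∈ range n, Polynomial.C (chi p k) * Polynomial.X^k with hAbar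
  have hAcoeff : ∀ j, j < n → A.coeff j = w p 1 j := by
    intro j hj
    rw [hA, Polynomial.finset_sum_coeff, Finset.sum_eq_single j]
    · simp
    · intro k hk hkj
      rw [Polynomial.coeff_C_mul, Polynomial.coeff_X_pow, if_neg (Ne.symm hkj), mul_zero]
    · intro hj'; simp at hj'; omega
  have h2 : PowerSeries.coeff (n-1) ((W p 1)^p)
      = PowerSeries.coeff (n-1) (((A : Polynomial ℤ) : PowerSeries ℤ)^p) := by
    apply coeff_pow_congr
    intro j hj
    rw [Polynomial.coeff_coe, hAcoeff j (by omega), W_def, PowerSeries.coeff_mk]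
  have h2' : PowerSeries.coeff (n-1) (((A : Polynomial ℤ) : PowerSeries ℤ)^p)
      = (A^p).coeff (n-1) := by rw [← Polynomial.coe_pow, Polynomial.coeff_coe]
  -- A = Abar + C p * D
  have hdvd : ∀ k, (p:ℤ) ∣ w p 1 k - chi p k := by
    intro k
    rw [← ZMod.intCast_zmod_eq_zero_iff_dvd]
    push_cast
    rw [cast_w_eq_chi p hp k]
    ring
  set D : Polynomial ℤ := ∑ k ∈ range n, Polynomial.C ((w p 1 k - chi p k)/p) * Polynomial.X^k with hD
  have hAD : A = Abar + Polynomial.C (p:ℤ) * D := by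
    rw [hA, hAbar, hD, Finset.mul_sum, ← Finset.sum_add_distrib]
    apply Finset.sum_congr rfl
    intro k hk
    rw [← mul_assoc, ← Polynomial.C_mul, Int.mul_ediv_cancel' (hdvd k), ← add_mul, ← Polynomial.C_add]
    congr 2
    ring
  -- A^p ≡ Abar^p mod p²
  have hbin : ∃ E : Polynomial ℤ, A^p = Abar^p + Polynomial.C ((p:ℤ)^2) * E := by
    rw [hAD, add_pow]
    rw [Finset.sum_range_succ]
    have hlast : Abar ^ p * (Polynomial.C (p:ℤ) * D) ^ (p - p) * (p.choose p : ℕ) = Abar ^ p := by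
      simp [Nat.sub_self]
    rw [hlast]
    have hdvd2 : ∀ k ∈ range p,
        Polynomial.C ((p:ℤ)^2) ∣ Abar ^ k * (Polynomial.C (p:ℤ) * D) ^ (p - k) * (p.choose k : ℕ) := by
      intro k hk
      rw [mem_range] at hk
      rcases Nat.lt_or_ge k (p-1) with hk2 | hk2
      · -- p - k ≥ 2
        have h2le : 2 ≤ p - k := by omega
        refine Dvd.dvd.mul_right (Dvd.dvd.mul_left ?_ _) _
        rw [mul_pow]
        refine Dvd.dvd.mul_right ?_ _
        have : Polynomial.C ((p:ℤ))^2 ∣ Polynomial.C ((p:ℤ))^(p-k) := pow_dvd_pow _ h2le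
        simpa [← Polynomial.C_pow] using this
      · -- k = p - 1
        have hkeq : k = p - 1 := by omega
        have hpk : p - k = 1 := by omega
        have hch : p.choose k = p := by
          rw [hkeq, Nat.choose_symm (by omega : 1 ≤ p), Nat.choose_one_right]
        rw [hpk, pow_one]
        refine ⟨Abar ^ k * D, ?_⟩
        have hcast : ((p.choose k : ℕ) : Polynomial ℤ) = Polynomial.C (p:ℤ) := by
          rw [hch]
          exact (Polynomial.C_eq_natCast p).symm
        rw [hcast]
        rw [show ((p:ℤ)^2) = (p:ℤ) * p by ring, Polynomial.C_mul]
        ring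
    obtain ⟨E, hE⟩ := Finset.dvd_sum hdvd2
    exact ⟨E, by rw [hE]; ring⟩
  obtain ⟨E, hE⟩ := hbin
  -- Abar = sum of monomials over Idx
  have hAbar2 : Abar = ∑ i ∈ Idx p n, Polynomial.X ^ (c p i) := by
    rw [hAbar]
    have hterm : ∀ k ∈ range n, Polynomial.C (chi p k) * Polynomial.X^k
        = if ∃ i, k = c p i then Polynomial.X^k else 0 := by
      intro k hk
      rw [chi]
      split
      · simp
      · simp
    rw [Finset.sum_congr rfl hterm, ← Finset.sum_filter]
    have hset : (range n).filter (fun k => ∃ i, k = c p i) = (Idx p n).image (c p) := by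
      ext k
      constructor
      · intro hk
        rw [mem_filter, mem_range] at hk
        obtain ⟨hkn, i, rfl⟩ := hk
        refine mem_image.mpr ⟨i, ?_, rfl⟩
        rw [Idx, mem_filter, mem_range]
        exact ⟨lt_of_le_of_lt (le_c p hp1 i) hkn, hkn⟩
      · intro hk
        obtain ⟨i, hi, rfl⟩ := mem_image.mp hk
        rw [Idx, mem_filter, mem_range] at hi
        rw [mem_filter, mem_range]
        exact ⟨hi.2, i, rfl⟩
    rw [hset, Finset.sum_image]
    intro i _ j _ hij
    exact (c_strictMono p hp1).injective hij
  -- multinomial expansion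
  have hmult : (Abar^p).coeff (n-1) = ∑ k ∈ Sset p n, (Nat.multinomial (Idx p n) k : ℤ) := by
    rw [hAbar2, Finset.sum_pow_eq_sum_piAntidiag, Polynomial.finset_sum_coeff]
    have hterm : ∀ k ∈ (Idx p n).piAntidiag p,
        ((Nat.multinomial (Idx p n) k : Polynomial ℤ) * ∏ i ∈ Idx p n, (Polynomial.X ^ (c p i)) ^ k i).coeff (n-1)
        = if ∑ i ∈ Idx p n, k i * c p i = n - 1 then (Nat.multinomial (Idx p n) k : ℤ) else 0 := by
      intro k hk
      have hprod : ∏ i ∈ Idx p n, (Polynomial.X ^ (c p i) : Polynomial ℤ) ^ k i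
          = Polynomial.X ^ (∑ i ∈ Idx p n, k i * c p i) := by
        have : ∀ i ∈ Idx p n, (Polynomial.X ^ (c p i) : Polynomial ℤ) ^ k i
            = Polynomial.X ^ (k i * c p i) := by
          intro i _
          rw [← pow_mul, Nat.mul_comm]
        rw [Finset.prod_congr rfl this, Finset.prod_pow_eq_pow_sum]
      rw [hprod]
      have hcast : ((Nat.multinomial (Idx p n) k : ℕ) : Polynomial ℤ)
          = Polynomial.C ((Nat.multinomial (Idx p n) k : ℤ)) :=
        (Polynomial.C_eq_natCast _).symm
      rw [hcast, Polynomial.coeff_C_mul, Polynomial.coeff_X_pow]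
      rcases eq_or_ne (∑ i ∈ Idx p n, k i * c p i) (n-1) with hcc | hcc
      · simp [hcc]
      · simp [hcc, Ne.symm hcc]
    rw [Finset.sum_congr rfl hterm, ← Finset.sum_filter]
    rfl
  refine ⟨E.coeff (n-1), ?_⟩
  rw [h1, h2, h2', hE, Polynomial.coeff_add, hmult, Polynomial.coeff_C_mul]


lemma mem_Sset_iff (p n : ℕ) (hp : 2 ≤ p) (hn : 1 ≤ n) (k : ℕ → ℕ) :
    k ∈ Sset p n ↔ (∀ i, k i ≠ 0 → i ∈ Idx p n) ∧ (∑ i ∈ Idx p n, k i = p) ∧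
      (∑ i ∈ Idx p n, k i * p^i = n * (p-1) + 1) := by
  rw [Sset, mem_filter, mem_piAntidiag]
  have key : ∑ i ∈ Idx p n, k i * p^i
      = (p-1) * (∑ i ∈ Idx p n, k i * c p i) + ∑ i ∈ Idx p n, k i := by
    rw [Finset.mul_sum, ← Finset.sum_add_distrib]
    apply Finset.sum_congr rfl
    intro i _
    have hc := c_mul p (by omega) i
    calc k i * p^i = k i * ((p-1) * c p i + 1) := by rw [hc]
      _ = (p-1) * (k i * c p i) + k i := by ring
  constructor
  · rintro ⟨⟨hsum, hsupp⟩, hw⟩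
    refine ⟨hsupp, hsum, ?_⟩
    rw [key, hsum, hw]
    exact (aux_arith p n (n-1) hp hn).mpr rfl
  · rintro ⟨hsupp, hsum, hw⟩
    refine ⟨⟨hsum, hsupp⟩, ?_⟩
    rw [key, hsum] at hw
    exact (aux_arith p n _ hp hn).mp hw

/-- any member of `Sset` either has a digit equal to `p` (forcing `M = p^(u+1)`),
or all digits `< p`. -/
lemma cancel_pm1 (p n x : ℕ) (hp : 2 ≤ p) (h : (p-1) * x + 1 = n * (p-1) + 1) : x = n := by
  have h1 : ((p:ℤ)-1) * x = n * ((p:ℤ)-1) := by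
    zify [show 1 ≤ p by omega] at h
    linarith
  have hfac : ((p:ℤ)-1) * ((x:ℤ) - n) = 0 := by linear_combination h1
  rcases mul_eq_zero.mp hfac with h2 | h2
  · exfalso
    have : (p:ℤ) = 1 := by linarith
    have : p = 1 := by exact_mod_cast this
    omega
  · omega

lemma Sset_case1 (p n : ℕ) (hp : p.Prime) (hn : 1 ≤ n) (i0 : ℕ) (hi0 : 1 ≤ i0)
    (hM : n * (p-1) + 1 = p^i0) :
    Sset p n = {fun j => if j = i0 - 1 then p else 0} := by
  have hp2 := hp.two_le
  have hcn : c p i0 = n := by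
    apply cancel_pm1 p n _ hp2
    rw [c_mul p (by omega) i0, ← hM]
  obtain ⟨i1, rfl⟩ : ∃ i1, i0 = i1 + 1 := ⟨i0 - 1, by omega⟩
  have hcsucc : p * c p i1 + 1 = n := by rw [← c_succ]; exact hcn
  have hci1 : c p i1 < n := by
    have : c p i1 ≤ p * c p i1 := Nat.le_mul_of_pos_left _ (by omega)
    omega
  have hu0 : i1 ∈ Idx p n := by
    rw [Idx, mem_filter, mem_range]
    exact ⟨lt_of_le_of_lt (le_c p (by omega) i1) hci1, hci1⟩
  have hs : i1 + 1 - 1 = i1 := by omega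
  rw [hs]
  apply Finset.eq_singleton_iff_unique_mem.mpr
  constructor
  · -- membership
    rw [mem_Sset_iff p n hp2 hn]
    refine ⟨?_, ?_, ?_⟩
    · intro i hi
      by_cases h : i = i1
      · rwa [h]
      · simp [h] at hi
    · rw [Finset.sum_ite_eq' (Idx p n) i1 (fun _ => p), if_pos hu0]
    · have : ∀ i ∈ Idx p n, (if i = i1 then p else 0) * p^i
          = if i = i1 then p^(i1+1) else 0 := by
        intro i _
        split
        · rename_i h; subst h; rw [pow_succ]; ring
        · ring
      rw [Finset.sum_congr rfl this, Finset.sum_ite_eq' (Idx p n) i1 (fun _ => p^(i1+1)),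
        if_pos hu0, hM]
  · -- uniqueness
    intro k hk
    rw [mem_Sset_iff p n hp2 hn] at hk
    obtain ⟨hsupp, hsum, hw⟩ := hk
    by_cases hcase : ∃ u ∈ Idx p n, k u = p
    · obtain ⟨u, hu, hku⟩ := hcase
      have herase : ∑ v ∈ (Idx p n).erase u, k v = 0 := by
        have := Finset.add_sum_erase (Idx p n) k hu
        omega
      have hzero : ∀ v ∈ (Idx p n).erase u, k v = 0 := by
        intro v hv
        exact (Finset.sum_eq_zero_iff.mp herase) v hv
      have hwu : ∑ i ∈ Idx p n, k i * p^i = p^(u+1) := by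
        rw [← Finset.add_sum_erase (Idx p n) (fun i => k i * p^i) hu, hku]
        rw [Finset.sum_eq_zero, pow_succ]
        · ring
        · intro v hv
          rw [hzero v hv, zero_mul]
      have hpow : p^(u+1) = p^(i1+1) := by rw [← hwu, hw, hM]
      have hui : u = i1 := by
        have := Nat.pow_right_injective hp2 hpow
        omega
      subst hui
      funext j
      by_cases hj : j = u
      · subst hj; simp [hku]
      · simp only [if_neg hj]
        by_cases hjI : j ∈ Idx p n
        · exact hzero j (Finset.mem_erase.mpr ⟨hj, hjI⟩)
        · by_contra hne
          exact hjI (hsupp j hne)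
    · -- all digits < p : impossible
      exfalso
      push_neg at hcase
      have hklt : ∀ u, k u < p := by
        intro u
        by_cases hu : u ∈ Idx p n
        · have h1 : k u ≤ p := by
            rw [← hsum]
            exact Finset.single_le_sum (fun i _ => Nat.zero_le _) hu
          exact lt_of_le_of_ne h1 (hcase u hu)
        · have : k u = 0 := by
            by_contra hne
            exact hu (hsupp u hne)
          omega
      set B := n + i1 + 2 with hB
      set g : ℕ → ℕ := fun v => if v = i1 + 1 then 1 else 0 with hg
      have hglt : ∀ u, g u < p := by
        intro u
        show (if u = i1 + 1 then 1 else 0) < p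
        split <;> omega
      have hIdxB : Idx p n ⊆ range B := by
        intro x hx
        rw [Idx, mem_filter, mem_range] at hx
        rw [mem_range]
        omega
      have hsumf : ∑ u ∈ range B, k u * p^u = p^(i1+1) := by
        have hz : ∀ x ∈ range B, x ∉ Idx p n → k x * p^x = 0 := by
          intro x hx hxn
          have : k x = 0 := by
            by_contra hne
            exact hxn (hsupp x hne)
          rw [this, zero_mul]
        rw [← Finset.sum_subset hIdxB hz, hw, hM]
      have hsumg : ∑ u ∈ range B, g u * p^u = p^(i1+1) := by
        have : ∀ u ∈ range B, g u * p^u = if u = i1+1 then p^(i1+1) else 0 := by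
          intro u _
          show (if u = i1 + 1 then 1 else 0) * p^u = _
          split
          · rename_i h; subst h; ring
          · ring
        rw [Finset.sum_congr rfl this, Finset.sum_ite_eq' (range B) (i1+1) (fun u => p^(i1+1)),
          if_pos (mem_range.mpr (by omega))]
      have heq := digit_unique p hp2 B k g hklt hglt (by rw [hsumf, hsumg])
      have hcontra : ∑ i ∈ Idx p n, k i ≤ 1 := by
        have : ∀ i ∈ Idx p n, k i = g i := by
          intro i hi
          exact heq i (mem_range.mp (hIdxB hi))
        rw [Finset.sum_congr rfl this]
        rw [Finset.sum_ite_eq' (Idx p n) (i1+1) (fun _ => 1)]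
        split <;> omega
      omega


section Case2
variable (p n r : ℕ) (a e : Fin r → ℕ)

/-- the digit function determined by the data `a`, `e`. -/
noncomputable def Kfun : ℕ → ℕ := fun u => ∑ j, if e j = u then a j else 0

variable (hp : Nat.Prime p) (hn : 1 ≤ n) (hr : 2 ≤ r)
  (ha : ∀ j, 0 < a j) (hcop : ∀ j, Nat.Coprime (a j) p) (hsa : (∑ j, a j) = p)
  (he : StrictAnti e) (hM : n * (p - 1) + 1 = ∑ j, a j * p ^ e j)

set_option linter.unusedSectionVars false

include hp hn hr ha hcop hsa he hM

lemma e_lt : ∀ j, e j ∈ Idx p n := by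
  have hp2 := hp.two_le
  intro j
  -- pick another index
  have : Nontrivial (Fin r) := Fin.nontrivial_iff_two_le.mpr hr
  obtain ⟨j', hj'⟩ := exists_ne j
  have hbound : a j * p ^ e j + 1 ≤ n * (p-1) + 1 := by
    rw [hM]
    have h1 : a j * p ^ e j + ∑ x ∈ univ.erase j, a x * p ^ e x = ∑ x, a x * p ^ e x :=
      Finset.add_sum_erase _ (fun x => a x * p ^ e x) (mem_univ j)
    have h2 : a j' * p ^ e j' ≤ ∑ x ∈ univ.erase j, a x * p ^ e x :=
      Finset.single_le_sum (f := fun x => a x * p ^ e x) (fun i _ => Nat.zero_le _)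
        (Finset.mem_erase.mpr ⟨hj', mem_univ j'⟩)
    have h3 : 1 ≤ a j' * p ^ e j' := Nat.mul_pos (ha j') (pow_pos (by omega) _)
    omega
  have hple : p ^ e j < n * (p-1) + 1 := by
    have h4 : 1 ≤ a j := ha j
    have h5 : p ^ e j ≤ a j * p ^ e j := Nat.le_mul_of_pos_left _ h4
    omega
  have hcc : c p (e j) < n := by
    rw [← c_mul p (by omega) (e j)] at hple
    have h6 : (p-1) * c p (e j) < (p-1) * n := by
      have : n * (p-1) = (p-1) * n := Nat.mul_comm _ _
      omega
    exact Nat.lt_of_mul_lt_mul_left h6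
  rw [Idx, mem_filter, mem_range]
  exact ⟨lt_of_le_of_lt (le_c p (by omega) (e j)) hcc, hcc⟩

lemma a_lt : ∀ j, a j < p := by
  intro j
  have h1 : a j ≤ p := by
    rw [← hsa]
    exact Finset.single_le_sum (fun i _ => Nat.zero_le _) (mem_univ j)
  rcases lt_or_eq_of_le h1 with h | h
  · exact h
  · exfalso
    have := hcop j
    rw [h] at this
    rw [Nat.Coprime, Nat.gcd_self] at this
    have := hp.two_le
    omega

lemma Kfun_e (j : Fin r) : Kfun r a e (e j) = a j := by
  rw [Kfun, Finset.sum_eq_single j]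
  · simp
  · intro j' _ hj'
    rw [if_neg]
    exact fun h => hj' (he.injective h)
  · intro h; exact absurd (mem_univ j) h

lemma Kfun_supp (u : ℕ) (hu : Kfun r a e u ≠ 0) : ∃ j, e j = u := by
  by_contra hne
  push_neg at hne
  apply hu
  rw [Kfun]
  apply Finset.sum_eq_zero
  intro j _
  rw [if_neg (hne j)]

lemma Kfun_lt (u : ℕ) : Kfun r a e u < p := by
  by_cases h : ∃ j, e j = u
  · obtain ⟨j, rfl⟩ := h
    rw [Kfun_e p n r a e hp hn hr ha hcop hsa he hM]
    exact a_lt p n r a e hp hn hr ha hcop hsa he hM j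
  · have : Kfun r a e u = 0 := by
      by_contra hne
      exact h (Kfun_supp p n r a e hp hn hr ha hcop hsa he hM _ hne)
    rw [this]
    exact hp.pos

lemma Kfun_sum (F : ℕ → ℕ) : ∑ i ∈ Idx p n, Kfun r a e i * F i = ∑ j, a j * F (e j) := by
  have h1 : ∀ i ∈ Idx p n, Kfun r a e i * F i = ∑ j, if e j = i then a j * F i else 0 := by
    intro i _
    rw [Kfun, Finset.sum_mul]
    apply Finset.sum_congr rfl
    intro j _
    split <;> ring
  rw [Finset.sum_congr rfl h1, Finset.sum_comm]
  apply Finset.sum_congr rfl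
  intro j _
  have h2 : ∀ i ∈ Idx p n, (if e j = i then a j * F i else 0) = if e j = i then a j * F (e j) else 0 := by
    intro i _
    split
    · rename_i h; rw [h]
    · rfl
  rw [Finset.sum_congr rfl h2, Finset.sum_ite_eq (Idx p n) (e j) (fun _ => a j * F (e j)),
    if_pos (e_lt p n r a e hp hn hr ha hcop hsa he hM j)]

lemma Kfun_mem : Kfun r a e ∈ Sset p n := by
  rw [mem_Sset_iff p n hp.two_le hn]
  refine ⟨?_, ?_, ?_⟩
  · intro i hi
    obtain ⟨j, rfl⟩ := Kfun_supp p n r a e hp hn hr ha hcop hsa he hM i hi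
    exact e_lt p n r a e hp hn hr ha hcop hsa he hM j
  · have := Kfun_sum p n r a e hp hn hr ha hcop hsa he hM (fun _ => 1)
    simpa [hsa] using this
  · rw [Kfun_sum p n r a e hp hn hr ha hcop hsa he hM (fun i => p^i), ← hM]

lemma Sset_case2 : Sset p n = {Kfun r a e} := by
  have hp2 := hp.two_le
  apply Finset.eq_singleton_iff_unique_mem.mpr
  refine ⟨Kfun_mem p n r a e hp hn hr ha hcop hsa he hM, ?_⟩
  intro k hk
  rw [mem_Sset_iff p n hp2 hn] at hk
  obtain ⟨hsupp, hsum, hw⟩ := hk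
  have hIdxn : ∀ i ∈ Idx p n, i < n := by
    intro i hi
    rw [Idx, mem_filter, mem_range] at hi
    exact hi.1
  have hKsum : ∑ i ∈ Idx p n, Kfun r a e i * p^i = n * (p-1) + 1 := by
    rw [Kfun_sum p n r a e hp hn hr ha hcop hsa he hM (fun i => p^i), ← hM]
  by_cases hcase : ∃ u ∈ Idx p n, k u = p
  · -- then M = p^(u+1), contradiction with K's digits
    exfalso
    obtain ⟨u, hu, hku⟩ := hcase
    have herase : ∑ v ∈ (Idx p n).erase u, k v = 0 := by
      have := Finset.add_sum_erase (Idx p n) k hu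
      omega
    have hzero : ∀ v ∈ (Idx p n).erase u, k v = 0 :=
      fun v hv => (Finset.sum_eq_zero_iff.mp herase) v hv
    have hwu : n * (p-1) + 1 = p^(u+1) := by
      rw [← hw, ← Finset.add_sum_erase (Idx p n) (fun i => k i * p^i) hu, hku,
        Finset.sum_eq_zero, pow_succ]
      · ring
      · intro v hv
        rw [hzero v hv, zero_mul]
    -- digits of K vs single digit of p^(u+1)
    set B := n + u + 2 with hB
    set g : ℕ → ℕ := fun v => if v = u + 1 then 1 else 0 with hg
    have hglt : ∀ v, g v < p := by
      intro v
      show (if v = u + 1 then 1 else 0) < p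
      split <;> omega
    have hIdxB : Idx p n ⊆ range B := by
      intro x hx
      rw [mem_range]
      have := hIdxn x hx
      omega
    have hKB : ∑ v ∈ range B, Kfun r a e v * p^v = p^(u+1) := by
      have hz : ∀ x ∈ range B, x ∉ Idx p n → Kfun r a e x * p^x = 0 := by
        intro x _ hxn
        have : Kfun r a e x = 0 := by
          by_contra hne
          obtain ⟨j, rfl⟩ := Kfun_supp p n r a e hp hn hr ha hcop hsa he hM x hne
          exact hxn (e_lt p n r a e hp hn hr ha hcop hsa he hM j)
        rw [this, zero_mul]
      rw [← Finset.sum_subset hIdxB hz, hKsum, hwu]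
    have hgB : ∑ v ∈ range B, g v * p^v = p^(u+1) := by
      have hterm : ∀ v ∈ range B, g v * p^v = if v = u+1 then p^(u+1) else 0 := by
        intro v _
        show (if v = u + 1 then 1 else 0) * p^v = _
        split
        · rename_i h; subst h; ring
        · ring
      rw [Finset.sum_congr rfl hterm, Finset.sum_ite_eq' (range B) (u+1) (fun _ => p^(u+1)),
        if_pos (mem_range.mpr (by omega))]
    have heq := digit_unique p hp2 B (Kfun r a e) g
      (fun v => Kfun_lt p n r a e hp hn hr ha hcop hsa he hM v) hglt (by rw [hKB, hgB])
    -- two distinct positive positions of K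
    obtain ⟨j0, hj0v⟩ : ∃ j0 : Fin r, (j0:ℕ) = 0 := ⟨⟨0, by omega⟩, rfl⟩
    obtain ⟨j1, hj1v⟩ : ∃ j1 : Fin r, (j1:ℕ) = 1 := ⟨⟨1, by omega⟩, rfl⟩
    have hj01 : j0 ≠ j1 := by
      intro h
      rw [h] at hj0v
      omega
    have he0 : e j0 < B := by
      have := hIdxn _ (e_lt p n r a e hp hn hr ha hcop hsa he hM j0)
      omega
    have he1 : e j1 < B := by
      have := hIdxn _ (e_lt p n r a e hp hn hr ha hcop hsa he hM j1)
      omega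
    have hK0 : Kfun r a e (e j0) = g (e j0) := heq _ he0
    have hK1 : Kfun r a e (e j1) = g (e j1) := heq _ he1
    rw [Kfun_e p n r a e hp hn hr ha hcop hsa he hM] at hK0 hK1
    have hg0 : e j0 = u + 1 := by
      by_contra hne
      rw [hg] at hK0
      simp only [if_neg hne] at hK0
      have := ha j0
      omega
    have hg1 : e j1 = u + 1 := by
      by_contra hne
      rw [hg] at hK1
      simp only [if_neg hne] at hK1
      have := ha j1
      omega
    exact hj01 (he.injective (hg0.trans hg1.symm))
  · -- all digits < p, so k = K by digit uniqueness
    push_neg at hcase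
    have hklt : ∀ u, k u < p := by
      intro u
      by_cases hu : u ∈ Idx p n
      · have h1 : k u ≤ p := by
          rw [← hsum]
          exact Finset.single_le_sum (fun i _ => Nat.zero_le _) hu
        exact lt_of_le_of_ne h1 (hcase u hu)
      · have : k u = 0 := by
          by_contra hne
          exact hu (hsupp u hne)
        omega
    have hIdxB : Idx p n ⊆ range n := by
      intro x hx
      exact mem_range.mpr (hIdxn x hx)
    have hkB : ∑ v ∈ range n, k v * p^v = n * (p-1) + 1 := by
      have hz : ∀ x ∈ range n, x ∉ Idx p n → k x * p^x = 0 := by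
        intro x _ hxn
        have : k x = 0 := by
          by_contra hne
          exact hxn (hsupp x hne)
        rw [this, zero_mul]
      rw [← Finset.sum_subset hIdxB hz, hw]
    have hKB : ∑ v ∈ range n, Kfun r a e v * p^v = n * (p-1) + 1 := by
      have hz : ∀ x ∈ range n, x ∉ Idx p n → Kfun r a e x * p^x = 0 := by
        intro x _ hxn
        have : Kfun r a e x = 0 := by
          by_contra hne
          obtain ⟨j, rfl⟩ := Kfun_supp p n r a e hp hn hr ha hcop hsa he hM x hne
          exact hxn (e_lt p n r a e hp hn hr ha hcop hsa he hM j)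
        rw [this, zero_mul]
      rw [← Finset.sum_subset hIdxB hz, hKsum]
    have heq := digit_unique p hp2 n k (Kfun r a e) hklt
      (fun v => Kfun_lt p n r a e hp hn hr ha hcop hsa he hM v) (by rw [hkB, hKB])
    funext v
    by_cases hv : v < n
    · exact heq v hv
    · -- both are zero
      have h1 : k v = 0 := by
        by_contra hne
        have := hIdxn v (hsupp v hne)
        omega
      have h2 : Kfun r a e v = 0 := by
        by_contra hne
        obtain ⟨j, rfl⟩ := Kfun_supp p n r a e hp hn hr ha hcop hsa he hM v hne
        have := hIdxn _ (e_lt p n r a e hp hn hr ha hcop hsa he hM j)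
        omega
      rw [h1, h2]

lemma multinomial_case2 : Nat.multinomial (Idx p n) (Kfun r a e) = Nat.multinomial univ a := by
  have hs1 := Nat.multinomial_spec (Idx p n) (Kfun r a e)
  have hs2 := Nat.multinomial_spec (univ : Finset (Fin r)) a
  have hsum1 : ∑ i ∈ Idx p n, Kfun r a e i = p := by
    have := Kfun_sum p n r a e hp hn hr ha hcop hsa he hM (fun _ => 1)
    simp only [mul_one] at this
    rw [this, hsa]
  have himg : (univ : Finset (Fin r)).image e ⊆ Idx p n := by
    intro x hx
    obtain ⟨j, _, rfl⟩ := mem_image.mp hx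
    exact e_lt p n r a e hp hn hr ha hcop hsa he hM j
  have hprod : ∏ i ∈ Idx p n, Nat.factorial (Kfun r a e i) = ∏ j, Nat.factorial (a j) := by
    rw [← Finset.prod_subset himg]
    · rw [Finset.prod_image]
      · apply Finset.prod_congr rfl
        intro j _
        rw [Kfun_e p n r a e hp hn hr ha hcop hsa he hM]
      · intro i _ j _ hij
        exact he.injective hij
    · intro x _ hxn
      have : Kfun r a e x = 0 := by
        by_contra hne
        obtain ⟨j, rfl⟩ := Kfun_supp p n r a e hp hn hr ha hcop hsa he hM x hne
        exact hxn (mem_image.mpr ⟨j, mem_univ j, rfl⟩)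
      rw [this]
      rfl
  rw [hsum1] at hs1
  rw [hsa] at hs2
  rw [hprod] at hs1
  have hpos : 0 < ∏ j, Nat.factorial (a j) := Finset.prod_pos (fun j _ => Nat.factorial_pos _)
  exact Nat.eq_of_mul_eq_mul_left hpos (hs1.trans hs2.symm)

end Case2


lemma Sset_case3 (p n : ℕ) (hp : p.Prime) (hn : 1 ≤ n)
    (hni : ¬ ∃ i : ℕ, 1 ≤ i ∧ n * (p - 1) + 1 = p ^ i)
    (hnii : ¬ ∃ (r : ℕ) (a e : Fin r → ℕ), 2 ≤ r ∧ (∀ j, 0 < a j) ∧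
        (∀ j, Nat.Coprime (a j) p) ∧ (∑ j, a j) = p ∧ StrictAnti e ∧
        n * (p - 1) + 1 = ∑ j, a j * p ^ e j) :
    Sset p n = ∅ := by
  have hp2 := hp.two_le
  rw [Finset.eq_empty_iff_forall_notMem]
  intro k hk
  rw [mem_Sset_iff p n hp2 hn] at hk
  obtain ⟨hsupp, hsum, hw⟩ := hk
  by_cases hcase : ∃ u ∈ Idx p n, k u = p
  · obtain ⟨u, hu, hku⟩ := hcase
    have herase : ∑ v ∈ (Idx p n).erase u, k v = 0 := by
      have := Finset.add_sum_erase (Idx p n) k hu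
      omega
    have hzero : ∀ v ∈ (Idx p n).erase u, k v = 0 :=
      fun v hv => (Finset.sum_eq_zero_iff.mp herase) v hv
    have hwu : n * (p-1) + 1 = p^(u+1) := by
      rw [← hw, ← Finset.add_sum_erase (Idx p n) (fun i => k i * p^i) hu, hku,
        Finset.sum_eq_zero, pow_succ]
      · ring
      · intro v hv
        rw [hzero v hv, zero_mul]
    exact hni ⟨u+1, by omega, hwu⟩
  · push_neg at hcase
    have hklt : ∀ u, k u < p := by
      intro u
      by_cases hu : u ∈ Idx p n
      · have h1 : k u ≤ p := by
          rw [← hsum]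
          exact Finset.single_le_sum (fun i _ => Nat.zero_le _) hu
        exact lt_of_le_of_ne h1 (hcase u hu)
      · have : k u = 0 := by
          by_contra hne
          exact hu (hsupp u hne)
        omega
    set s' : Finset ℕ := (Idx p n).filter (fun u => k u ≠ 0) with hs'
    have hsum' : ∀ F : ℕ → ℕ, (∀ u, k u ≠ 0 → F u ≠ 0 → True) →
        ∑ x ∈ s', k x * F x = ∑ x ∈ Idx p n, k x * F x := by
      intro F _
      apply Finset.sum_subset (Finset.filter_subset _ _)
      intro x hx hxn
      simp only [hs', mem_filter] at hxn
      have : k x = 0 := by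
        by_contra hne
        exact hxn ⟨hx, hne⟩
      rw [this, zero_mul]
    have hsum'' : ∑ x ∈ s', k x = ∑ x ∈ Idx p n, k x := by
      apply Finset.sum_subset (Finset.filter_subset _ _)
      intro x hx hxn
      simp only [hs', mem_filter] at hxn
      by_contra hne
      exact hxn ⟨hx, hne⟩
    set r := s'.card with hr
    have hr2 : 2 ≤ r := by
      rcases Nat.lt_or_ge r 2 with h | h
      · exfalso
        interval_cases r
        · have hcard : s' = ∅ := Finset.card_eq_zero.mp hr.symm
          have h0 : ∑ x ∈ (∅ : Finset ℕ), k x = ∑ x ∈ Idx p n, k x := by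
            rw [← hcard]; exact hsum''
          simp only [Finset.sum_empty] at h0
          omega
        · obtain ⟨x, hx⟩ := Finset.card_eq_one.mp hr.symm
          have hx1 : ∑ y ∈ s', k y = k x := by rw [hx, Finset.sum_singleton]
          rw [hsum'', hsum] at hx1
          exact absurd hx1.symm (Nat.ne_of_lt (hklt x))
      · exact h
    set iso := s'.orderIsoOfFin hr.symm with hiso
    set e : Fin r → ℕ := fun j => (iso j.rev : ℕ) with he'
    set a : Fin r → ℕ := fun j => k (e j) with ha'
    have hanti : StrictAnti e := by
      intro j j' hjj
      show ((iso j'.rev : ℕ)) < ((iso j.rev : ℕ))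
      have hrev : j'.rev < j.rev := by
        rw [Fin.rev_lt_rev]
        exact hjj
      exact_mod_cast iso.strictMono hrev
    have hmem : ∀ j, e j ∈ s' := fun j => (iso j.rev).2
    have hsum_e : ∀ F : ℕ → ℕ, ∑ j, F (e j) = ∑ x ∈ s', F x := by
      intro F
      have h1 : ∑ j : Fin r, F (e j) = ∑ j : Fin r, F (iso j) := by
        apply Fintype.sum_bijective Fin.rev (Fin.rev_involutive.bijective)
        intro j
        rfl
      rw [h1]
      have h2 : ∑ j : Fin r, F ((iso j : ℕ)) = ∑ x : s', F x :=
        Fintype.sum_equiv iso.toEquiv _ _ (fun j => rfl)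
      rw [h2]
      exact Finset.sum_coe_sort s' F
    refine hnii ⟨r, a, e, hr2, ?_, ?_, ?_, hanti, ?_⟩
    · intro j
      have := hmem j
      simp only [hs', mem_filter] at this
      have h2 := this.2
      show 0 < k (e j)
      omega
    · intro j
      show Nat.Coprime (k (e j)) p
      have hpos : 0 < k (e j) := by
        have := hmem j
        simp only [hs', mem_filter] at this
        omega
      have hnd : ¬ p ∣ k (e j) := by
        intro hdvd
        have := Nat.le_of_dvd hpos hdvd
        have := hklt (e j)
        omega
      exact Nat.coprime_comm.mp ((Nat.Prime.coprime_iff_not_dvd hp).mpr hnd)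
    · show ∑ j, k (e j) = p
      rw [hsum_e k, hsum'', hsum]
    · show n * (p-1) + 1 = ∑ j, k (e j) * p ^ (e j)
      have h4 := hsum_e (fun x => k x * p ^ x)
      rw [h4, hsum' (fun x => p^x) (fun _ _ _ => trivial), hw]


lemma multinomial_single (s : Finset ℕ) (u p : ℕ) :
    Nat.multinomial s (fun j => if j = u then p else 0) = 1 := by
  have hspec := Nat.multinomial_spec s (fun j => if j = u then p else 0)
  have hsum : ∑ i ∈ s, (if i = u then p else 0) = if u ∈ s then p else 0 :=
    Finset.sum_ite_eq' s u (fun _ => p)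
  have hprod : ∏ i ∈ s, Nat.factorial (if i = u then p else 0)
      = if u ∈ s then Nat.factorial p else 1 := by
    have h1 : ∀ i ∈ s, Nat.factorial (if i = u then p else 0)
        = if i = u then Nat.factorial p else 1 := by
      intro i _
      split <;> rfl
    rw [Finset.prod_congr rfl h1]
    exact Finset.prod_ite_eq' s u (fun _ => Nat.factorial p)
  rw [hsum, hprod] at hspec
  by_cases hu : u ∈ s
  · rw [if_pos hu, if_pos hu] at hspec
    exact Nat.eq_of_mul_eq_mul_left (Nat.factorial_pos p) (by omega)
  · rw [if_neg hu, if_neg hu] at hspec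
    simpa using hspec

end FussAux

open FussAux in
/-- The congruences modulo `p²` for the Fuß–Catalan numbers `F(n;p)`:
(i) if `n = (p^i − 1)/(p−1)` with `i ≥ 1` (i.e. `n(p−1) + 1 = p^i`), then
`F(n;p) ≡ 1 (mod p²)`;
(ii) if `n(p−1) + 1 = a_1 p^{i_1} + … + a_r p^{i_r}` with `r ≥ 2`, all `a_j` positive
and relatively prime to `p`, `a_1 + … + a_r = p`, and `i_1 > … > i_r ≥ 0`, then
`F(n;p) ≡ p!/(a_1!⋯a_r!) (mod p²)`;
(iii) in all other cases `p² ∣ F(n;p)`. -/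
theorem stmt_17 (p : ℕ) (hp : p.Prime) (n : ℕ) (hn : 1 ≤ n) :
    ((∃ i : ℕ, 1 ≤ i ∧ n * (p - 1) + 1 = p ^ i) →
      FussCatalan n p ≡ 1 [MOD p ^ 2]) ∧
    (∀ r : ℕ, 2 ≤ r → ∀ a e : Fin r → ℕ,
      (∀ j, 0 < a j) → (∀ j, Nat.Coprime (a j) p) → (∑ j, a j) = p → StrictAnti e →
      n * (p - 1) + 1 = ∑ j, a j * p ^ e j →
      FussCatalan n p ≡ Nat.multinomial Finset.univ a [MOD p ^ 2]) ∧
    ((¬ ∃ i : ℕ, 1 ≤ i ∧ n * (p - 1) + 1 = p ^ i) →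
      (¬ ∃ (r : ℕ) (a e : Fin r → ℕ), 2 ≤ r ∧ (∀ j, 0 < a j) ∧
        (∀ j, Nat.Coprime (a j) p) ∧ (∑ j, a j) = p ∧ StrictAnti e ∧
        n * (p - 1) + 1 = ∑ j, a j * p ^ e j) →
      p ^ 2 ∣ FussCatalan n p) := by
  have hp1 : 1 ≤ p := hp.two_le.trans' (by omega)
  have hF : ((FussCatalan n p : ℕ) : ℤ) = w p 1 n := fuss_eq_w p hp1 n hn
  obtain ⟨T, hT⟩ := master p hp n hn
  refine ⟨?_, ?_, ?_⟩
  · rintro ⟨i0, hi0, hM⟩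
    have hSet := Sset_case1 p n hp hn i0 hi0 hM
    rw [hSet, Finset.sum_singleton, multinomial_single] at hT
    rw [Nat.modEq_iff_dvd]
    refine ⟨-T, ?_⟩
    push_cast
    rw [hF, hT]
    push_cast
    ring
  · intro r hr a e ha hcop hsa he hM
    have hSet := Sset_case2 p n r a e hp hn hr ha hcop hsa he hM
    have hmn := multinomial_case2 p n r a e hp hn hr ha hcop hsa he hM
    rw [hSet, Finset.sum_singleton, hmn] at hT
    rw [Nat.modEq_iff_dvd]
    refine ⟨-T, ?_⟩
    push_cast
    rw [hF, hT]
    push_cast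
    ring
  · intro hni hnii
    have hSet := Sset_case3 p n hp hn hni hnii
    rw [hSet, Finset.sum_empty, zero_add] at hT
    have : ((p^2 : ℕ) : ℤ) ∣ ((FussCatalan n p : ℕ) : ℤ) := by
      rw [hF, hT]
      exact ⟨T, by push_cast; ring⟩
    exact_mod_cast this
end

section
/- Let p be an odd prime and α a non-negative integer. Then there exist Laurent polynomials a_0(w), a_1(w), …, a_{p^{α+1}−1}(w) with integer coefficients such that, in the ring of formal Laurent series over ℤ/p^{p^α}ℤ in the variable w (which represents z^{1/(p−1)}, i.e. z = w^{p−1}), (p+1)/2 + Σ_{n≥1} B(n;p) · w^{(p−1)n} = Σ_{i=0}^{p^{α+1}−1} a_i(w) · Φ(w)^i, where Φ(w) = Σ_{n≥0} w^{p^n}. In other words, the blossom-tree generating function B_p(z) = (p+1)/2 + Σ_{n≥1} B(n;p) z^n, reduced modulo p^{p^α}, can be expressed as a polynomial in Φ(z^{1/(p−1)}) of degree at most p^{α+1} − 1, with coefficients that are Laurent polynomials in z^{1/(p−1)} over the integers. -/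
open PowerSeries
open scoped Classical

/-- The number of blossom trees:
`B(n;k) = ((k+1)/(n((k−1)n+2)))·C(kn, n−1)`. -/
def BlossomTree (n k : ℕ) : ℕ :=
  (k + 1) * Nat.choose (k * n) (n - 1) / (n * ((k - 1) * n + 2))

/-- `Φ(w) = Σ_{n≥0} w^{p^n}` as a formal power series over `ℤ`. -/
noncomputable def Phi (p : ℕ) : PowerSeries ℤ :=
  PowerSeries.mk fun m => if ∃ n : ℕ, m = p ^ n then 1 else 0

/-- The blossom-tree generating function `B_p(z) = (p+1)/2 + Σ_{n≥1} B(n;p) zⁿ`,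
written in the variable `w = z^{1/(p−1)}`, i.e.
`(p+1)/2 + Σ_{n≥1} B(n;p) w^{(p−1)n}`. -/
noncomputable def BlossomSeries (p : ℕ) : PowerSeries ℤ :=
  PowerSeries.mk fun m =>
    if m = 0 then (((p + 1) / 2 : ℕ) : ℤ)
    else if (p - 1) ∣ m then (BlossomTree (m / (p - 1)) p : ℤ) else 0

noncomputable def fseq (p : ℕ) : ℕ → PowerSeries ℤ
  | 0 => 0
  | k+1 => X + (fseq p k)^p

noncomputable def useries (p : ℕ) : PowerSeries ℤ :=
  PowerSeries.mk fun m => coeff m (fseq p (m+1))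

section
variable {p : ℕ}

lemma X_dvd_fseq (hp : 2 ≤ p) (k : ℕ) : (X : PowerSeries ℤ) ∣ fseq p k := by
  induction k with
  | zero => exact dvd_zero _
  | succ k ih =>
    show (X : PowerSeries ℤ) ∣ X + (fseq p k)^p
    exact dvd_add dvd_rfl (Dvd.dvd.trans ih (dvd_pow_self _ (by omega)))

lemma fseq_stab (hp : 2 ≤ p) (k : ℕ) : (X : PowerSeries ℤ)^(k+1) ∣ fseq p (k+1) - fseq p k := by
  induction k with
  | zero =>
    have : fseq p 1 - fseq p 0 = X := by
      show (X + (fseq p 0)^p) - fseq p 0 = X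
      show (X + (0 : PowerSeries ℤ)^p) - 0 = X
      rw [zero_pow (by omega : p ≠ 0)]; ring
    rw [this, pow_one]
  | succ k ih =>
    show (X : PowerSeries ℤ)^(k+2) ∣ (X + (fseq p (k+1))^p) - (X + (fseq p k)^p)
    have h1 : (X + (fseq p (k+1))^p) - (X + (fseq p k)^p)
        = (∑ i ∈ Finset.range p, (fseq p (k+1))^i * (fseq p k)^(p-1-i)) * (fseq p (k+1) - fseq p k) := by
      rw [geom_sum₂_mul]; ring
    rw [h1, pow_succ, mul_comm ((X:PowerSeries ℤ)^(k+1)) X]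
    apply mul_dvd_mul _ ih
    apply Finset.dvd_sum
    intro i hi
    rcases Nat.eq_zero_or_pos i with h0 | h0
    · subst h0
      simp only [pow_zero, one_mul]
      exact (X_dvd_fseq hp k).trans (dvd_pow_self _ (by simp at hi; omega))
    · exact Dvd.dvd.mul_right ((X_dvd_fseq hp (k+1)).trans (dvd_pow_self _ (by omega))) _

lemma coeff_fseq_stable (hp : 2 ≤ p) {m j k : ℕ} (hmj : m < j) (hjk : j ≤ k) :
    coeff m (fseq p j) = coeff m (fseq p k) := by
  induction k with
  | zero => omega
  | succ k ih =>
    rcases Nat.lt_or_ge j (k+1) with h | h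
    · have hj : j ≤ k := by omega
      rw [ih hj]
      have := fseq_stab hp k
      have h0 : coeff m (fseq p (k+1) - fseq p k) = 0 :=
        PowerSeries.X_pow_dvd_iff.mp this m (by omega)
      simp only [map_sub] at h0
      omega
    · have : j = k+1 := by omega
      subst this; rfl

lemma coeff_useries (hp : 2 ≤ p) {m k : ℕ} (hmk : m < k) :
    coeff m (useries p) = coeff m (fseq p k) := by
  rw [useries, PowerSeries.coeff_mk]
  exact coeff_fseq_stable hp (by omega) (by omega)

lemma X_pow_dvd_sub_fseq (hp : 2 ≤ p) (k : ℕ) :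
    (X : PowerSeries ℤ)^k ∣ useries p - fseq p k := by
  rw [PowerSeries.X_pow_dvd_iff]
  intro m hm
  rw [map_sub, coeff_useries hp hm, sub_self]

lemma useries_eq (hp : 2 ≤ p) : useries p = X + (useries p)^p := by
  ext m
  rw [coeff_useries hp (Nat.lt_succ_of_lt (Nat.lt_succ_self m))]
  show coeff m (X + (fseq p (m+1))^p) = coeff m (X + (useries p)^p)
  rw [map_add, map_add]
  congr 1
  have hdvd : (X : PowerSeries ℤ)^(m+1) ∣ (useries p)^p - (fseq p (m+1))^p :=
    (X_pow_dvd_sub_fseq hp (m+1)).trans (sub_dvd_pow_sub_pow _ _ p)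
  have h0 : coeff m ((useries p)^p - (fseq p (m+1))^p) = 0 :=
    PowerSeries.X_pow_dvd_iff.mp hdvd m (by omega)
  simp only [map_sub] at h0
  omega

lemma constantCoeff_useries (hp : 2 ≤ p) : constantCoeff (useries p) = 0 := by
  have h : coeff 0 (useries p) = coeff 0 (fseq p 1) := coeff_useries hp (by omega)
  have h2 : fseq p 1 = X := by
    show X + (fseq p 0)^p = X
    show X + (0 : PowerSeries ℤ)^p = X
    rw [zero_pow (by omega : p ≠ 0)]; ring
  rw [h2] at h
  simpa using h

lemma X_dvd_useries (hp : 2 ≤ p) : (X : PowerSeries ℤ) ∣ useries p := by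
  rw [PowerSeries.X_dvd_iff]; exact constantCoeff_useries hp

end

def Fc (p j m : ℕ) : ℤ :=
  if j ≤ m ∧ (p-1) ∣ (m-j) then
    ((p*((m-j)/(p-1))+j).choose ((m-j)/(p-1)) : ℤ)
      - p * (if (m-j)/(p-1) = 0 then 0 else (((p*((m-j)/(p-1))+j-1).choose ((m-j)/(p-1)-1) : ℕ) : ℤ))
  else 0

section
variable {p : ℕ}

lemma Fc_zero_of_lt {j m : ℕ} (h : m < j) : Fc p j m = 0 := by
  rw [Fc, if_neg]; omega

lemma Fc_eval0 {P : ℕ} (hP : 1 ≤ P) (j : ℕ) : Fc (P+1) j j = 1 := by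
  have h1 : P + 1 - 1 = P := by omega
  have h2 : j - j = 0 := by omega
  rw [Fc, if_pos ⟨le_rfl, by rw [h2]; exact dvd_zero _⟩, h1, h2]
  simp

lemma Fc_evalS {P : ℕ} (hP : 1 ≤ P) (j N : ℕ) :
    Fc (P+1) j (P*N+P+j)
      = ((P*N+P+N+1+j).choose (N+1) : ℤ) - (P+1) * ((P*N+P+N+j).choose N : ℤ) := by
  have h1 : P + 1 - 1 = P := by omega
  have h2 : P*N+P+j - j = P*(N+1) := by ring_nf; omega
  have h3 : (P*(N+1))/P = N+1 := Nat.mul_div_cancel_left _ (by omega)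
  rw [Fc, if_pos ⟨by omega, by rw [h1, h2]; exact Dvd.intro _ rfl⟩, h1, h2, h3]
  rw [if_neg (by omega)]
  have e0 : (P+1)*(N+1)+j-1 = P*N+P+N+j := by
    have : (P+1)*(N+1)+j = P*N+P+N+j+1 := by ring
    omega
  rw [e0, show (P+1)*(N+1)+j = P*N+P+N+1+j by ring, show N+1-1 = N by omega]
  push_cast
  ring

lemma choose_mul_eq {P : ℕ} (hP : 1 ≤ P) (N : ℕ) :
    ((P*N+P+N+1).choose (N+1) : ℤ) = (P+1) * ((P*N+P+N).choose N : ℕ) := by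
  have h := Nat.add_one_mul_choose_eq (P*N+P+N) N
  -- h : (P*N+P+N+1) * choose (P*N+P+N) N = choose (P*N+P+N+1) (N+1) * (N+1)
  have h' : (P*N+P+N).succ * (P*N+P+N).choose N = (P*N+P+N).succ.choose N.succ * N.succ := h
  have e : (P*N+P+N).succ = P*N+P+N+1 := rfl
  have key : ((P+1)*(N+1)) * (P*N+P+N).choose N = (P*N+P+N+1).choose (N+1) * (N+1) := by
    rw [show (P+1)*(N+1) = P*N+P+N+1 by ring]
    exact h'
  have key2 : ((P+1) * ((P*N+P+N).choose N)) * (N+1) = (P*N+P+N+1).choose (N+1) * (N+1) := by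
    rw [← key]; ring
  have h3 := Nat.eq_of_mul_eq_mul_right (by omega : 0 < N+1) key2
  exact_mod_cast h3.symm

lemma Fc_zero (hp : 2 ≤ p) (m : ℕ) : Fc p 0 m = if m = 0 then 1 else 0 := by
  obtain ⟨P, rfl⟩ : ∃ P, p = P + 1 := ⟨p-1, by omega⟩
  have hP : 1 ≤ P := by omega
  rcases Nat.eq_zero_or_pos m with h | h
  · subst h; rw [if_pos rfl]; exact Fc_eval0 hP 0
  · rw [if_neg (by omega)]
    by_cases hd : P ∣ m
    · obtain ⟨n, rfl⟩ := hd
      have hn : n ≠ 0 := by rintro rfl; simp at h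
      obtain ⟨N, rfl⟩ : ∃ N, n = N + 1 := ⟨n-1, by omega⟩
      have hFc := Fc_evalS hP 0 N
      rw [show P*N+P+0 = P*(N+1) by ring] at hFc
      rw [hFc]
      have key := choose_mul_eq hP N
      rw [show P*N+P+N+1+0 = P*N+P+N+1 by ring, show P*N+P+N+0 = P*N+P+N by ring]
      omega
    · rw [Fc, if_neg (by
        rw [show P+1-1 = P by omega]
        rintro ⟨-, h2⟩
        rw [Nat.sub_zero] at h2
        exact hd h2)]

lemma Fc_rec (hp : 2 ≤ p) {j m : ℕ} (hj : 1 ≤ j) (hm : 1 ≤ m) :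
    Fc p j m = Fc p (j-1) (m-1) + Fc p (j+p-1) m := by
  obtain ⟨P, rfl⟩ : ∃ P, p = P + 1 := ⟨p-1, by omega⟩
  have hP : 1 ≤ P := by omega
  obtain ⟨J, rfl⟩ : ∃ J, j = J + 1 := ⟨j-1, by omega⟩
  simp only [Nat.add_sub_cancel, show J+1+(P+1)-1 = J+P+1 by omega]
  by_cases hc : J+1 ≤ m ∧ P ∣ (m-(J+1))
  · obtain ⟨hjm, n, hn⟩ := hc
    rcases Nat.eq_zero_or_pos n with h0 | h0
    · have hmj : m = J + 1 := by
        subst h0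
        simp only [Nat.mul_zero] at hn
        omega
      subst hmj
      simp only [Nat.add_sub_cancel]
      rw [Fc_eval0 hP (J+1), Fc_eval0 hP J, Fc_zero_of_lt (by omega)]
      ring
    · obtain ⟨N, rfl⟩ : ∃ N, n = N + 1 := ⟨n-1, by omega⟩
      rcases Nat.eq_zero_or_pos N with h1 | h1
      · -- N = 0 : m = P + J + 1
        subst h1
        have hm1 : m = P*0+P+(J+1) := by
          have h' : P*(0+1) = P*0+P := by ring
          omega
        subst hm1
        have e1 := Fc_evalS hP (J+1) 0
        have e2 : Fc (P+1) J (P*0+P+(J+1)-1) = ((P*0+P+0+1+J).choose (0+1) : ℤ)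
            - (P+1) * ((P*0+P+0+J).choose 0 : ℕ) := by
          rw [show P*0+P+(J+1)-1 = P*0+P+J by omega]
          exact_mod_cast Fc_evalS hP J 0
        have e3 : Fc (P+1) (J+P+1) (P*0+P+(J+1)) = 1 := by
          rw [show P*0+P+(J+1) = J+P+1 by ring]
          exact Fc_eval0 hP _
        rw [e1, e2, e3]
        rw [show P*0+P+0+1+(J+1) = P+J+2 by ring, show P*0+P+0+(J+1) = P+J+1 by ring,
            show P*0+P+0+1+J = P+J+1 by ring, show P*0+P+0+J = P+J by ring]
        simp only [show (0:ℕ)+1 = 1 by rfl, Nat.choose_one_right, Nat.choose_zero_right]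
        push_cast
        ring
      · obtain ⟨M, rfl⟩ : ∃ M, N = M + 1 := ⟨N-1, by omega⟩
        have hm1 : m = P*(M+1)+P+(J+1) := by
          have h' : P*(M+1+1) = P*(M+1)+P := by ring
          omega
        subst hm1
        have e1 := Fc_evalS hP (J+1) (M+1)
        have e2 : Fc (P+1) J (P*(M+1)+P+(J+1)-1) = ((P*(M+1)+P+(M+1)+1+J).choose (M+1+1) : ℤ)
            - (P+1) * ((P*(M+1)+P+(M+1)+J).choose (M+1) : ℕ) := by
          rw [show P*(M+1)+P+(J+1)-1 = P*(M+1)+P+J by omega]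
          exact_mod_cast Fc_evalS hP J (M+1)
        have e3 : Fc (P+1) (J+P+1) (P*(M+1)+P+(J+1)) = ((P*M+P+M+1+(J+P+1)).choose (M+1) : ℤ)
            - (P+1) * ((P*M+P+M+(J+P+1)).choose M : ℕ) := by
          rw [show P*(M+1)+P+(J+1) = P*M+P+(J+P+1) by ring]
          exact_mod_cast Fc_evalS hP (J+P+1) M
        rw [e1, e2, e3]
        set c0 := P*(M+1)+P+(M+1)+J with hc0
        rw [show P*(M+1)+P+(M+1)+1+(J+1) = c0+2 by rw [hc0]; ring,
            show P*(M+1)+P+(M+1)+(J+1) = c0+1 by rw [hc0]; ring,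
            show P*(M+1)+P+(M+1)+1+J = c0+1 by rw [hc0]; ring,
            show P*M+P+M+1+(J+P+1) = c0+1 by rw [hc0]; ring,
            show P*M+P+M+(J+P+1) = c0 by rw [hc0]; ring]
        have pas1 : ((c0+2).choose (M+1+1) : ℤ) = (c0+1).choose (M+1) + (c0+1).choose (M+1+1) := by
          exact_mod_cast (Nat.choose_succ_succ' (c0+1) (M+1))
        have pas2 : ((c0+1).choose (M+1) : ℤ) = c0.choose M + c0.choose (M+1) := by
          exact_mod_cast (Nat.choose_succ_succ' c0 M)
        rw [pas1, pas2]
        push_cast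
        ring
  · have hc' : ¬(J+1 ≤ m ∧ (P+1-1) ∣ (m-(J+1))) := by
      rw [show P+1-1 = P by omega]; exact hc
    have z1 : Fc (P+1) (J+1) m = 0 := by rw [Fc, if_neg hc']
    have z2 : Fc (P+1) J (m-1) = 0 := by
      rw [Fc, if_neg]
      rw [show P+1-1 = P by omega]
      rintro ⟨h1, h2⟩
      exact hc ⟨by omega, by rw [show m - (J+1) = m - 1 - J by omega]; exact h2⟩
    have z3 : Fc (P+1) (J+P+1) m = 0 := by
      rw [Fc, if_neg]
      rw [show P+1-1 = P by omega]
      rintro ⟨h1, h2⟩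
      apply hc
      refine ⟨by omega, ?_⟩
      rw [show m - (J+1) = (m - (J+P+1)) + P by omega]
      exact dvd_add h2 dvd_rfl
    rw [z1, z2, z3]; ring
end
section
variable {p : ℕ}

lemma coeff_upow (hp : 2 ≤ p) : ∀ m j : ℕ, (coeff m) ((useries p)^j) = Fc p j m := by
  intro m
  induction m using Nat.strong_induction_on with
  | _ m IHm =>
    suffices H : ∀ k j, m + 1 - j ≤ k → coeff m ((useries p)^j) = Fc p j m by
      intro j; exact H (m+1) j (by omega)
    intro k
    induction k with
    | zero =>
      intro j hj
      have hmj : m < j := by omega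
      rw [Fc_zero_of_lt hmj]
      exact PowerSeries.X_pow_dvd_iff.mp (pow_dvd_pow_of_dvd (X_dvd_useries hp) j) m hmj
    | succ k IHk =>
      intro j hj
      rcases Nat.lt_or_ge m j with hmj | hmj
      · rw [Fc_zero_of_lt hmj]
        exact PowerSeries.X_pow_dvd_iff.mp (pow_dvd_pow_of_dvd (X_dvd_useries hp) j) m hmj
      · rcases Nat.eq_zero_or_pos j with rfl | hj1
        · rw [pow_zero, PowerSeries.coeff_one, Fc_zero hp]
        · obtain ⟨J, rfl⟩ : ∃ J, j = J+1 := ⟨j-1, by omega⟩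
          obtain ⟨m', rfl⟩ : ∃ m', m = m'+1 := ⟨m-1, by omega⟩
          have hsp : (useries p)^(J+1) = X * (useries p)^J + (useries p)^(J+p) := by
            calc (useries p)^(J+1) = (useries p)^J * (X + (useries p)^p) := by
                  rw [← useries_eq hp]; ring
            _ = X * (useries p)^J + (useries p)^(J+p) := by rw [pow_add]; ring
          rw [hsp, map_add, PowerSeries.coeff_succ_X_mul]
          rw [IHm m' (by omega) J, IHk (J+p) (by omega)]
          have hrec := Fc_rec hp (show 1 ≤ J+1 by omega) (show 1 ≤ m'+1 by omega)
          rw [show J+1+p-1 = J+p by omega] at hrec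
          simp only [Nat.add_sub_cancel] at hrec
          rw [hrec]

lemma blossomTree_eq {c n : ℕ} (hc : 1 ≤ c) (hn : 1 ≤ n) :
    (BlossomTree n (2*c+1) : ℤ) =
      (2*(c:ℤ)+1) * ((((2*c+1)*n+1).choose n : ℤ) - (2*(c:ℤ)+1) * (((2*c+1)*n).choose (n-1) : ℤ))
        - (c:ℤ) * ((((2*c+1)*n+2).choose n : ℤ) - (2*(c:ℤ)+1) * (((2*c+1)*n+1).choose (n-1) : ℤ)) := by
  obtain ⟨n', rfl⟩ : ∃ n', n = n'+1 := ⟨n-1, by omega⟩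
  simp only [Nat.add_sub_cancel]
  have hprod : (2*c+1)*(n'+1) = 2*c*(n'+1)+n'+1 := by ring
  have R1 := Nat.add_one_mul_choose_eq ((2*c+1)*(n'+1)) n'
  have R2 := Nat.choose_mul_succ_eq ((2*c+1)*(n'+1)) n'
  rw [show (2*c+1)*(n'+1)+1-n' = 2*c*(n'+1)+2 by omega] at R2
  have R3 := Nat.choose_mul_succ_eq ((2*c+1)*(n'+1)+1) (n'+1)
  rw [show (2*c+1)*(n'+1)+1+1-(n'+1) = 2*c*(n'+1)+2 by omega] at R3
  zify at R1 R2 R3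
  set y : ℤ := ((((2*c+1)*(n'+1)).choose n' : ℕ) : ℤ) with hy
  set A1 : ℤ := ((((2*c+1)*(n'+1)+1).choose (n'+1) : ℕ) : ℤ) with hA1
  set A2 : ℤ := ((((2*c+1)*(n'+1)+1).choose n' : ℕ) : ℤ) with hA2
  set A3 : ℤ := ((((2*c+1)*(n'+1)+2).choose (n'+1) : ℕ) : ℤ) with hA3
  have key : (((n':ℤ)+1)*(2*(c:ℤ)*(n'+1)+2)) *
      ((2*(c:ℤ)+1) * (A1 - (2*(c:ℤ)+1) * y) - (c:ℤ) * (A3 - (2*(c:ℤ)+1) * A2))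
      = (2*(c:ℤ)+2) * y := by
    linear_combination (-((2*(c:ℤ)+1)*c*(n'+1)+(2*(c:ℤ)+1)+1)) * R1
      + (-((2*(c:ℤ)+1)*c*(n'+1))) * R2 + ((c:ℤ)*(n'+1)) * R3
  set E : ℤ := (2*(c:ℤ)+1) * (A1 - (2*(c:ℤ)+1) * y) - (c:ℤ) * (A3 - (2*(c:ℤ)+1) * A2) with hE
  have hypos : (0:ℤ) ≤ y := by rw [hy]; positivity
  have hEpos : 0 ≤ E := by
    by_contra hneg
    push_neg at hneg
    have h1 : E ≤ -1 := by omega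
    have h2 : (0:ℤ) < ((n':ℤ)+1)*(2*(c:ℤ)*(n'+1)+2) := by positivity
    nlinarith [key]
  obtain ⟨e, he⟩ : ∃ e : ℕ, E = (e:ℤ) := ⟨E.toNat, (Int.toNat_of_nonneg hEpos).symm⟩
  have natkey : ((n'+1)*(2*c*(n'+1)+2)) * e = (2*c+2) * ((2*c+1)*(n'+1)).choose n' := by
    have h := key
    rw [he, hy] at h
    exact_mod_cast h
  have hBT : BlossomTree (n'+1) (2*c+1) = e := by
    rw [BlossomTree]
    simp only [Nat.add_sub_cancel]
    rw [show (2*c+1+1) = 2*c+2 by omega]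
    rw [← natkey]
    exact Nat.mul_div_cancel_left e (by positivity)
  rw [hBT, ← he, hE]

end
lemma blossom_series_eq {c : ℕ} (hc : 1 ≤ c) :
    (X : PowerSeries ℤ)^2 * BlossomSeries (2*c+1)
      = (C ((2*c+1 : ℕ) : ℤ)) * (X * useries (2*c+1)) - (C (c : ℤ)) * (useries (2*c+1))^2 := by
  have hp : 2 ≤ 2*c+1 := by omega
  ext m
  rw [map_sub, PowerSeries.coeff_C_mul, PowerSeries.coeff_C_mul, coeff_upow hp m 2]
  match m with
  | 0 =>
    have h1 : (coeff 0) ((X : PowerSeries ℤ)^2 * BlossomSeries (2*c+1)) = 0 :=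
      PowerSeries.X_pow_dvd_iff.mp (Dvd.intro _ rfl) 0 (by omega)
    have h2 : (coeff 0) ((X : PowerSeries ℤ) * useries (2*c+1)) = 0 := by
      rw [PowerSeries.coeff_zero_eq_constantCoeff, map_mul]
      simp
    rw [h1, h2, Fc_zero_of_lt (by omega)]
    ring
  | 1 =>
    have h1 : (coeff 1) ((X : PowerSeries ℤ)^2 * BlossomSeries (2*c+1)) = 0 :=
      PowerSeries.X_pow_dvd_iff.mp (Dvd.intro _ rfl) 1 (by omega)
    have h2 : (coeff 1) ((X : PowerSeries ℤ) * useries (2*c+1)) = 0 := by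
      rw [PowerSeries.coeff_succ_X_mul, ← pow_one (useries (2*c+1)), coeff_upow hp 0 1,
        Fc_zero_of_lt (by omega)]
    rw [h1, h2, Fc_zero_of_lt (by omega)]
    ring
  | (m'+2) =>
    have h1 : (coeff (m'+2)) ((X : PowerSeries ℤ)^2 * BlossomSeries (2*c+1))
        = (coeff m') (BlossomSeries (2*c+1)) := PowerSeries.coeff_X_pow_mul _ 2 m'
    have h2 : (coeff (m'+2)) ((X : PowerSeries ℤ) * useries (2*c+1)) = Fc (2*c+1) 1 (m'+1) := by
      rw [show m'+2 = (m'+1)+1 by omega, PowerSeries.coeff_succ_X_mul,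
        ← pow_one (useries (2*c+1)), coeff_upow hp (m'+1) 1]
    rw [h1, h2, BlossomSeries, PowerSeries.coeff_mk]
    rcases Nat.eq_zero_or_pos m' with rfl | hm'
    · rw [if_pos rfl]
      have e1 : Fc (2*c+1) 1 1 = 1 := Fc_eval0 (by omega : 1 ≤ 2*c) 1
      have e2 : Fc (2*c+1) 2 2 = 1 := Fc_eval0 (by omega : 1 ≤ 2*c) 2
      rw [e1, e2, show (2*c+1+1)/2 = c+1 by omega]
      push_cast
      ring
    · rw [if_neg (by omega)]
      by_cases hd : (2*c+1-1) ∣ m'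
      · rw [if_pos hd]
        rw [show 2*c+1-1 = 2*c by omega] at hd
        obtain ⟨n, rfl⟩ := hd
        have hn : n ≠ 0 := by rintro rfl; simp at hm'
        obtain ⟨n'', rfl⟩ : ∃ k, n = k+1 := ⟨n-1, by omega⟩
        have hdive : 2*c*(n''+1)/(2*c+1-1) = n''+1 := by
          rw [show 2*c+1-1 = 2*c by omega]
          exact Nat.mul_div_cancel_left _ (by omega)
        rw [hdive]
        have e1 : Fc (2*c+1) 1 (2*c*(n''+1)+1) = ((2*c*n''+2*c+n''+1+1).choose (n''+1) : ℤ)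
            - (2*(c:ℤ)+1) * ((2*c*n''+2*c+n''+1).choose n'' : ℕ) := by
          have := Fc_evalS (show 1 ≤ 2*c by omega) 1 n''
          rw [show 2*c*n''+2*c+1 = 2*c*(n''+1)+1 by ring] at this
          rw [this]
          push_cast
          ring
        have e2 : Fc (2*c+1) 2 (2*c*(n''+1)+2) = ((2*c*n''+2*c+n''+1+2).choose (n''+1) : ℤ)
            - (2*(c:ℤ)+1) * ((2*c*n''+2*c+n''+2).choose n'' : ℕ) := by
          have := Fc_evalS (show 1 ≤ 2*c by omega) 2 n''
          rw [show 2*c*n''+2*c+2 = 2*c*(n''+1)+2 by ring] at this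
          rw [this]
          push_cast
          ring
        rw [show 2*c*(n''+1)+1 = 2*c*(n''+1)+1 by rfl] at e1
        rw [show 2*c*(n''+1)+2 = (2*c*(n''+1)+2 : ℕ) by rfl] at e2
        rw [e1, e2]
        have hBT := blossomTree_eq hc (show 1 ≤ n''+1 by omega)
        simp only [Nat.add_sub_cancel] at hBT
        rw [hBT]
        rw [show (2*c+1)*(n''+1)+2 = 2*c*n''+2*c+n''+1+2 by ring,
            show (2*c+1)*(n''+1)+1 = 2*c*n''+2*c+n''+1+1 by ring,
            show (2*c+1)*(n''+1) = 2*c*n''+2*c+n''+1 by ring,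
            show 2*c*n''+2*c+n''+1+1 = 2*c*n''+2*c+n''+2 by omega]
        push_cast
        ring
      · rw [if_neg hd]
        rw [show 2*c+1-1 = 2*c by omega] at hd
        have z1 : Fc (2*c+1) 1 (m'+1) = 0 := by
          rw [Fc, if_neg]
          rw [show 2*c+1-1 = 2*c by omega]
          rintro ⟨-, h2⟩
          simp only [Nat.add_sub_cancel] at h2
          exact hd h2
        have z2 : Fc (2*c+1) 2 (m'+2) = 0 := by
          rw [Fc, if_neg]
          rw [show 2*c+1-1 = 2*c by omega]
          rintro ⟨-, h2⟩
          rw [show m'+2-2 = m' by omega] at h2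
          exact hd h2
        rw [z1, z2]
        ring
section modp

lemma C_dvd_iff {a : ℤ} {f : PowerSeries ℤ} :
    (C a) ∣ f ↔ ∀ m, a ∣ (coeff m) f := by
  constructor
  · rintro ⟨g, rfl⟩ m
    rw [PowerSeries.coeff_C_mul]
    exact Dvd.intro _ rfl
  · intro h
    refine ⟨PowerSeries.mk fun m => (coeff m f) / a, ?_⟩
    ext m
    rw [PowerSeries.coeff_C_mul, PowerSeries.coeff_mk]
    exact (Int.mul_ediv_cancel' (h m)).symm

lemma map_zero_iff_C_dvd {q : ℕ} [NeZero q] {f : PowerSeries ℤ} :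
    PowerSeries.map (Int.castRingHom (ZMod q)) f = 0 ↔ (C (q:ℤ)) ∣ f := by
  rw [C_dvd_iff]
  constructor
  · intro h m
    have h2 := congrArg (coeff m) h
    rw [PowerSeries.coeff_map] at h2
    simpa using (ZMod.intCast_zmod_eq_zero_iff_dvd _ q).mp (by simpa using h2)
  · intro h
    ext m
    rw [PowerSeries.coeff_map]
    simpa using (ZMod.intCast_zmod_eq_zero_iff_dvd _ q).mpr (h m)

lemma coeff_pow_char {q : ℕ} (hq : q.Prime) (f : PowerSeries (ZMod q)) (m : ℕ) :
    (coeff m) (f^q) = if q ∣ m then (coeff (m/q)) f else 0 := by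
  haveI : Fact q.Prime := ⟨hq⟩
  set g : Polynomial (ZMod q) := trunc (m+1) f with hg
  have hdvd : (X : PowerSeries (ZMod q))^(m+1) ∣ f - (g : PowerSeries (ZMod q)) := by
    rw [PowerSeries.X_pow_dvd_iff]
    intro k hk
    rw [map_sub, Polynomial.coeff_coe, hg, PowerSeries.coeff_trunc, if_pos hk, sub_self]
  have hdvd2 : (X : PowerSeries (ZMod q))^(m+1) ∣ f^q - (g : PowerSeries (ZMod q))^q :=
    hdvd.trans (sub_dvd_pow_sub_pow _ _ q)
  have h0 : (coeff m) (f^q - (g : PowerSeries (ZMod q))^q) = 0 :=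
    PowerSeries.X_pow_dvd_iff.mp hdvd2 m (by omega)
  rw [map_sub, sub_eq_zero] at h0
  rw [h0, ← Polynomial.coe_pow]
  have hexp : g^q = Polynomial.expand (ZMod q) q g := by
    have h1 := Polynomial.map_frobenius_expand q g
    rw [ZMod.frobenius_zmod, Polynomial.map_id] at h1
    exact h1.symm
  rw [hexp, Polynomial.coeff_coe, Polynomial.coeff_expand hq.pos]
  split_ifs with h
  · rw [hg, PowerSeries.coeff_trunc, if_pos (by
      have := Nat.div_le_self m q
      omega)]
  · rfl

variable {p : ℕ}

lemma pow_exists_iff (hp : p.Prime) {m : ℕ} (hm0 : m ≠ 0) (hm1 : m ≠ 1) (h3 : p ∣ m) :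
    (∃ n : ℕ, m/p = p^n) ↔ (∃ n : ℕ, m = p^n) := by
  have hp2 := hp.two_le
  constructor
  · rintro ⟨n, hn⟩
    exact ⟨n+1, by rw [← Nat.mul_div_cancel' h3, hn, pow_succ]; ring⟩
  · rintro ⟨n, hn⟩
    have hn1 : n ≠ 0 := by rintro rfl; simp at hn; omega
    obtain ⟨n', rfl⟩ : ∃ k, n = k+1 := ⟨n-1, by omega⟩
    refine ⟨n', ?_⟩
    rw [hn, pow_succ, Nat.mul_div_cancel _ hp.pos]

lemma phi_AS (hp : p.Prime) :
    PowerSeries.map (Int.castRingHom (ZMod p)) ((Phi p)^p - Phi p + X) = 0 := by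
  have hp2 := hp.two_le
  ext m
  rw [map_add, map_sub, map_pow, PowerSeries.map_X]
  rw [map_add, map_sub, coeff_pow_char hp, PowerSeries.coeff_map, PowerSeries.coeff_map,
    PowerSeries.coeff_X, map_zero]
  rw [Phi, PowerSeries.coeff_mk, PowerSeries.coeff_mk]
  by_cases h1 : m = 0
  · subst h1
    have hf : ¬∃ n : ℕ, 0 = p^n := by
      rintro ⟨n, hn⟩
      have := pow_pos hp.pos n
      omega
    rw [if_pos (dvd_zero p), Nat.zero_div, if_neg hf, if_neg (by omega : ¬(0:ℕ) = 1)]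
    simp
  · by_cases h2 : m = 1
    · subst h2
      rw [if_neg (by intro h; have := Nat.le_of_dvd one_pos h; omega),
        if_pos ⟨0, rfl⟩, if_pos rfl]
      simp
    · rw [if_neg (by omega : ¬ m = 1)]
      by_cases h3 : p ∣ m
      · rw [if_pos h3]
        by_cases h4 : ∃ n : ℕ, m = p^n
        · rw [if_pos h4, if_pos ((pow_exists_iff hp h1 h2 h3).mpr h4)]
          simp
        · rw [if_neg h4, if_neg (by intro h; exact h4 ((pow_exists_iff hp h1 h2 h3).mp h))]
          simp
      · rw [if_neg h3]
        have h4 : ¬∃ n : ℕ, m = p^n := by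
          rintro ⟨n, hn⟩
          have hn1 : n ≠ 0 := by rintro rfl; simp at hn; omega
          exact h3 (hn ▸ dvd_pow_self p hn1)
        rw [if_neg h4]
        simp

lemma constantCoeff_phi (hp : p.Prime) :
    constantCoeff (Phi p) = 0 := by
  have : (coeff 0) (Phi p) = 0 := by
    rw [Phi, PowerSeries.coeff_mk, if_neg]
    rintro ⟨n, hn⟩
    have := pow_pos hp.pos n
    omega
  rwa [PowerSeries.coeff_zero_eq_constantCoeff] at this

lemma map_useries_eq_map_phi (hp : p.Prime) :
    PowerSeries.map (Int.castRingHom (ZMod p)) (useries p)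
      = PowerSeries.map (Int.castRingHom (ZMod p)) (Phi p) := by
  have hp2 := hp.two_le
  set σ := Int.castRingHom (ZMod p)
  set ub := PowerSeries.map σ (useries p) with hub
  set fb := PowerSeries.map σ (Phi p) with hfb
  have hu : ub = X + ub^p := by
    rw [hub, ← map_pow, ← PowerSeries.map_X (f := σ), ← map_add]
    exact congrArg _ (useries_eq hp2)
  have hf : fb = X + fb^p := by
    have h0 := phi_AS hp
    rw [map_add, map_sub, map_pow, PowerSeries.map_X] at h0
    rw [hfb]
    linear_combination -h0
  have hcu : constantCoeff ub = 0 := by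
    rw [hub, ← PowerSeries.coeff_zero_eq_constantCoeff, PowerSeries.coeff_map,
      PowerSeries.coeff_zero_eq_constantCoeff, constantCoeff_useries hp2, map_zero]
  have hcf : constantCoeff fb = 0 := by
    rw [hfb, ← PowerSeries.coeff_zero_eq_constantCoeff, PowerSeries.coeff_map,
      PowerSeries.coeff_zero_eq_constantCoeff, constantCoeff_phi hp, map_zero]
  set S := ∑ i ∈ Finset.range p, ub^i * fb^(p-1-i) with hS
  have he : ub - fb = S * (ub - fb) := by
    calc ub - fb = (X + ub^p) - (X + fb^p) := by rw [← hu, ← hf]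
    _ = ub^p - fb^p := by ring
    _ = S * (ub - fb) := (geom_sum₂_mul ub fb p).symm
  have hcS : constantCoeff S = 0 := by
    rw [hS, map_sum]
    apply Finset.sum_eq_zero
    intro i hi
    rw [map_mul, map_pow, map_pow, hcu, hcf]
    rcases Nat.eq_zero_or_pos i with rfl | hi1
    · rw [zero_pow (by simp at hi ⊢; omega : p - 1 - 0 ≠ 0)]
      ring
    · rw [zero_pow (by omega : i ≠ 0)]
      ring
  have hunit : IsUnit (1 - S) := by
    rw [PowerSeries.isUnit_iff_constantCoeff, map_sub, map_one, hcS, sub_zero]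
    exact isUnit_one
  have hz : (1 - S) * (ub - fb) = (1 - S) * 0 := by
    rw [mul_zero, sub_mul, one_mul, ← he, sub_self]
  have := hunit.mul_left_cancel hz
  rw [sub_eq_zero] at this
  exact this

end modp
section newton
variable {p : ℕ}

noncomputable def Vs (p : ℕ) : PowerSeries ℤ := (Phi p)^p - Phi p + X

noncomputable def pev (p : ℕ) : Polynomial (Polynomial ℤ) →+* PowerSeries ℤ :=
  Polynomial.eval₂RingHom (Polynomial.coeToPowerSeries.ringHom) (Phi p)

lemma pev_X : pev p Polynomial.X = Phi p := Polynomial.eval₂_X _ _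

lemma pev_C (a : Polynomial ℤ) : pev p (Polynomial.C a) = (a : PowerSeries ℤ) := by
  rw [pev, Polynomial.coe_eval₂RingHom, Polynomial.eval₂_C,
    Polynomial.coeToPowerSeries.ringHom_apply]

lemma Vs_dvd (hp : p.Prime) : (C (p:ℤ)) ∣ Vs p := by
  haveI : NeZero p := ⟨hp.pos.ne'⟩
  rw [← map_zero_iff_C_dvd]
  exact phi_AS hp

lemma newton (hp : p.Prime) (k : ℕ) :
    ∃ d : PowerSeries ℤ, d ∈ Subring.closure {(X : PowerSeries ℤ), Phi p}
      ∧ (C (p:ℤ)) ∣ d ∧ (C (p:ℤ))^(k+1) ∣ (useries p - Phi p - d) := by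
  haveI : NeZero p := ⟨hp.pos.ne'⟩
  have hp2 := hp.two_le
  have hX : (X : PowerSeries ℤ) ∈ Subring.closure {(X : PowerSeries ℤ), Phi p} :=
    Subring.subset_closure (by simp)
  have hPhi : Phi p ∈ Subring.closure {(X : PowerSeries ℤ), Phi p} :=
    Subring.subset_closure (by simp)
  induction k with
  | zero =>
    refine ⟨0, zero_mem _, dvd_zero _, ?_⟩
    rw [pow_one, sub_zero, ← map_zero_iff_C_dvd, map_sub, map_useries_eq_map_phi hp, sub_self]
  | succ k IH =>
    obtain ⟨d, hdA, hdp, hdvd⟩ := IH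
    refine ⟨Vs p + ((Phi p + d)^p - (Phi p)^p), ?_, ?_, ?_⟩
    · exact add_mem (add_mem (sub_mem (pow_mem hPhi p) hPhi) hX)
        (sub_mem (pow_mem (add_mem hPhi hdA) p) (pow_mem hPhi p))
    · rw [← map_zero_iff_C_dvd]
      rw [← map_zero_iff_C_dvd] at hdp
      have hV0 : PowerSeries.map (Int.castRingHom (ZMod p)) (Vs p) = 0 := phi_AS hp
      rw [map_add, hV0, map_sub, map_pow, map_add, hdp, add_zero, map_pow, sub_self,
        add_zero]
    · have hkey : useries p - Phi p - (Vs p + ((Phi p + d)^p - (Phi p)^p))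
          = (useries p)^p - (Phi p + d)^p := by
        have hu := useries_eq hp2
        rw [Vs]
        linear_combination hu
      rw [hkey, ← geom_sum₂_mul (useries p) (Phi p + d) p, pow_succ']
      apply mul_dvd_mul
      · rw [← map_zero_iff_C_dvd, map_sum]
        have hmapu := map_useries_eq_map_phi hp
        rw [← map_zero_iff_C_dvd] at hdp
        have hterm : ∀ i ∈ Finset.range p,
            (PowerSeries.map (Int.castRingHom (ZMod p))) ((useries p)^i * (Phi p + d)^(p-1-i))
              = (PowerSeries.map (Int.castRingHom (ZMod p)) (Phi p))^(p-1) := by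
          intro i hi
          rw [map_mul, map_pow, map_pow, hmapu, map_add, hdp, add_zero, ← pow_add]
          congr 1
          simp only [Finset.mem_range] at hi
          omega
        rw [Finset.sum_congr rfl hterm, Finset.sum_const, Finset.card_range, nsmul_eq_mul]
        have hzero : ((p : ℕ) : PowerSeries (ZMod p)) = 0 := by
          rw [← map_natCast (C (R := ZMod p)) p, ZMod.natCast_self, map_zero]
        rw [hzero, zero_mul]
      · have heq : useries p - (Phi p + d) = useries p - Phi p - d := by ring
        rw [heq]
        exact hdvd

lemma reduce_pow (hp : p.Prime) {N : ℕ} (hN : 1 ≤ N) :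
    ∀ K j : ℕ, ∃ Q : Polynomial (Polynomial ℤ), Q.natDegree < p*N ∧
      (C (p:ℤ))^N ∣ ((Vs p)^j * (Phi p)^K - pev p Q) := by
  have hp2 := hp.two_le
  have hpN : 2 ≤ p*N := le_trans hp2 (Nat.le_mul_of_pos_right p (by omega))
  intro K
  induction K using Nat.strong_induction_on with
  | _ K IH =>
    intro j
    rcases le_or_gt N j with hj | hj
    · refine ⟨0, by simpa using (by omega : 0 < p*N), ?_⟩
      rw [map_zero, sub_zero]
      exact ((pow_dvd_pow_of_dvd (Vs_dvd hp) N).trans (pow_dvd_pow _ hj)).trans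
        (dvd_mul_right _ _)
    · rcases Nat.lt_or_ge K p with hK | hK
      · refine ⟨(Polynomial.X^p - Polynomial.X + Polynomial.C Polynomial.X)^j
          * Polynomial.X^K, ?_, ?_⟩
        · have hd1 : (Polynomial.X^p - Polynomial.X
              + Polynomial.C Polynomial.X : Polynomial (Polynomial ℤ)).natDegree ≤ p := by
            apply le_trans (Polynomial.natDegree_add_le _ _)
            have h1 := Polynomial.natDegree_sub_le (Polynomial.X^p : Polynomial (Polynomial ℤ))
              Polynomial.X
            simp only [Polynomial.natDegree_X_pow, Polynomial.natDegree_X,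
              Polynomial.natDegree_C] at h1 ⊢
            omega
          have hd2 : ((Polynomial.X^p - Polynomial.X + Polynomial.C Polynomial.X)^j
              : Polynomial (Polynomial ℤ)).natDegree ≤ j * p :=
            le_trans (Polynomial.natDegree_pow_le)
              (Nat.mul_le_mul_left j hd1)
          apply Nat.lt_of_le_of_lt (Polynomial.natDegree_mul_le)
          rw [Polynomial.natDegree_X_pow]
          have hjp : j * p ≤ (N-1) * p := Nat.mul_le_mul_right p (by omega)
          have hNp : (N-1)*p + p = N*p := by
            rw [← Nat.succ_mul, Nat.succ_eq_add_one, Nat.sub_add_cancel hN]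
          have : p*N = N*p := Nat.mul_comm p N
          omega
        · have hpev : pev p ((Polynomial.X^p - Polynomial.X + Polynomial.C Polynomial.X)^j
              * Polynomial.X^K) = (Vs p)^j * (Phi p)^K := by
            rw [map_mul, map_pow, map_pow, map_add, map_sub, map_pow, pev_X,
              pev_C, Polynomial.coe_X, Vs]
          rw [hpev, sub_self]
          exact dvd_zero _
      · obtain ⟨Q1, hQ1d, hQ1⟩ := IH (K-p) (by omega) (j+1)
        obtain ⟨Q2, hQ2d, hQ2⟩ := IH (K-p+1) (by omega) j
        obtain ⟨Q3, hQ3d, hQ3⟩ := IH (K-p) (by omega) j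
        refine ⟨Q1 + Q2 - Polynomial.C Polynomial.X * Q3, ?_, ?_⟩
        · apply Nat.lt_of_le_of_lt (Polynomial.natDegree_sub_le _ _)
          have h1 := Polynomial.natDegree_add_le Q1 Q2
          have h2 := Polynomial.natDegree_mul_le (p := Polynomial.C (Polynomial.X : Polynomial ℤ))
            (q := Q3)
          simp only [Polynomial.natDegree_C] at h2
          omega
        · have hsplit : (Vs p)^j * (Phi p)^K - pev p (Q1 + Q2 - Polynomial.C Polynomial.X * Q3)
              = ((Vs p)^(j+1) * (Phi p)^(K-p) - pev p Q1)
                + ((Vs p)^j * (Phi p)^(K-p+1) - pev p Q2)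
                - X * ((Vs p)^j * (Phi p)^(K-p) - pev p Q3) := by
            rw [map_sub, map_add, map_mul, pev_C, Polynomial.coe_X]
            have hphi : (Phi p)^K = (Phi p)^(K-p) * (Phi p)^p := by
              rw [← pow_add]
              congr 1
              omega
            have hVs : (Phi p)^p = Vs p + Phi p - X := by rw [Vs]; ring
            have hsp2 : (Phi p)^(K-p+1) = (Phi p)^(K-p) * Phi p := pow_succ _ _
            rw [hphi, hVs, hsp2, pow_succ]
            ring
          rw [hsplit]
          exact dvd_sub (dvd_add hQ1 hQ2) (Dvd.dvd.mul_left hQ3 _)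

lemma reduce_poly (hp : p.Prime) {N : ℕ} (hN : 1 ≤ N) (Q : Polynomial (Polynomial ℤ)) :
    ∃ Q' : Polynomial (Polynomial ℤ), Q'.natDegree < p*N ∧
      (C (p:ℤ))^N ∣ (pev p Q - pev p Q') := by
  have hp2 := hp.two_le
  have hpN : 2 ≤ p*N := le_trans hp2 (Nat.le_mul_of_pos_right p (by omega))
  induction Q using Polynomial.induction_on with
  | C a =>
    exact ⟨Polynomial.C a, by simpa [Polynomial.natDegree_C] using (by omega : 0 < p*N),
      by rw [sub_self]; exact dvd_zero _⟩
  | add f g hf hg =>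
    obtain ⟨Qf, hQfd, hQf⟩ := hf
    obtain ⟨Qg, hQgd, hQg⟩ := hg
    refine ⟨Qf + Qg, ?_, ?_⟩
    · exact Nat.lt_of_le_of_lt (Polynomial.natDegree_add_le _ _) (by omega)
    · have : pev p (f + g) - pev p (Qf + Qg)
          = (pev p f - pev p Qf) + (pev p g - pev p Qg) := by
        rw [map_add, map_add]; ring
      rw [this]
      exact dvd_add hQf hQg
  | monomial n a _ =>
    obtain ⟨Q0, hQ0d, hQ0⟩ := reduce_pow hp hN (n+1) 0
    rw [pow_zero, one_mul] at hQ0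
    refine ⟨Polynomial.C a * Q0, ?_, ?_⟩
    · apply Nat.lt_of_le_of_lt (Polynomial.natDegree_mul_le)
      simp only [Polynomial.natDegree_C]
      omega
    · have : pev p (Polynomial.C a * Polynomial.X^(n+1)) - pev p (Polynomial.C a * Q0)
          = (a : PowerSeries ℤ) * ((Phi p)^(n+1) - pev p Q0) := by
        rw [map_mul, map_mul, map_pow, pev_X, pev_C]
        ring
      rw [this]
      exact Dvd.dvd.mul_left hQ0 _

lemma main_power (hp : p.Prime) (hodd : Odd p) {N : ℕ} (hN : 1 ≤ N) :
    ∃ Q : Polynomial (Polynomial ℤ), Q.natDegree < p*N ∧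
      (C (p:ℤ))^N ∣ ((X : PowerSeries ℤ)^2 * BlossomSeries p - pev p Q) := by
  obtain ⟨c, hc⟩ := hodd
  have hc' : p = 2*c+1 := by omega
  have hp2 := hp.two_le
  have hc1 : 1 ≤ c := by omega
  obtain ⟨d, hdA, hdp, hdvd⟩ := newton hp (N-1)
  rw [show N-1+1 = N by omega] at hdvd
  set W := Phi p + d with hW
  have hWA : W ∈ Subring.closure {(X : PowerSeries ℤ), Phi p} :=
    add_mem (Subring.subset_closure (by simp)) hdA
  set F0 : PowerSeries ℤ := C ((p:ℕ):ℤ) * (X * W) - C ((c:ℕ):ℤ) * W^2 with hF0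
  have hF0A : F0 ∈ Subring.closure {(X : PowerSeries ℤ), Phi p} := by
    have hXA : (X : PowerSeries ℤ) ∈ Subring.closure {(X : PowerSeries ℤ), Phi p} :=
      Subring.subset_closure (by simp)
    have h1 : (C ((p:ℕ):ℤ)) ∈ Subring.closure {(X : PowerSeries ℤ), Phi p} := by
      rw [map_natCast (C (R := ℤ)) p]
      exact natCast_mem _ p
    have h2 : (C ((c:ℕ):ℤ)) ∈ Subring.closure {(X : PowerSeries ℤ), Phi p} := by
      rw [map_natCast (C (R := ℤ)) c]
      exact natCast_mem _ c
    exact sub_mem (mul_mem h1 (mul_mem hXA hWA)) (mul_mem h2 (pow_mem hWA 2))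
  -- F0 is in the range of pev
  have hrange : Subring.closure {(X : PowerSeries ℤ), Phi p} ≤ (pev p).range := by
    apply Subring.closure_le.mpr
    intro x hx
    simp only [Set.mem_insert_iff, Set.mem_singleton_iff] at hx
    rcases hx with rfl | rfl
    · exact ⟨Polynomial.C Polynomial.X, by rw [pev_C, Polynomial.coe_X]⟩
    · exact ⟨Polynomial.X, pev_X⟩
  obtain ⟨Q0, hQ0⟩ := hrange hF0A
  obtain ⟨Q1, hQ1d, hQ1⟩ := reduce_poly hp hN Q0
  refine ⟨Q1, hQ1d, ?_⟩
  have hsplit : (X : PowerSeries ℤ)^2 * BlossomSeries p - pev p Q1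
      = ((X : PowerSeries ℤ)^2 * BlossomSeries p - F0) + (pev p Q0 - pev p Q1) := by
    rw [hQ0]; ring
  rw [hsplit]
  apply dvd_add _ hQ1
  have hBS : (X : PowerSeries ℤ)^2 * BlossomSeries p
      = C ((p:ℕ):ℤ) * (X * useries p) - C ((c:ℕ):ℤ) * (useries p)^2 := by
    rw [hc']
    exact blossom_series_eq hc1
  have hkey : (X : PowerSeries ℤ)^2 * BlossomSeries p - F0
      = (useries p - W) * (C ((p:ℕ):ℤ) * X - C ((c:ℕ):ℤ) * (useries p + W)) := by
    rw [hBS, hF0]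
    ring
  rw [hkey]
  apply Dvd.dvd.mul_right
  have : useries p - W = useries p - Phi p - d := by rw [hW]; ring
  rw [this]
  exact hdvd

end newton
lemma ofPS_coeff_neg (x : PowerSeries ℤ) {m : ℤ} (hm : m < 0) :
    ((HahnSeries.ofPowerSeries ℤ ℤ) x).coeff m = 0 := by
  rw [HahnSeries.ofPowerSeries_apply]
  apply HahnSeries.embDomain_notin_range
  rintro ⟨n, hn⟩
  change ((n:ℕ):ℤ) = m at hn
  omega


/-- For an odd prime `p` and a non-negative integer `α`, the blossom-tree generating
function `B_p(z)`, reduced modulo `p^{p^α}`, is a polynomial of degree at most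
`p^{α+1} − 1` in `Φ(z^{1/(p−1)})`, with coefficients that are Laurent polynomials in
`z^{1/(p−1)}` over `ℤ` (represented as Laurent series in `w = z^{1/(p−1)}` with finite
support). -/
theorem stmt_18 (p : ℕ) (hp : p.Prime) (hodd : Odd p) (α : ℕ) :
    ∃ q : Fin (p ^ (α + 1)) → LaurentSeries ℤ,
      (∀ i, (q i).support.Finite) ∧
      ∀ m : ℤ, (p : ℤ) ^ (p ^ α) ∣
        ((HahnSeries.ofPowerSeries ℤ ℤ) (BlossomSeries p) -
          ∑ i, q i * ((HahnSeries.ofPowerSeries ℤ ℤ) (Phi p)) ^ (i : ℕ)).coeff m := by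
  have hp2 := hp.two_le
  have hN : 1 ≤ p^α := Nat.one_le_pow _ _ hp.pos
  obtain ⟨Q, hQd, hQdvd⟩ := main_power hp hodd hN
  have hpow : p * p^α = p^(α+1) := by rw [pow_succ]; ring
  set a : ℕ → Polynomial ℤ := fun i => Q.coeff i with ha
  have hpev : pev p Q = ∑ i ∈ Finset.range (p^(α+1)),
      ((a i : Polynomial ℤ) : PowerSeries ℤ) * (Phi p)^i := by
    rw [pev, Polynomial.coe_eval₂RingHom, Polynomial.eval₂_eq_sum_range]
    rw [Finset.sum_congr rfl (fun i _ => by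
      rw [Polynomial.coeToPowerSeries.ringHom_apply])]
    apply Finset.sum_subset
    · intro i hi
      simp only [Finset.mem_range] at hi ⊢
      omega
    · intro i _ hni
      simp only [Finset.mem_range, not_lt] at hni
      have hz : Q.coeff i = 0 := Polynomial.coeff_eq_zero_of_natDegree_lt (by omega)
      show (↑(Q.coeff i) : PowerSeries ℤ) * (Phi p)^i = 0
      rw [hz]
      simp
  set D : PowerSeries ℤ := (X : PowerSeries ℤ)^2 * BlossomSeries p
      - ∑ i ∈ Finset.range (p^(α+1)), ((a i : Polynomial ℤ) : PowerSeries ℤ) * (Phi p)^i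
    with hD
  have hdvdD : ∀ n : ℕ, (p:ℤ)^(p^α) ∣ (coeff n) D := by
    have h1 : (C ((p:ℤ)))^(p^α) ∣ D := by
      rw [hD, ← hpev]
      exact hQdvd
    have h2 : (C ((p:ℤ)^(p^α))) ∣ D := by
      rw [map_pow]
      exact h1
    exact C_dvd_iff.mp h2
  set q : Fin (p^(α+1)) → LaurentSeries ℤ := fun i =>
    (HahnSeries.single (-2 : ℤ) (1:ℤ))
      * (HahnSeries.ofPowerSeries ℤ ℤ) ((a (i:ℕ) : Polynomial ℤ) : PowerSeries ℤ) with hq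
  have hcoeffq : ∀ (x : LaurentSeries ℤ) (m : ℤ),
      ((HahnSeries.single (-2 : ℤ) (1:ℤ)) * x).coeff m = x.coeff (m+2) := by
    intro x m
    have h := HahnSeries.coeff_single_mul_add (r := (1:ℤ)) (x := x) (a := m+2) (b := (-2:ℤ))
    rw [show (m+2) + (-2 : ℤ) = m by ring] at h
    rw [h, one_mul]
  refine ⟨q, ?_, ?_⟩
  · intro i
    apply Set.Finite.subset (Set.finite_Icc (-2 : ℤ) ((a (i:ℕ)).natDegree))
    intro m hm
    simp only [HahnSeries.mem_support] at hm
    rw [hq, hcoeffq] at hm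
    rcases lt_or_ge (m+2) 0 with hneg | hpos
    · exact absurd (ofPS_coeff_neg _ hneg) hm
    · obtain ⟨n, hn⟩ : ∃ n : ℕ, (n : ℤ) = m + 2 := ⟨(m+2).toNat, Int.toNat_of_nonneg hpos⟩
      rw [← hn, HahnSeries.ofPowerSeries_apply_coeff] at hm
      rw [Polynomial.coeff_coe] at hm
      have hle : n ≤ (a (i:ℕ)).natDegree := Polynomial.le_natDegree_of_ne_zero hm
      simp only [Set.mem_Icc]
      omega
  · intro m
    have hiden : (HahnSeries.ofPowerSeries ℤ ℤ) (BlossomSeries p) -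
        ∑ i : Fin (p^(α+1)), q i * ((HahnSeries.ofPowerSeries ℤ ℤ) (Phi p)) ^ (i : ℕ)
        = (HahnSeries.single (-2 : ℤ) (1:ℤ)) * (HahnSeries.ofPowerSeries ℤ ℤ) D := by
      rw [hD, map_sub, mul_sub, map_sum, Finset.mul_sum]
      congr 1
      · rw [map_mul, map_pow, HahnSeries.ofPowerSeries_X, ← mul_assoc]
        rw [show ((HahnSeries.single (1:ℤ) (1:ℤ))^2 : LaurentSeries ℤ)
            = HahnSeries.single (2:ℤ) (1:ℤ) by
          rw [sq, HahnSeries.single_mul_single]; norm_num]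
        rw [HahnSeries.single_mul_single]
        norm_num
      · simp only [hq]
        rw [Fin.sum_univ_eq_sum_range (fun k => HahnSeries.single (-2:ℤ) (1:ℤ)
          * (HahnSeries.ofPowerSeries ℤ ℤ) ((a k : Polynomial ℤ) : PowerSeries ℤ)
          * ((HahnSeries.ofPowerSeries ℤ ℤ) (Phi p)) ^ k)]
        apply Finset.sum_congr rfl
        intro k _
        rw [map_mul, map_pow, mul_assoc]
    rw [hiden, hcoeffq]
    rcases lt_or_ge (m+2) 0 with hneg | hpos
    · rw [ofPS_coeff_neg _ hneg]
      exact dvd_zero _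
    · obtain ⟨n, hn⟩ : ∃ n : ℕ, (n : ℤ) = m + 2 := ⟨(m+2).toNat, Int.toNat_of_nonneg hpos⟩
      rw [← hn, HahnSeries.ofPowerSeries_apply_coeff]
      exact hdvdD n
end
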